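/- arXiv:2411.04462 — 8 statements merged into one kernel-verified Lean document; each statement's English description precedes it below -/
import Mathlib

section
/- Let A be a finite nonempty set, F : Δ(A) → Δ(A), and N ∈ ℕ. The following are equivalent: (i) there exists g : A^N → Δ(A) such that F arises from N action samples via g; (ii) each component π ↦ F(π)(a') agrees on Δ(A) with a multivariate real polynomial in the variables (π(a))_{a∈A} of total degree at most N all of whose coefficients are nonnegative. -/
open Filter Asymptotics Topology

/-- `π` is a probability distribution on the finite set `A`. -/
def IsDist {A : Type} [Fintype A] (π : A → ℝ) : Prop :=
  (∀ a, 0 ≤ π a) ∧ ∑ a, π a = 1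

/-- The point mass at `a`. -/
def unitMass {A : Type} [DecidableEq A] (a : A) : A → ℝ :=
  fun a' => if a' = a then 1 else 0

/-- The distribution `E[g(A_1,…,A_N)]` for `A_1,…,A_N` i.i.d. with law `μ`. -/
noncomputable def sampleExp {A : Type} [Fintype A] (N : ℕ)
    (g : (Fin N → A) → A → ℝ) (μ : A → ℝ) : A → ℝ :=
  ∑ v : Fin N → A, (∏ k, μ (v k)) • g v

section Aux4

open MvPolynomial

variable {A : Type} [Fintype A]

/-- The exponent (count) finsupp of a tuple. -/
noncomputable def cnt4 {n : ℕ} (v : Fin n → A) : A →₀ ℕ := ∑ k, Finsupp.single (v k) 1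

lemma cnt4_sum {n : ℕ} (v : Fin n → A) : ((cnt4 v).sum fun _ e => e) = n := by
  classical
  rw [Finsupp.sum_fintype _ _ (fun _ => rfl)]
  have h1 : ∀ a, cnt4 v a = ∑ k, (Finsupp.single (v k) 1 : A →₀ ℕ) a := fun a =>
    Finsupp.finset_sum_apply _ _ _
  calc ∑ a, cnt4 v a = ∑ a, ∑ k, (Finsupp.single (v k) 1 : A →₀ ℕ) a := by
        exact Finset.sum_congr rfl fun a _ => h1 a
    _ = ∑ k, ∑ a, (Finsupp.single (v k) 1 : A →₀ ℕ) a := Finset.sum_comm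
    _ = ∑ k : Fin n, 1 := by
        refine Finset.sum_congr rfl fun k _ => ?_
        simp [Finsupp.single_apply]
    _ = n := by simp

lemma prod_monomial4 {ι : Type*} (s : Finset ι) (f : ι → (A →₀ ℕ)) :
    ∏ i ∈ s, (monomial (f i) (1:ℝ)) = monomial (∑ i ∈ s, f i) 1 := by
  classical
  induction s using Finset.induction with
  | empty => simp
  | @insert a s h ih =>
      rw [Finset.prod_insert h, ih, monomial_mul, one_mul, Finset.sum_insert h]

lemma prod_X4 {n : ℕ} (v : Fin n → A) :
    ∏ k, (X (v k) : MvPolynomial A ℝ) = monomial (cnt4 v) 1 := by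
  rw [cnt4, ← prod_monomial4]
  rfl

lemma sum_pow4 (n : ℕ) :
    (∑ a : A, (X a : MvPolynomial A ℝ)) ^ n = ∑ v : Fin n → A, monomial (cnt4 v) 1 := by
  rw [Fintype.sum_pow]
  exact Finset.sum_congr rfl fun v _ => prod_X4 v

lemma prod_pi4 {n : ℕ} (π : A → ℝ) (v : Fin n → A) :
    ∏ k, π (v k) = (cnt4 v).prod fun i e => π i ^ e := by
  have h := congrArg (eval π) (prod_X4 (A := A) v)
  simpa [eval_monomial] using h

lemma eval_homog4 (r : MvPolynomial A ℝ) (n : ℕ)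
    (hr : ∀ m ∈ r.support, (m.sum fun _ e => e) = n) (s : ℝ) (π : A → ℝ) :
    eval (fun a => s * π a) r = s ^ n * eval π r := by
  rw [eval_eq, eval_eq, Finset.mul_sum]
  refine Finset.sum_congr rfl fun d hd => ?_
  have h1 : ∏ i ∈ d.support, (s * π i) ^ d i
      = s ^ n * ∏ i ∈ d.support, π i ^ d i := by
    have : ∀ i ∈ d.support, (s * π i) ^ d i = s ^ d i * π i ^ d i :=
      fun i _ => mul_pow _ _ _
    rw [Finset.prod_congr rfl this, Finset.prod_mul_distrib,
      Finset.prod_pow_eq_pow_sum]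
    congr 1
    exact congrArg (s ^ ·) (hr d hd)
  rw [h1]; ring

lemma eq_zero_of_pos4 [Nonempty A] (q : MvPolynomial A ℝ)
    (h : ∀ x : A → ℝ, (∀ a, 0 < x a) → eval x q = 0) : q = 0 := by
  have key : ∀ y : A → ℝ, eval y q = 0 := by
    intro y
    set f : Polynomial ℝ := MvPolynomial.aeval (fun a => Polynomial.C (y a) + Polynomial.X) q with hf
    have hft : ∀ t : ℝ, f.eval t = eval (fun a => y a + t) q := by
      intro t
      have hcomp : (Polynomial.aeval t).comp
          (MvPolynomial.aeval (fun a : A => Polynomial.C (y a) + Polynomial.X))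
          = MvPolynomial.aeval (fun a : A => y a + t) := by
        apply MvPolynomial.algHom_ext
        intro a
        simp
      have h2 : Polynomial.aeval t f = MvPolynomial.aeval (fun a : A => y a + t) q := by
        rw [hf, ← hcomp]; rfl
      rw [← Polynomial.coe_aeval_eq_eval, h2]
      simp [MvPolynomial.aeval_def]
    obtain ⟨M, hM⟩ := Finite.exists_le (fun a : A => -y a)
    have hf0 : f = 0 := by
      apply Polynomial.eq_zero_of_infinite_isRoot
      refine (Set.Ioi_infinite M).mono ?_
      intro t ht
      show f.IsRoot t
      rw [Polynomial.IsRoot, hft]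
      apply h
      intro a
      have := hM a
      have : -y a < t := lt_of_le_of_lt this ht
      linarith
    have h0 := hft 0
    rw [hf0] at h0
    simpa using h0.symm
  apply MvPolynomial.funext
  intro x
  simp [key x]

lemma exists_cnt4 : ∀ (n : ℕ) (m : A →₀ ℕ), (m.sum fun _ e => e) = n →
    ∃ v : Fin n → A, cnt4 v = m := by
  intro n
  induction n with
  | zero =>
      intro m hm
      have hm0 : m = 0 := by
        ext a
        by_cases ha : a ∈ m.support
        · exact (Finset.sum_eq_zero_iff.mp hm) a ha
        · simpa [Finsupp.mem_support_iff, not_not] using ha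
      exact ⟨fun k => k.elim0, by simp [cnt4, hm0]⟩
  | succ n ih =>
      intro m hm
      have hm0 : m ≠ 0 := by rintro rfl; simp at hm
      obtain ⟨a, ha⟩ : ∃ a, m a ≠ 0 := by
        by_contra hc; push_neg at hc; exact hm0 (Finsupp.ext hc)
      have hle : Finsupp.single a 1 ≤ m :=
        Finsupp.single_le_iff.mpr (Nat.one_le_iff_ne_zero.mpr ha)
      have hmm : (m - Finsupp.single a 1) + Finsupp.single a 1 = m :=
        tsub_add_cancel_of_le hle
      have hsum : ((m - Finsupp.single a 1).sum fun _ e => e) = n := by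
        have h2 := congrArg (fun f : A →₀ ℕ => f.sum fun _ (e : ℕ) => e) hmm
        rw [Finsupp.sum_add_index' (fun _ => rfl) (fun _ _ _ => rfl),
          Finsupp.sum_single_index rfl, hm] at h2
        omega
      obtain ⟨v', hv'⟩ := ih _ hsum
      refine ⟨Fin.cons a v', ?_⟩
      rw [cnt4, Fin.sum_univ_succ]
      simp only [Fin.cons_zero, Fin.cons_succ]
      rw [show (∑ k : Fin n, Finsupp.single (v' k) (1:ℕ)) = cnt4 v' from rfl, hv',
        add_comm, hmm]

end Aux4

open MvPolynomial

/-- Proposition: sample representation iff nonnegative polynomial.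
For `F : Δ(A) → Δ(A)` and `N ∈ ℕ`, the following are equivalent:
(i) there exists `g : A^N → Δ(A)` such that `F` arises from `N` action samples via `g`;
(ii) each component of `F` agrees on `Δ(A)` with a real multivariate polynomial of total
degree at most `N` all of whose coefficients are nonnegative. -/
theorem stmt4 {A : Type} [Fintype A] [Nonempty A] (F : (A → ℝ) → A → ℝ)
    (hF : ∀ π, IsDist π → IsDist (F π)) (N : ℕ) :
    (∃ g : (Fin N → A) → A → ℝ, (∀ v, IsDist (g v)) ∧
      ∀ π : A → ℝ, IsDist π → F π = sampleExp N g π) ↔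
    (∀ a' : A, ∃ p : MvPolynomial A ℝ, p.totalDegree ≤ N ∧
      (∀ m : A →₀ ℕ, 0 ≤ p.coeff m) ∧
      ∀ π : A → ℝ, IsDist π → F π a' = MvPolynomial.eval π p) := by
  classical
  constructor
  · -- forward: g gives a polynomial
    rintro ⟨g, hg, hrep⟩ a'
    refine ⟨∑ v : Fin N → A, monomial (cnt4 v) (g v a'), ?_, ?_, ?_⟩
    · refine le_trans (totalDegree_finset_sum _ _) ?_
      refine Finset.sup_le fun v _ => ?_
      by_cases hz : g v a' = 0
      · simp [hz]
      · rw [totalDegree_monomial _ hz, cnt4_sum]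
    · intro m
      rw [coeff_sum]
      refine Finset.sum_nonneg fun v _ => ?_
      rw [coeff_monomial]
      split
      · exact (hg v).1 a'
      · exact le_refl 0
    · intro π hπ
      have h1 : F π a' = sampleExp N g π a' := congrFun (hrep π hπ) a'
      rw [h1, sampleExp, map_sum]
      rw [Finset.sum_apply]
      refine Finset.sum_congr rfl fun v _ => ?_
      rw [Pi.smul_apply, smul_eq_mul, eval_monomial, prod_pi4, mul_comm]
  · -- reverse
    intro h
    choose p hdeg hcoeff heval using h
    set S : MvPolynomial A ℝ := ∑ a : A, X a with hSdef
    set D : (A →₀ ℕ) → ℕ := fun m => m.sum fun _ e => e with hDdef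
    set q : A → MvPolynomial A ℝ := fun a' =>
      ∑ m ∈ (p a').support, ∑ v : Fin (N - D m) → A,
        monomial (m + cnt4 v) ((p a').coeff m) with hqdef
    have hqcoeff : ∀ a' m', 0 ≤ coeff m' (q a') := by
      intro a' m'
      rw [hqdef, coeff_sum]
      refine Finset.sum_nonneg fun m hm => ?_
      rw [coeff_sum]
      refine Finset.sum_nonneg fun v _ => ?_
      rw [coeff_monomial]
      split
      · exact hcoeff a' m
      · exact le_refl 0
    have hqdeg : ∀ a' m', m' ∈ (q a').support → D m' = N := by
      intro a' m' hm'
      rw [mem_support_iff, hqdef, coeff_sum] at hm'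
      obtain ⟨m, hm, hne⟩ := Finset.exists_ne_zero_of_sum_ne_zero hm'
      rw [coeff_sum] at hne
      obtain ⟨v, _, hne2⟩ := Finset.exists_ne_zero_of_sum_ne_zero hne
      rw [coeff_monomial] at hne2
      have heq : m + cnt4 v = m' := by
        by_contra hc; rw [if_neg hc] at hne2; exact hne2 rfl
      have hDle : D m ≤ N := le_trans (le_totalDegree hm) (hdeg a')
      have h5 : D (m + cnt4 v) = D m + (N - D m) := by
        show ((m + cnt4 v).sum fun _ e => e) = (m.sum fun _ e => e) + (N - D m)
        rw [Finsupp.sum_add_index' (fun _ => rfl) (fun _ _ _ => rfl), cnt4_sum]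
      rw [← heq, h5]
      omega
    have hSone : ∀ π : A → ℝ, IsDist π → eval π S = 1 := by
      intro π hπ
      rw [hSdef, map_sum]
      simpa using hπ.2
    have hqeval : ∀ a' (π : A → ℝ), IsDist π → eval π (q a') = F π a' := by
      intro a' π hπ
      rw [hqdef]
      simp only
      rw [map_sum]
      have hterm : ∀ m ∈ (p a').support,
          eval π (∑ v : Fin (N - D m) → A, monomial (m + cnt4 v) ((p a').coeff m))
          = (p a').coeff m * m.prod fun i e => π i ^ e := by
        intro m hm
        rw [map_sum]
        have h1 : ∀ v : Fin (N - D m) → A,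
            eval π (monomial (m + cnt4 v) ((p a').coeff m))
            = ((p a').coeff m * m.prod fun i e => π i ^ e)
              * ((cnt4 v).prod fun i e => π i ^ e) := by
          intro v
          rw [eval_monomial,
            Finsupp.prod_add_index' (fun _ => pow_zero _) (fun _ _ _ => pow_add _ _ _),
            mul_assoc]
        rw [Finset.sum_congr rfl fun v _ => h1 v, ← Finset.mul_sum]
        have h2 : (∑ v : Fin (N - D m) → A, ((cnt4 v).prod fun i e => π i ^ e)) = 1 := by
          have h3 := congrArg (eval π) (sum_pow4 (A := A) (N - D m))
          rw [map_sum] at h3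
          have h4 : ∀ v : Fin (N - D m) → A,
              eval π (monomial (cnt4 v) (1:ℝ)) = (cnt4 v).prod fun i e => π i ^ e := by
            intro v; rw [eval_monomial, one_mul]
          rw [Finset.sum_congr rfl fun v _ => h4 v] at h3
          rw [← h3, map_pow, hSone π hπ, one_pow]
        rw [h2, mul_one]
      rw [Finset.sum_congr rfl hterm, heval a' π hπ, eval_eq]
      rfl
    have hqscale : ∀ a' (s : ℝ) (π : A → ℝ),
        eval (fun a => s * π a) (q a') = s ^ N * eval π (q a') :=
      fun a' s π => eval_homog4 (q a') N (hqdeg a') s π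
    have hP : (∑ a' : A, q a') = S ^ N := by
      have hz : (∑ a' : A, q a') - S ^ N = 0 := by
        apply eq_zero_of_pos4
        intro x hx
        set s : ℝ := ∑ a, x a with hs0
        have hs : 0 < s := Finset.sum_pos (fun a _ => hx a) Finset.univ_nonempty
        set π : A → ℝ := fun a => x a / s with hπ0
        have hπ : IsDist π := by
          constructor
          · intro a; exact div_nonneg (hx a).le hs.le
          · rw [hπ0]; simp only; rw [← Finset.sum_div, ← hs0, div_self hs.ne']
        have hxπ : x = fun a => s * π a := by
          funext a; rw [hπ0]; field_simp
        rw [map_sub, map_sum]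
        have h1 : ∀ a', eval x (q a') = s ^ N * F π a' := by
          intro a'
          rw [hxπ, hqscale, hqeval a' π hπ]
        rw [Finset.sum_congr rfl fun a' _ => h1 a', ← Finset.mul_sum, (hF π hπ).2, mul_one]
        have h2 : eval x (S ^ N) = s ^ N := by
          rw [map_pow, hSdef, map_sum]
          simp [hs0]
        rw [h2, sub_self]
      exact sub_eq_zero.mp hz
    have hsumq : ∀ m', (∑ a' : A, coeff m' (q a')) = coeff m' (S ^ N) := by
      intro m'
      rw [← coeff_sum, hP]
    have hCpos : ∀ v : Fin N → A, 0 < coeff (cnt4 v) (S ^ N) := by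
      intro v
      rw [hSdef, sum_pow4, coeff_sum]
      refine Finset.sum_pos' ?_ ⟨v, Finset.mem_univ v, ?_⟩
      · intro w _
        rw [coeff_monomial]
        split <;> norm_num
      · rw [coeff_monomial, if_pos rfl]; norm_num
    set g : (Fin N → A) → A → ℝ := fun v a' =>
      coeff (cnt4 v) (q a') / coeff (cnt4 v) (S ^ N) with hgdef
    refine ⟨g, ?_, ?_⟩
    · intro v
      constructor
      · intro a'; exact div_nonneg (hqcoeff a' _) (hCpos v).le
      · rw [hgdef]
        simp only
        rw [← Finset.sum_div, hsumq, div_self (hCpos v).ne']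
    · intro π hπ
      funext a'
      have hqalt : (∑ v : Fin N → A, monomial (cnt4 v) (g v a')) = q a' := by
        apply MvPolynomial.ext
        intro m'
        rw [coeff_sum]
        have h1 : ∀ v : Fin N → A, coeff m' (monomial (cnt4 v) (g v a'))
            = (if cnt4 v = m' then (1:ℝ) else 0)
              * (coeff m' (q a') / coeff m' (S ^ N)) := by
          intro v
          rw [coeff_monomial]
          by_cases hv : cnt4 v = m'
          · rw [if_pos hv, if_pos hv, one_mul, hgdef]
            simp only
            rw [hv]
          · rw [if_neg hv, if_neg hv, zero_mul]
        rw [Finset.sum_congr rfl fun v _ => h1 v, ← Finset.sum_mul]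
        have h2 : (∑ v : Fin N → A, if cnt4 v = m' then (1:ℝ) else 0)
            = coeff m' (S ^ N) := by
          rw [hSdef, sum_pow4, coeff_sum]
          exact Finset.sum_congr rfl fun v _ => (coeff_monomial _ _ _).symm
        rw [h2]
        by_cases hq0 : coeff m' (q a') = 0
        · rw [hq0]; simp
        · obtain ⟨v, hv⟩ := exists_cnt4 N m' (hqdeg a' m' (mem_support_iff.mpr hq0))
          have hpos := hCpos v
          rw [hv] at hpos
          field_simp
      have hev : eval π (∑ v : Fin N → A, monomial (cnt4 v) (g v a')) = F π a' := by
        rw [hqalt, hqeval a' π hπ]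
      rw [map_sum] at hev
      calc F π a' = ∑ v : Fin N → A, eval π (monomial (cnt4 v) (g v a')) := hev.symm
        _ = ∑ v : Fin N → A, (∏ k, π (v k)) * g v a' := by
            refine Finset.sum_congr rfl fun v _ => ?_
            rw [eval_monomial, prod_pi4, mul_comm]
        _ = sampleExp N g π a' := by
            rw [sampleExp, Finset.sum_apply]
            exact Finset.sum_congr rfl fun v _ => by rw [Pi.smul_apply, smul_eq_mul]
end

section
/- Let A be a finite nonempty set and F : Δ(A) → Δ(A) a polynomial with no zeros on the simplex, i.e. F(π)(a') ≠ 0 for every π ∈ Δ(A) and every a' ∈ A. Then there exist N ∈ ℕ and g : A^N → Δ(A) such that F arises from N action samples via g. -/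
open Filter Asymptotics Topology

open MvPolynomial Finset

namespace Stmt5Aux

variable {A : Type} [Fintype A] [Nonempty A]

open scoped Classical

noncomputable def wordOf (d : ℕ) (γ : A →₀ ℕ) : Fin d → A :=
  fun k => γ.toMultiset.toList.getD k (Classical.arbitrary A)

lemma prod_wordOf {d : ℕ} {γ : A →₀ ℕ} (hγ : γ.degree = d) (π : A → ℝ) :
    ∏ k : Fin d, π (wordOf d γ k) = ∏ a, π a ^ γ a := by
  classical
  set l := γ.toMultiset.toList with hl
  have hlen : l.length = d := by
    rw [hl, Multiset.length_toList, Finsupp.card_toMultiset, ← hγ]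
    rfl
  have h1 : ∏ k : Fin d, π (wordOf d γ k) = ∏ i : Fin l.length, π (l.get i) := by
    refine (Fintype.prod_equiv (finCongr hlen) _ _ ?_).symm
    intro i
    show π (l.get i) = π (l.getD ((finCongr hlen) i : Fin d).val (Classical.arbitrary A))
    rw [List.getD_eq_getElem (hn := by simpa using i.isLt)]
    simp [List.get]
  have h2 : ∏ i : Fin l.length, π (l.get i) = (l.map π).prod := by
    conv_rhs => rw [← List.ofFn_get l]
    rw [List.map_ofFn, List.prod_ofFn]
    rfl
  have h3 : (l.map π).prod = (γ.toMultiset.map π).prod := by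
    rw [hl]
    rw [← Multiset.prod_toList, ← Multiset.prod_coe (List.map π (Finsupp.toMultiset γ).toList),
      ← Multiset.map_coe, Multiset.coe_toList]
    exact (Multiset.prod_toList _).symm
  have h4 : (γ.toMultiset.map π).prod = ∏ a, π a ^ γ a := by
    rw [Finsupp.toMultiset_map, Finsupp.prod_toMultiset,
      Finsupp.prod_mapDomain_index (by simp) (fun a m n => pow_add _ _ _)]
    exact Finsupp.prod_fintype _ _ (by simp)
  rw [h1, h2, h3, h4]

/-- Homogenization of `p` to degree `d`, valid on the simplex. -/
noncomputable def homog (d : ℕ) (p : MvPolynomial A ℝ) : MvPolynomial A ℝ :=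
  ∑ β ∈ p.support, MvPolynomial.monomial β (p.coeff β) * (∑ a, MvPolynomial.X a) ^ (d - β.degree)

lemma homog_isHomogeneous {d : ℕ} {p : MvPolynomial A ℝ} (hp : p.totalDegree ≤ d) :
    (homog d p).IsHomogeneous d := by
  apply MvPolynomial.IsHomogeneous.sum
  intro β hβ
  have hβd : β.degree ≤ d := by
    refine le_trans ?_ hp
    simpa [Finsupp.degree_apply, Finsupp.sum] using MvPolynomial.le_totalDegree hβ
  have h1 : (MvPolynomial.monomial β (p.coeff β)).IsHomogeneous β.degree :=
    MvPolynomial.isHomogeneous_monomial _ rfl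
  have h2 : MvPolynomial.IsHomogeneous (∑ a, MvPolynomial.X a : MvPolynomial A ℝ) 1 := by
    apply MvPolynomial.IsHomogeneous.sum
    intro a _
    exact MvPolynomial.isHomogeneous_X _ _
  have h3 := h1.mul ((h2.pow (d - β.degree)))
  rw [one_mul] at h3
  convert h3 using 1
  omega

lemma homog_support_degree {d : ℕ} {p : MvPolynomial A ℝ} (hp : p.totalDegree ≤ d)
    {γ : A →₀ ℕ} (hγ : γ ∈ (homog d p).support) : γ.degree = d := by
  by_contra hne
  exact (MvPolynomial.mem_support_iff.mp hγ)
    ((homog_isHomogeneous hp).coeff_eq_zero hne)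

lemma eval_homog {d : ℕ} {p : MvPolynomial A ℝ} {π : A → ℝ} (hπ : ∑ a, π a = 1) :
    MvPolynomial.eval π (homog d p) = MvPolynomial.eval π p := by
  rw [homog, map_sum]
  conv_rhs => rw [MvPolynomial.eval_eq]
  refine Finset.sum_congr rfl fun β _ => ?_
  rw [map_mul, map_pow, map_sum]
  simp only [MvPolynomial.eval_X, MvPolynomial.eval_monomial, hπ, one_pow, mul_one]
  rfl

/-- The word-kernel of a polynomial all of whose monomials have degree `d`. -/
noncomputable def hword (d : ℕ) (P : MvPolynomial A ℝ) : (Fin d → A) → ℝ :=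
  fun v => ∑ γ ∈ P.support with wordOf d γ = v, P.coeff γ

lemma sum_hword {d : ℕ} {P : MvPolynomial A ℝ}
    (hP : ∀ γ ∈ P.support, γ.degree = d) (π : A → ℝ) :
    ∑ v : Fin d → A, (∏ k, π (v k)) * hword d P v = MvPolynomial.eval π P := by
  classical
  rw [MvPolynomial.eval_eq' π P]
  rw [← Finset.sum_fiberwise (g := fun γ => wordOf d γ)
      (f := fun γ => P.coeff γ * ∏ a, π a ^ γ a)]
  refine Finset.sum_congr rfl fun v _ => ?_
  rw [hword, Finset.mul_sum]
  refine Finset.sum_congr rfl fun γ hγ => ?_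
  obtain ⟨hγP, hγv⟩ := Finset.mem_filter.mp hγ
  rw [← hγv, prod_wordOf (hP γ hγP), mul_comm]

/-- Sum of i.i.d. product weights is 1. -/
lemma sum_prod_one {N : ℕ} {π : A → ℝ} (hπ : ∑ a, π a = 1) :
    ∑ w : Fin N → A, ∏ k, π (w k) = 1 := by
  classical
  have := Finset.prod_univ_sum (fun _ : Fin N => (univ : Finset A)) (fun _ a => π a)
  rw [Fintype.piFinset_univ] at this
  rw [← this]
  simp [hπ]

/-- Identity A: composing with a fixed injection preserves i.i.d. expectations. -/
lemma sum_comp_inj {d N : ℕ} {j : Fin d → Fin N} (hj : Function.Injective j)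
    {π : A → ℝ} (hπ : ∑ a, π a = 1) (h : (Fin d → A) → ℝ) :
    ∑ w : Fin N → A, (∏ k, π (w k)) * h (w ∘ j)
      = ∑ v : Fin d → A, (∏ k, π (v k)) * h v := by
  classical
  rw [← Finset.sum_fiberwise (g := fun w : Fin N → A => w ∘ j)
      (f := fun w => (∏ k, π (w k)) * h (w ∘ j))]
  refine Finset.sum_congr rfl fun v _ => ?_
  have : ∀ w ∈ univ.filter (fun w : Fin N → A => w ∘ j = v),
      (∏ k, π (w k)) * h (w ∘ j) = (∏ k, π (w k)) * h v := by
    intro w hw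
    rw [(Finset.mem_filter.mp hw).2]
  rw [Finset.sum_congr rfl this, ← Finset.sum_mul]
  congr 1
  -- key: ∑_{w : w∘j = v} ∏ π (w k) = ∏ π (v k)
  set G : Fin N → A → ℝ := fun k a => if ∀ i, j i = k → v i = a then π a else 0 with hG
  have key : ∀ w : Fin N → A,
      (if w ∘ j = v then (1:ℝ) else 0) * ∏ k, π (w k) = ∏ k, G k (w k) := by
    intro w
    by_cases hwv : w ∘ j = v
    · rw [if_pos hwv, one_mul]
      refine Finset.prod_congr rfl fun k _ => ?_
      rw [hG]
      simp only
      rw [if_pos]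
      intro i hik
      rw [← hik, ← congrFun hwv i]
      rfl
    · rw [if_neg hwv, zero_mul]
      have : ∃ i, v i ≠ w (j i) := by
        by_contra hc
        push_neg at hc
        exact hwv (funext fun i => (hc i).symm)
      obtain ⟨i, hi⟩ := this
      refine (Finset.prod_eq_zero (Finset.mem_univ (j i)) ?_).symm
      rw [hG]
      simp only
      rw [if_neg]
      push_neg
      exact ⟨i, rfl, hi⟩
  calc ∑ w ∈ univ.filter (fun w : Fin N → A => w ∘ j = v), ∏ k, π (w k)
      = ∑ w : Fin N → A, (if w ∘ j = v then (1:ℝ) else 0) * ∏ k, π (w k) := by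
        rw [Finset.sum_filter]
        refine Finset.sum_congr rfl fun w _ => ?_
        split <;> simp
    _ = ∑ w : Fin N → A, ∏ k, G k (w k) := Finset.sum_congr rfl fun w _ => key w
    _ = ∏ k, ∑ a, G k a := by
        rw [Finset.prod_univ_sum]
        rw [Fintype.piFinset_univ]
    _ = ∏ k, π (v k) := by
        have h1 : ∀ i : Fin d, ∑ a, G (j i) a = π (v i) := by
          intro i
          rw [hG]
          simp only
          have : ∀ a : A, (if ∀ i', j i' = j i → v i' = a then π a else 0)
              = if v i = a then π a else 0 := by
            intro a
            congr 1
            simp only [eq_iff_iff]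
            constructor
            · intro hall; exact hall i rfl
            · intro hv i' hi'; rwa [hj hi']
          rw [Finset.sum_congr rfl fun a _ => this a]
          simp
        have h2 : ∀ k ∈ (univ : Finset (Fin N)), k ∉ Finset.image j univ →
            ∑ a, G k a = 1 := by
          intro k _ hk
          rw [hG]
          simp only
          have : ∀ a : A, (if ∀ i', j i' = k → v i' = a then π a else 0) = π a := by
            intro a
            rw [if_pos]
            intro i' hi'
            exact absurd (hi' ▸ Finset.mem_image_of_mem j (Finset.mem_univ i')) hk
          rw [Finset.sum_congr rfl fun a _ => this a, hπ]
        rw [← Finset.prod_subset (Finset.subset_univ (Finset.image j univ)) h2,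
          Finset.prod_image (fun i _ i' _ hii' => hj hii')]
        exact Finset.prod_congr rfl fun i _ => h1 i

/-- The empirical distribution of the word `w`. -/
noncomputable def empDist {N : ℕ} (w : Fin N → A) : A → ℝ :=
  fun a => (∑ i, if w i = a then (1:ℝ) else 0) / N

lemma isDist_empDist {N : ℕ} (hN : 0 < N) (w : Fin N → A) : IsDist (empDist w) := by
  classical
  constructor
  · intro a
    apply div_nonneg _ (by positivity)
    apply Finset.sum_nonneg
    intro i _
    split <;> norm_num
  · simp only [empDist]
    rw [← Finset.sum_div, Finset.sum_comm]
    have : ∀ i : Fin N, ∑ a, (if w i = a then (1:ℝ) else 0) = 1 := by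
      intro i; simp
    rw [Finset.sum_congr rfl fun i _ => this i]
    simp only [Finset.sum_const, Finset.card_univ, Fintype.card_fin, nsmul_eq_mul, mul_one]
    field_simp

/-- Identity B: expectation under the empirical distribution is the average over all
(not necessarily injective) index maps. -/
lemma sum_emp {d N : ℕ} (hN : 0 < N) (w : Fin N → A) (h : (Fin d → A) → ℝ) :
    ∑ v : Fin d → A, (∏ k, empDist w (v k)) * h v
      = (∑ j : Fin d → Fin N, h (w ∘ j)) / (N:ℝ)^d := by
  classical
  have hprod : ∀ v : Fin d → A, (∏ k, empDist w (v k))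
      = (∑ j : Fin d → Fin N, ∏ k, if w (j k) = v k then (1:ℝ) else 0) / (N:ℝ)^d := by
    intro v
    simp only [empDist]
    rw [Finset.prod_div_distrib, Finset.prod_const, Finset.card_univ, Fintype.card_fin]
    congr 1
    rw [Finset.prod_univ_sum (t := fun _ : Fin d => (univ : Finset (Fin N)))
      (f := fun k i => if w i = v k then (1:ℝ) else 0), Fintype.piFinset_univ]
  have hind : ∀ (j : Fin d → Fin N) (v : Fin d → A),
      (∏ k, if w (j k) = v k then (1:ℝ) else 0) = if w ∘ j = v then 1 else 0 := by
    intro j v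
    by_cases hjv : w ∘ j = v
    · rw [if_pos hjv]
      refine Finset.prod_eq_one fun k _ => ?_
      have := congrFun hjv k
      simp only [Function.comp_apply] at this
      rw [if_pos this]
    · rw [if_neg hjv]
      have : ∃ k, w (j k) ≠ v k := by
        by_contra hc
        push_neg at hc
        exact hjv (funext hc)
      obtain ⟨k, hk⟩ := this
      exact Finset.prod_eq_zero (Finset.mem_univ k) (if_neg hk)
  calc ∑ v : Fin d → A, (∏ k, empDist w (v k)) * h v
      = ∑ v : Fin d → A, (∑ j : Fin d → Fin N, if w ∘ j = v then (1:ℝ) else 0) * h v / (N:ℝ)^d := by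
        refine Finset.sum_congr rfl fun v _ => ?_
        rw [hprod v, Finset.sum_congr rfl fun j _ => hind j v]
        ring
    _ = ∑ v : Fin d → A, ∑ j : Fin d → Fin N, (if w ∘ j = v then h v / (N:ℝ)^d else 0) := by
        refine Finset.sum_congr rfl fun v _ => ?_
        rw [Finset.sum_mul, Finset.sum_div]
        refine Finset.sum_congr rfl fun j _ => ?_
        split <;> simp
    _ = (∑ j : Fin d → Fin N, h (w ∘ j)) / (N:ℝ)^d := by
        rw [Finset.sum_comm, Finset.sum_div]
        refine Finset.sum_congr rfl fun j _ => ?_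
        rw [Finset.sum_ite_eq]
        simp

lemma card_injFilter (d N : ℕ) :
    (Finset.univ.filter (fun j : Fin d → Fin N => Function.Injective j)).card
      = N.descFactorial d := by
  classical
  rw [← Fintype.card_subtype]
  rw [Fintype.card_congr (Equiv.subtypeInjectiveEquivEmbedding (Fin d) (Fin N))]
  rw [Fintype.card_embedding_eq, Fintype.card_fin, Fintype.card_fin]

lemma exists_goodN (d : ℕ) {ε Hb : ℝ} (hε : 0 < ε) (hHb : 1 ≤ Hb) :
    ∃ N : ℕ, d ≤ N ∧ 0 < N ∧
      ((N:ℝ)^d - (N.descFactorial d : ℝ)) * (4*Hb) ≤ (N:ℝ)^d * ε := by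
  set N := max (d+1) (Nat.ceil ((4*Hb*((d:ℝ))^2)/ε) + 1) with hN
  have hdN : d ≤ N := le_trans (Nat.le_succ d) (le_max_left _ _)
  have hN0 : 0 < N := lt_of_lt_of_le (Nat.succ_pos d) (le_max_left _ _)
  have hNr : (0:ℝ) < N := by exact_mod_cast hN0
  refine ⟨N, hdN, hN0, ?_⟩
  have hceil : (4*Hb*((d:ℝ))^2)/ε ≤ N := by
    calc (4*Hb*((d:ℝ))^2)/ε ≤ Nat.ceil ((4*Hb*((d:ℝ))^2)/ε) := Nat.le_ceil _
    _ ≤ (N:ℝ) := Nat.cast_le.mpr (le_trans (Nat.le_succ _) (le_max_right _ _))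
  have hkey : (d:ℝ)^2 * (4*Hb) ≤ (N:ℝ) * ε := by
    rw [div_le_iff₀ hε] at hceil
    nlinarith
  have hdesc : ((N:ℝ) - d)^d ≤ (N.descFactorial d : ℝ) := by
    have h1 : (N - d)^d ≤ N.descFactorial d :=
      le_trans (Nat.pow_le_pow_left (by omega) d) (Nat.pow_sub_le_descFactorial N d)
    calc ((N:ℝ) - d)^d = (((N - d : ℕ)):ℝ)^d := by rw [Nat.cast_sub hdN]
    _ ≤ _ := by exact_mod_cast h1
  have hdN' : (d:ℝ) ≤ N := by exact_mod_cast hdN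
  have hbern : (N:ℝ)^d * (1 - (d:ℝ)^2/N) ≤ ((N:ℝ) - d)^d := by
    have ha : (-2:ℝ) ≤ -((d:ℝ)/N) := by
      have : (d:ℝ)/N ≤ 1 := by rw [div_le_one hNr]; exact hdN'
      linarith
    have hber := one_add_mul_le_pow ha d
    have heq : ((N:ℝ) - d)^d = (N:ℝ)^d * (1 + -((d:ℝ)/N))^d := by
      rw [← mul_pow]
      have hrw : (N:ℝ) - d = (N:ℝ) * (1 + -((d:ℝ)/N)) := by
        field_simp
        ring
      rw [hrw]
    rw [heq]
    have h2 : (1:ℝ) - (d:ℝ)^2/N = 1 + (d:ℝ) * -((d:ℝ)/N) := by ring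
    rw [h2]
    exact mul_le_mul_of_nonneg_left hber (pow_nonneg hNr.le d)
  have hdesc_le : (N.descFactorial d : ℝ) ≤ (N:ℝ)^d := by
    have := Nat.descFactorial_le_pow N d
    exact_mod_cast this
  have hNd0 : (0:ℝ) < (N:ℝ)^d := pow_pos hNr d
  -- N^d - desc ≤ N^d * d^2 / N
  have hfin : ((N:ℝ)^d - (N.descFactorial d : ℝ)) * N ≤ (N:ℝ)^d * (d:ℝ)^2 := by
    have h3 : (N:ℝ)^d * (1 - (d:ℝ)^2/N) ≤ (N.descFactorial d : ℝ) := le_trans hbern hdesc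
    have h4 : (N:ℝ)^d * ((1:ℝ) - (d:ℝ)^2/N) * N = (N:ℝ)^d * N - (N:ℝ)^d * (d:ℝ)^2 := by
      field_simp
    nlinarith
  rw [← mul_le_mul_iff_of_pos_right hNr]
  calc ((N:ℝ)^d - (N.descFactorial d : ℝ)) * (4*Hb) * N
      = ((N:ℝ)^d - (N.descFactorial d : ℝ)) * N * (4*Hb) := by ring
    _ ≤ (N:ℝ)^d * (d:ℝ)^2 * (4*Hb) := by nlinarith
    _ = (N:ℝ)^d * ((d:ℝ)^2 * (4*Hb)) := by ring
    _ ≤ (N:ℝ)^d * ((N:ℝ) * ε) := mul_le_mul_of_nonneg_left hkey hNd0.le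
    _ = (N:ℝ)^d * ε * N := by ring

end Stmt5Aux

/-- Corollary: polynomials with no zeros on the simplex arise from
action samples. If `F : Δ(A) → Δ(A)` is a polynomial (each component agrees on `Δ(A)`
with a real multivariate polynomial) with no zeros on the simplex, then there exist
`N ∈ ℕ` and `g : A^N → Δ(A)` such that `F` arises from `N` action samples via `g`. -/
theorem stmt5 {A : Type} [Fintype A] [Nonempty A] (F : (A → ℝ) → A → ℝ)
    (hF : ∀ π, IsDist π → IsDist (F π))
    (hpoly : ∀ a' : A, ∃ p : MvPolynomial A ℝ,
      ∀ π : A → ℝ, IsDist π → F π a' = MvPolynomial.eval π p)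
    (hnz : ∀ π : A → ℝ, IsDist π → ∀ a' : A, F π a' ≠ 0) :
    ∃ (N : ℕ) (g : (Fin N → A) → A → ℝ), (∀ v, IsDist (g v)) ∧
      ∀ π : A → ℝ, IsDist π → F π = sampleExp N g π := by
  classical
  choose p hp using hpoly
  set d := Finset.univ.sup (fun a' : A => (p a').totalDegree) with hd
  set P : A → MvPolynomial A ℝ := fun a' => Stmt5Aux.homog d (p a') with hPdef
  have hdeg : ∀ a', (p a').totalDegree ≤ d := by
    intro a'
    rw [hd]
    exact Finset.le_sup (f := fun a' : A => (p a').totalDegree) (Finset.mem_univ a')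
  have hhom : ∀ a' γ, γ ∈ (P a').support → γ.degree = d :=
    fun a' γ hγ => Stmt5Aux.homog_support_degree (hdeg a') hγ
  have hPeval : ∀ π, IsDist π → ∀ a', MvPolynomial.eval π (P a') = F π a' := by
    intro π hπ a'
    exact (Stmt5Aux.eval_homog hπ.2).trans (hp a' π hπ).symm
  set h : A → (Fin d → A) → ℝ := fun a' => Stmt5Aux.hword d (P a') with hhdef
  have hrep : ∀ (a' : A) (π : A → ℝ),
      ∑ v : Fin d → A, (∏ k, π (v k)) * h a' v = MvPolynomial.eval π (P a') :=
    fun a' π => Stmt5Aux.sum_hword (fun γ hγ => hhom a' γ hγ) π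
  -- the uniform lower bound ε on the simplex
  have hSeq : {π : A → ℝ | IsDist π} = stdSimplex ℝ A := rfl
  have hcomp : IsCompact {π : A → ℝ | IsDist π} := by
    rw [hSeq]; exact isCompact_stdSimplex ℝ A
  have hSne : Set.Nonempty {π : A → ℝ | IsDist π} := by
    refine ⟨fun _ => (Fintype.card A : ℝ)⁻¹, fun a => by positivity, ?_⟩
    rw [Finset.sum_const, Finset.card_univ, nsmul_eq_mul]
    have : (0:ℝ) < Fintype.card A := by
      have := Fintype.card_pos (α := A); exact_mod_cast this
    field_simp
  have hεa : ∀ a', ∃ e : ℝ, 0 < e ∧ ∀ π, IsDist π → e ≤ MvPolynomial.eval π (P a') := by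
    intro a'
    obtain ⟨π₀, hπ₀S, hmin⟩ := hcomp.exists_isMinOn hSne
      ((MvPolynomial.continuous_eval (p := P a')).continuousOn)
    refine ⟨MvPolynomial.eval π₀ (P a'), ?_, fun π hπ => hmin hπ⟩
    rw [hPeval π₀ hπ₀S a']
    exact lt_of_le_of_ne ((hF π₀ hπ₀S).1 a') (Ne.symm (hnz π₀ hπ₀S a'))
  choose e he0 heB using hεa
  set ε := Finset.univ.inf' Finset.univ_nonempty e with hε
  have hε0 : 0 < ε := by
    rw [hε, Finset.lt_inf'_iff]
    exact fun a' _ => he0 a'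
  have hεle : ∀ π, IsDist π → ∀ a', ε ≤ MvPolynomial.eval π (P a') :=
    fun π hπ a' => le_trans (Finset.inf'_le _ (Finset.mem_univ a')) (heB a' π hπ)
  -- the uniform bound Hb on the word kernels
  set Hb : ℝ := 1 + Finset.univ.sup' Finset.univ_nonempty
    (fun x : A × (Fin d → A) => |h x.1 x.2|) with hHbdef
  have hHb1 : 1 ≤ Hb := by
    have h0 : 0 ≤ Finset.univ.sup' Finset.univ_nonempty
        (fun x : A × (Fin d → A) => |h x.1 x.2|) := by
      obtain ⟨x⟩ : Nonempty (A × (Fin d → A)) := inferInstance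
      exact le_trans (abs_nonneg (h x.1 x.2))
        (Finset.le_sup' (fun x : A × (Fin d → A) => |h x.1 x.2|) (Finset.mem_univ x))
    rw [hHbdef]; linarith
  have hHbB : ∀ a' v, |h a' v| ≤ Hb := by
    intro a' v
    have := Finset.le_sup' (fun x : A × (Fin d → A) => |h x.1 x.2|)
      (Finset.mem_univ (a', v))
    rw [hHbdef]; simpa using le_trans this (by linarith)
  -- choose N
  obtain ⟨N, hdN, hN0, hNineq⟩ := Stmt5Aux.exists_goodN d hε0 hHb1
  set J := Finset.univ.filter (fun j : Fin d → Fin N => Function.Injective j) with hJ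
  set cR : ℝ := (N.descFactorial d : ℝ) with hcR
  have hcardJ : (J.card : ℝ) = cR := by
    rw [hJ, Stmt5Aux.card_injFilter, hcR]
  have hc0 : 0 < cR := by
    rw [hcR]
    have : N.descFactorial d ≠ 0 := by
      rw [Ne, Nat.descFactorial_eq_zero_iff_lt]
      omega
    have := Nat.pos_of_ne_zero this
    exact_mod_cast this
  have hcle : cR ≤ (N:ℝ)^d := by
    rw [hcR]
    exact_mod_cast Nat.descFactorial_le_pow N d
  set E : ℝ := (N:ℝ)^d - cR with hE
  have hE0 : 0 ≤ E := by rw [hE]; linarith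
  have hEHb : E * (4*Hb) ≤ (N:ℝ)^d * ε := hNineq
  set G : A → (Fin N → A) → ℝ := fun a' w => (∑ j ∈ J, h a' (w ∘ j)) / cR with hG
  -- Identity: i.i.d. expectation of G recovers F on the simplex
  have hK1 : ∀ (π : A → ℝ), (∑ a, π a = 1) → ∀ a',
      ∑ w : Fin N → A, (∏ k, π (w k)) * G a' w = MvPolynomial.eval π (P a') := by
    intro π hπ a'
    have step1 : ∀ w : Fin N → A, (∏ k, π (w k)) * G a' w
        = ∑ j ∈ J, (∏ k, π (w k)) * h a' (w ∘ j) / cR := by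
      intro w
      simp only [hG]
      rw [← mul_div_assoc, Finset.mul_sum, Finset.sum_div]
    rw [Finset.sum_congr rfl fun w _ => step1 w, Finset.sum_comm]
    have step2 : ∀ j ∈ J, ∑ w : Fin N → A, (∏ k, π (w k)) * h a' (w ∘ j) / cR
        = MvPolynomial.eval π (P a') / cR := by
      intro j hj
      rw [← Finset.sum_div]
      congr 1
      rw [Stmt5Aux.sum_comp_inj (Finset.mem_filter.mp hj).2 hπ (h a')]
      exact hrep a' π
    rw [Finset.sum_congr rfl step2, Finset.sum_const, nsmul_eq_mul, hcardJ]
    field_simp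
  -- Identity: the all-maps sum equals N^d times eval at the empirical distribution
  have hemp : ∀ w : Fin N → A, IsDist (Stmt5Aux.empDist w) :=
    fun w => Stmt5Aux.isDist_empDist hN0 w
  have hNd0 : (0:ℝ) < (N:ℝ)^d := by positivity
  have hK2 : ∀ (a' : A) (w : Fin N → A),
      ∑ j : Fin d → Fin N, h a' (w ∘ j)
        = (N:ℝ)^d * MvPolynomial.eval (Stmt5Aux.empDist w) (P a') := by
    intro a' w
    have h1 := Stmt5Aux.sum_emp hN0 w (h a')
    rw [hrep a' (Stmt5Aux.empDist w)] at h1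
    rw [h1]
    field_simp
  -- bound for the non-injective part
  set Jc := Finset.univ.filter (fun j : Fin d → Fin N => ¬ Function.Injective j) with hJc
  have hcardJc : (Jc.card : ℝ) = E := by
    have hsum : J.card + Jc.card = N^d := by
      rw [hJ, hJc]
      rw [Finset.card_filter_add_card_filter_not]
      simp [Finset.card_univ]
    have : (Jc.card : ℝ) = ((N^d : ℕ) : ℝ) - (J.card : ℝ) := by
      have := congrArg (fun x : ℕ => (x:ℝ)) hsum
      push_cast at this ⊢
      linarith
    rw [this, hcardJ, hE]
    push_cast
    ring
  have hnonJ : ∀ (a' : A) (w : Fin N → A), |∑ j ∈ Jc, h a' (w ∘ j)| ≤ E * Hb := by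
    intro a' w
    calc |∑ j ∈ Jc, h a' (w ∘ j)| ≤ ∑ j ∈ Jc, |h a' (w ∘ j)| :=
          Finset.abs_sum_le_sum_abs _ _
      _ ≤ ∑ j ∈ Jc, Hb := Finset.sum_le_sum (fun j _ => hHbB a' _)
      _ = (Jc.card : ℝ) * Hb := by rw [Finset.sum_const, nsmul_eq_mul]
      _ = E * Hb := by rw [hcardJc]
  have hsplit : ∀ (a' : A) (w : Fin N → A),
      ∑ j ∈ J, h a' (w ∘ j)
        = (N:ℝ)^d * MvPolynomial.eval (Stmt5Aux.empDist w) (P a')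
          - ∑ j ∈ Jc, h a' (w ∘ j) := by
    intro a' w
    have := Finset.sum_filter_add_sum_filter_not Finset.univ
      (fun j : Fin d → Fin N => Function.Injective j) (fun j => h a' (w ∘ j))
    rw [← hJ, ← hJc] at this
    rw [← hK2 a' w]
    linarith
  -- the final kernel g
  set n : ℕ := Fintype.card A with hn
  have hn0 : 0 < n := Fintype.card_pos
  have hn1 : (1:ℝ) ≤ n := by exact_mod_cast hn0
  set g : (Fin N → A) → A → ℝ := fun w a' => G a' w + (1 - ∑ b, G b w) / n with hg
  clear_value d P h ε Hb cR E J Jc G n g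
  -- lower bound for cR * G
  have hb1 : ∀ (b : A) (w : Fin N → A), (N:ℝ)^d * ε - E * Hb ≤ cR * G b w := by
    intro b w
    have hGr : cR * G b w = ∑ j ∈ J, h b (w ∘ j) := by
      simp only [hG]
      field_simp
    rw [hGr, hsplit b w]
    have h1 : ε ≤ MvPolynomial.eval (Stmt5Aux.empDist w) (P b) := hεle _ (hemp w) b
    have h2 := hnonJ b w
    have h3 := abs_le.mp h2
    nlinarith
  -- the row sums of G
  have hb2 : ∀ w : Fin N → A, -((n:ℝ) * (E * Hb) + E) ≤ cR * (1 - ∑ b, G b w) := by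
    intro w
    have hGsum : cR * (∑ b, G b w) = (N:ℝ)^d - ∑ b, ∑ j ∈ Jc, h b (w ∘ j) := by
      rw [Finset.mul_sum]
      have : ∀ b ∈ Finset.univ, cR * G b w
          = (N:ℝ)^d * MvPolynomial.eval (Stmt5Aux.empDist w) (P b)
            - ∑ j ∈ Jc, h b (w ∘ j) := by
        intro b _
        have hGr : cR * G b w = ∑ j ∈ J, h b (w ∘ j) := by
          simp only [hG]; field_simp
        rw [hGr, hsplit b w]
      rw [Finset.sum_congr rfl this, Finset.sum_sub_distrib, ← Finset.mul_sum]
      have hone : ∑ b, MvPolynomial.eval (Stmt5Aux.empDist w) (P b) = 1 := by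
        have : ∀ b ∈ Finset.univ, MvPolynomial.eval (Stmt5Aux.empDist w) (P b)
            = F (Stmt5Aux.empDist w) b := fun b _ => hPeval _ (hemp w) b
        rw [Finset.sum_congr rfl this]
        exact (hF _ (hemp w)).2
      rw [hone, mul_one]
    have habs : |∑ b, ∑ j ∈ Jc, h b (w ∘ j)| ≤ (n:ℝ) * (E * Hb) := by
      calc |∑ b, ∑ j ∈ Jc, h b (w ∘ j)| ≤ ∑ b, |∑ j ∈ Jc, h b (w ∘ j)| :=
            Finset.abs_sum_le_sum_abs _ _
        _ ≤ ∑ _b : A, E * Hb := Finset.sum_le_sum (fun b _ => hnonJ b w)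
        _ = (n:ℝ) * (E * Hb) := by
            rw [Finset.sum_const, nsmul_eq_mul, Finset.card_univ, hn]
    have h3 := abs_le.mp habs
    have : cR * (1 - ∑ b, G b w) = cR - (N:ℝ)^d + ∑ b, ∑ j ∈ Jc, h b (w ∘ j) := by
      rw [mul_sub, mul_one, hGsum]; ring
    have hEeq : cR - (N:ℝ)^d = -E := by rw [hE]; ring
    rw [this, hEeq]
    linarith [h3.1]
  -- rows of g are distributions
  have hrow : ∀ w, IsDist (g w) := by
    intro w
    constructor
    · intro a'
      have hk1 := hb1 a' w
      have hk2 := hb2 w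
      have hpos : 0 ≤ (n:ℝ) * (cR * G a' w) + cR * (1 - ∑ b, G b w) := by
        have hnn : (0:ℝ) ≤ (n:ℝ) := by positivity
        nlinarith [mul_le_mul_of_nonneg_left hk1 hnn,
          mul_le_mul_of_nonneg_left hEHb hnn,
          mul_nonneg hE0 (by nlinarith : (0:ℝ) ≤ (n:ℝ) * Hb - 1),
          mul_nonneg (mul_nonneg hnn hE0) (by linarith : (0:ℝ) ≤ Hb)]
      have hgeq : g w a' = ((n:ℝ) * (cR * G a' w) + cR * (1 - ∑ b, G b w)) / (cR * n) := by
        simp only [hg]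
        field_simp
      rw [hgeq]
      positivity
    · simp only [hg]
      rw [Finset.sum_add_distrib, Finset.sum_const, Finset.card_univ, ← hn, nsmul_eq_mul]
      have : (n:ℝ) ≠ 0 := by positivity
      field_simp
      ring
  refine ⟨N, g, hrow, ?_⟩
  intro π hπ
  funext a'
  rw [sampleExp, Finset.sum_apply]
  simp only [Pi.smul_apply, smul_eq_mul]
  have h1 : ∑ w : Fin N → A, (∏ k, π (w k)) * G a' w = F π a' :=
    (hK1 π hπ.2 a').trans (hPeval π hπ a')
  have h2 : ∑ w : Fin N → A, (∏ k, π (w k)) * (∑ b, G b w) = 1 := by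
    have hsw : ∑ w : Fin N → A, (∏ k, π (w k)) * (∑ b, G b w)
        = ∑ b, ∑ w : Fin N → A, (∏ k, π (w k)) * G b w := by
      rw [← Finset.sum_comm]
      exact Finset.sum_congr rfl fun w _ => by rw [Finset.mul_sum]
    rw [hsw]
    have : ∀ b ∈ Finset.univ, ∑ w : Fin N → A, (∏ k, π (w k)) * G b w = F π b :=
      fun b _ => (hK1 π hπ.2 b).trans (hPeval π hπ b)
    rw [Finset.sum_congr rfl this]
    exact (hF π hπ).2
  have h3 : ∑ w : Fin N → A, ∏ k, π (w k) = 1 := Stmt5Aux.sum_prod_one hπ.2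
  have h4 : ∀ w : Fin N → A, (∏ k, π (w k)) * g w a'
      = (∏ k, π (w k)) * G a' w
        + ((∏ k, π (w k)) / n - ((∏ k, π (w k)) * (∑ b, G b w)) / n) := by
    intro w
    simp only [hg]
    ring
  rw [Finset.sum_congr rfl fun w _ => h4 w, Finset.sum_add_distrib, h1,
    Finset.sum_sub_distrib, ← Finset.sum_div, ← Finset.sum_div, h2, h3]
  ring
end

section
/- Let k ≥ 1 and let Δ^{k−1} = {p ∈ ℝ^k : p_i ≥ 0 for all i, Σ_{i=1}^k p_i = 1} be the unit simplex in ℝ^k. If f is a real multivariate polynomial in k variables with f(p) > 0 for every p ∈ Δ^{k−1}, then there exists a real multivariate polynomial in k variables all of whose coefficients are nonnegative that agrees with f at every point of Δ^{k−1}. -/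
open Finset MvPolynomial

/-- Cast of `Nat.descFactorial` as a product of real factors. -/
private lemma cast_descFactorial_eq_prod (b a : ℕ) :
    ((b.descFactorial a : ℝ)) = ∏ j ∈ Finset.range a, ((b : ℝ) - j) := by
  induction a with
  | zero => simp
  | succ a ih =>
    rw [Nat.descFactorial_succ, Finset.prod_range_succ, Nat.cast_mul, ih]
    by_cases hab : a ≤ b
    · rw [Nat.cast_sub hab]; ring
    · have hz : (∏ j ∈ Finset.range a, ((b : ℝ) - j)) = 0 :=
        Finset.prod_eq_zero (Finset.mem_range.2 (Nat.lt_of_not_le hab)) (by simp)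
      rw [hz]; ring

/-- Perturbation bound for products of numbers bounded by 1 in absolute value. -/
private lemma abs_prod_sub_prod {ι : Type*} (s : Finset ι) (u v : ι → ℝ)
    (hu : ∀ i ∈ s, |u i| ≤ 1) (hv : ∀ i ∈ s, |v i| ≤ 1) :
    |(∏ i ∈ s, u i) - ∏ i ∈ s, v i| ≤ ∑ i ∈ s, |u i - v i| := by
  classical
  induction s using Finset.induction_on with
  | empty => simp
  | @insert a s ha ih =>
    rw [Finset.prod_insert ha, Finset.prod_insert ha, Finset.sum_insert ha]
    have hQ : |∏ i ∈ s, v i| ≤ 1 := by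
      rw [Finset.abs_prod]
      exact Finset.prod_le_one (fun i _ => abs_nonneg _)
        (fun i hi => hv i (Finset.mem_insert_of_mem hi))
    have hua : |u a| ≤ 1 := hu a (Finset.mem_insert_self a s)
    have hih := ih (fun i hi => hu i (Finset.mem_insert_of_mem hi))
      (fun i hi => hv i (Finset.mem_insert_of_mem hi))
    calc |u a * ∏ i ∈ s, u i - v a * ∏ i ∈ s, v i|
        = |(u a - v a) * ∏ i ∈ s, v i + u a * ((∏ i ∈ s, u i) - ∏ i ∈ s, v i)| := by
          ring_nf
      _ ≤ |(u a - v a) * ∏ i ∈ s, v i| + |u a * ((∏ i ∈ s, u i) - ∏ i ∈ s, v i)| :=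
          abs_add_le _ _
      _ = |u a - v a| * |∏ i ∈ s, v i| + |u a| * |(∏ i ∈ s, u i) - ∏ i ∈ s, v i| := by
          rw [abs_mul, abs_mul]
      _ ≤ |u a - v a| * 1 + 1 * ∑ i ∈ s, |u i - v i| :=
          add_le_add (mul_le_mul_of_nonneg_left hQ (abs_nonneg _))
            (mul_le_mul hua hih (abs_nonneg _) zero_le_one)
      _ = |u a - v a| + ∑ i ∈ s, |u i - v i| := by ring

private lemma desc_prod_estimate {ι : Type*} (s : Finset ι) (t d : ℕ) (htd : 0 < t)
    (hdt : d ≤ t) (b a : ι → ℕ) (hb : ∀ i ∈ s, b i ≤ t) (ha : ∀ i ∈ s, a i ≤ d)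
    (hsum : ∑ i ∈ s, a i ≤ d) :
    |(∏ i ∈ s, (Nat.descFactorial (b i) (a i) : ℝ)) / (t : ℝ) ^ (∑ i ∈ s, a i)
      - ∏ i ∈ s, ((b i : ℝ) / t) ^ a i| ≤ (d : ℝ) ^ 2 / t := by
  have htR : (0 : ℝ) < t := by exact_mod_cast htd
  set u : ι → ℝ := fun i => ∏ j ∈ Finset.range (a i), (((b i : ℝ) - j) / t) with hu
  set v : ι → ℝ := fun i => ((b i : ℝ) / t) ^ a i with hv
  -- basic bounds on the individual factors
  have hfac : ∀ i ∈ s, ∀ j ∈ Finset.range (a i), |((b i : ℝ) - j) / t| ≤ 1 := by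
    intro i hi j hj
    have hj' : (j : ℝ) ≤ t := by
      have : j ≤ t := le_trans (le_of_lt (Finset.mem_range.1 hj)) (le_trans (ha i hi) hdt)
      exact_mod_cast this
    have hb' : (b i : ℝ) ≤ t := by exact_mod_cast hb i hi
    have hb0 : (0 : ℝ) ≤ (b i : ℝ) := Nat.cast_nonneg _
    have hj0 : (0 : ℝ) ≤ (j : ℝ) := Nat.cast_nonneg _
    rw [abs_div, abs_of_pos htR, div_le_one htR, abs_le]
    constructor <;> linarith
  have hbt1 : ∀ i ∈ s, (0 : ℝ) ≤ (b i : ℝ) / t ∧ (b i : ℝ) / t ≤ 1 := by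
    intro i hi
    constructor
    · positivity
    · rw [div_le_one htR]; exact_mod_cast hb i hi
  have hu1 : ∀ i ∈ s, |u i| ≤ 1 := by
    intro i hi
    rw [hu, Finset.abs_prod]
    exact Finset.prod_le_one (fun j _ => abs_nonneg _) (fun j hj => hfac i hi j hj)
  have hv1 : ∀ i ∈ s, |v i| ≤ 1 := by
    intro i hi
    obtain ⟨h0, h1⟩ := hbt1 i hi
    rw [hv, abs_of_nonneg (pow_nonneg h0 _)]
    exact pow_le_one₀ h0 h1
  -- rewrite the LHS first product
  have hUrw : (∏ i ∈ s, (Nat.descFactorial (b i) (a i) : ℝ)) / (t : ℝ) ^ (∑ i ∈ s, a i)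
      = ∏ i ∈ s, u i := by
    rw [← Finset.prod_pow_eq_pow_sum, ← Finset.prod_div_distrib]
    refine Finset.prod_congr rfl fun i _ => ?_
    rw [cast_descFactorial_eq_prod,
      show ((t : ℝ)) ^ (a i) = ∏ _j ∈ Finset.range (a i), (t : ℝ) by
        rw [Finset.prod_const, Finset.card_range], ← Finset.prod_div_distrib]
  -- per-index difference bound
  have hdiff : ∀ i ∈ s, |u i - v i| ≤ (a i : ℝ) * ((d : ℝ) / t) := by
    intro i hi
    have hvrw : v i = ∏ _j ∈ Finset.range (a i), ((b i : ℝ) / t) := by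
      rw [hv, Finset.prod_const, Finset.card_range]
    rw [hvrw, hu]
    refine le_trans (abs_prod_sub_prod _ _ _ (fun j hj => hfac i hi j hj)
      (fun j _ => by
        obtain ⟨h0, h1⟩ := hbt1 i hi
        rw [abs_of_nonneg h0]; exact h1)) ?_
    have hterm : ∀ j ∈ Finset.range (a i),
        |((b i : ℝ) - j) / t - (b i : ℝ) / t| ≤ (d : ℝ) / t := by
      intro j hj
      have hrw : ((b i : ℝ) - j) / t - (b i : ℝ) / t = -((j : ℝ) / t) := by
        field_simp
        ring
      rw [hrw, abs_neg, abs_of_nonneg (by positivity)]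
      have : (j : ℝ) ≤ d := by
        exact_mod_cast le_trans (le_of_lt (Finset.mem_range.1 hj)) (ha i hi)
      gcongr
    refine le_trans (Finset.sum_le_sum hterm) ?_
    rw [Finset.sum_const, Finset.card_range, nsmul_eq_mul]
  -- assemble
  rw [hUrw]
  refine le_trans (abs_prod_sub_prod s u v hu1 hv1) ?_
  refine le_trans (Finset.sum_le_sum hdiff) ?_
  rw [← Finset.sum_mul]
  have hsR : (∑ i ∈ s, (a i : ℝ)) ≤ (d : ℝ) := by
    rw [← Nat.cast_sum]
    exact_mod_cast hsum
  have : (∑ i ∈ s, (a i : ℝ)) * ((d : ℝ) / t) ≤ (d : ℝ) * ((d : ℝ) / t) :=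
    mul_le_mul_of_nonneg_right hsR (by positivity)
  refine le_trans this (le_of_eq ?_)
  field_simp

/-- All monomials over `univ`. -/
private lemma prod_X_pow_univ {k : ℕ} (m : Fin k →₀ ℕ) :
    (∏ i, (MvPolynomial.X i : MvPolynomial (Fin k) ℝ) ^ m i) = MvPolynomial.monomial m 1 := by
  rw [← MvPolynomial.prod_X_pow_eq_monomial]
  exact (Finset.prod_subset (Finset.subset_univ _)
    (fun i _ hi => by rw [Finsupp.notMem_support_iff.1 hi, pow_zero])).symm

/-- Coefficients of powers of the sum of all variables. -/
private lemma coeff_S_pow {k : ℕ} (N : ℕ) (γ : Fin k →₀ ℕ) :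
    MvPolynomial.coeff γ ((∑ i, (MvPolynomial.X i : MvPolynomial (Fin k) ℝ)) ^ N) =
      if ∑ i, γ i = N then (Nat.multinomial Finset.univ ⇑γ : ℝ) else 0 := by
  classical
  rw [Finset.sum_pow_eq_sum_piAntidiag, MvPolynomial.coeff_sum]
  have hterm : ∀ g ∈ Finset.piAntidiag (Finset.univ : Finset (Fin k)) N,
      MvPolynomial.coeff γ ((Nat.multinomial Finset.univ g : MvPolynomial (Fin k) ℝ) *
        ∏ i, MvPolynomial.X i ^ g i) =
      if g = ⇑γ then (Nat.multinomial Finset.univ g : ℝ) else 0 := by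
    intro g _
    have hg : (∏ i, (MvPolynomial.X i : MvPolynomial (Fin k) ℝ) ^ g i) =
        MvPolynomial.monomial (Finsupp.equivFunOnFinite.symm g) 1 := by
      rw [← prod_X_pow_univ (Finsupp.equivFunOnFinite.symm g)]
      rfl
    rw [hg, ← MvPolynomial.C_eq_coe_nat, MvPolynomial.coeff_C_mul,
      MvPolynomial.coeff_monomial]
    have : (Finsupp.equivFunOnFinite.symm g = γ) ↔ (g = ⇑γ) := by
      rw [Equiv.symm_apply_eq]
      rfl
    by_cases h : g = ⇑γ
    · rw [if_pos (this.2 h), if_pos h, mul_one]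
    · rw [if_neg (fun hh => h (this.1 hh)), if_neg h, mul_zero]
  rw [Finset.sum_congr rfl hterm, Finset.sum_ite_eq' (Finset.piAntidiag Finset.univ N) (⇑γ)
    (fun g => (Nat.multinomial Finset.univ g : ℝ))]
  have : (⇑γ ∈ Finset.piAntidiag (Finset.univ : Finset (Fin k)) N) ↔ (∑ i, γ i = N) := by
    rw [Finset.mem_piAntidiag]
    simp
  by_cases h : ∑ i, γ i = N
  · rw [if_pos (this.2 h), if_pos h]
  · rw [if_neg (fun hh => h (this.1 hh)), if_neg h]

/-- Key natural-number identity. -/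
private lemma multinomial_mul_prod_factorial {k : ℕ} (α β : Fin k →₀ ℕ) (hαβ : α ≤ β) :
    Nat.multinomial Finset.univ ⇑(β - α) * ∏ i, (β i).factorial =
      (∑ i, (β - α) i).factorial * ∏ i, Nat.descFactorial (β i) (α i) := by
  have hle : ∀ i, α i ≤ β i := fun i => Finsupp.le_def.1 hαβ i
  have h1 : ∀ i, (β i).factorial
      = Nat.descFactorial (β i) (α i) * ((β - α) i).factorial := by
    intro i
    rw [Finsupp.tsub_apply]
    rw [← Nat.factorial_mul_descFactorial (hle i), mul_comm]
  calc Nat.multinomial Finset.univ ⇑(β - α) * ∏ i, (β i).factorial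
      = Nat.multinomial Finset.univ ⇑(β - α) *
          ((∏ i, Nat.descFactorial (β i) (α i)) * ∏ i, ((β - α) i).factorial) := by
        rw [← Finset.prod_mul_distrib, Finset.prod_congr rfl (fun i _ => h1 i)]
    _ = ((∏ i, ((β - α) i).factorial) * Nat.multinomial Finset.univ ⇑(β - α)) *
          ∏ i, Nat.descFactorial (β i) (α i) := by ring
    _ = (∑ i, (β - α) i).factorial * ∏ i, Nat.descFactorial (β i) (α i) := by
        rw [Nat.multinomial_spec]

/-- Lemma: polynomials positive on the simplex can be written with
nonnegative coefficients. Let `k ≥ 1` and let `Δ^{k−1}` be the unit simplex in `ℝ^k`.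
If a real multivariate polynomial `f` in `k` variables satisfies `f(p) > 0` for every
`p ∈ Δ^{k−1}`, then there is a real multivariate polynomial in `k` variables, all of whose
coefficients are nonnegative, agreeing with `f` at every point of `Δ^{k−1}`. -/
theorem stmt6 (k : ℕ) (hk : 1 ≤ k) (f : MvPolynomial (Fin k) ℝ)
    (hf : ∀ p : Fin k → ℝ, (∀ i, 0 ≤ p i) → ∑ i, p i = 1 →
      0 < MvPolynomial.eval p f) :
    ∃ q : MvPolynomial (Fin k) ℝ, (∀ m : Fin k →₀ ℕ, 0 ≤ q.coeff m) ∧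
      ∀ p : Fin k → ℝ, (∀ i, 0 ≤ p i) → ∑ i, p i = 1 →
        MvPolynomial.eval p f = MvPolynomial.eval p q := by
  classical
  set S : MvPolynomial (Fin k) ℝ := ∑ i, MvPolynomial.X i with hSdef
  -- the simplex is nonempty and compact; get a positive minimum ε for f
  have hne : (stdSimplex ℝ (Fin k)).Nonempty := by
    refine ⟨fun j => if j = ⟨0, hk⟩ then 1 else 0, fun i => ?_, by simp⟩
    dsimp only
    split_ifs <;> norm_num
  obtain ⟨p₀, hp₀, hmin⟩ := (isCompact_stdSimplex ℝ (Fin k)).exists_isMinOn hne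
    ((MvPolynomial.continuous_eval (p := f)).continuousOn)
  set ε : ℝ := MvPolynomial.eval p₀ f with hεdef
  have hε : 0 < ε := hf p₀ hp₀.1 hp₀.2
  have hlow : ∀ p : Fin k → ℝ, (∀ i, 0 ≤ p i) → ∑ i, p i = 1 →
      ε ≤ MvPolynomial.eval p f := fun p h1 h2 => hmin ⟨h1, h2⟩
  -- numerical setup
  set d : ℕ := f.totalDegree with hddef
  set A : ℝ := ∑ α ∈ f.support, |f.coeff α| with hAdef
  have hA : 0 ≤ A := Finset.sum_nonneg fun α _ => abs_nonneg _
  obtain ⟨t, htR⟩ := exists_nat_gt (max (2 * (d : ℝ) ^ 2) (A * (4 * (d : ℝ) ^ 2) / ε))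
  have htd2 : 2 * (d : ℝ) ^ 2 < t := lt_of_le_of_lt (le_max_left _ _) htR
  have htA : A * (4 * (d : ℝ) ^ 2) / ε < t := lt_of_le_of_lt (le_max_right _ _) htR
  have htpos : 0 < t := by
    have : (0 : ℝ) < t := lt_of_le_of_lt (by positivity) htd2
    exact_mod_cast this
  have htRpos : (0 : ℝ) < t := by exact_mod_cast htpos
  have hd2t : 2 * d ^ 2 < t := by exact_mod_cast htd2
  have hdt : d ≤ t := by nlinarith [Nat.zero_le d]
  have hdeg : ∀ α ∈ f.support, ∑ i, α i ≤ d := by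
    intro α hα
    have h1 := MvPolynomial.le_totalDegree hα
    rwa [Finsupp.sum_fintype _ _ (fun _ => rfl)] at h1
  -- the candidate polynomial
  set q : MvPolynomial (Fin k) ℝ :=
    ∑ α ∈ f.support, MvPolynomial.monomial α (f.coeff α) * S ^ (t - ∑ i, α i) with hqdef
  refine ⟨q, ?_, ?_⟩
  · -- nonnegativity of the coefficients
    intro β
    have hcoeff : q.coeff β = ∑ α ∈ f.support,
        (if α ≤ β then f.coeff α * MvPolynomial.coeff (β - α) (S ^ (t - ∑ i, α i)) else 0) := by
      rw [hqdef, MvPolynomial.coeff_sum]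
      exact Finset.sum_congr rfl fun α _ => MvPolynomial.coeff_monomial_mul' _ _ _ _
    by_cases hβ : ∑ i, β i = t
    · -- main case: total degree of β matches t
      have hβt : ∀ i, β i ≤ t := by
        intro i
        rw [← hβ]
        exact Finset.single_le_sum (f := fun j => β j) (fun j _ => Nat.zero_le _)
          (Finset.mem_univ i)
      set pβ : Fin k → ℝ := fun i => (β i : ℝ) / t with hpβdef
      have hpβ0 : ∀ i, 0 ≤ pβ i := fun i => by positivity
      have hpβ1 : ∑ i, pβ i = 1 := by
        rw [hpβdef, ← Finset.sum_div]
        rw [show (∑ i, ((β i : ℝ))) = (t : ℝ) by exact_mod_cast congrArg (Nat.cast : ℕ → ℝ) hβ]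
        field_simp
      -- the normalized weights W and their estimates
      have hW : ∀ α ∈ f.support,
          |(∏ i, (Nat.descFactorial (β i) (α i) : ℝ)) /
              (Nat.descFactorial t (∑ i, α i) : ℝ) - ∏ i, pβ i ^ α i|
            ≤ 4 * ((d : ℝ) ^ 2 / t) := by
        intro α hα
        set m : ℕ := ∑ i, α i with hmdef
        have hm : m ≤ d := hdeg α hα
        have hαi : ∀ i, α i ≤ d := fun i => le_trans
          (Finset.single_le_sum (f := fun j => α j) (fun j _ => Nat.zero_le _)
            (Finset.mem_univ i)) hm
        have hU := desc_prod_estimate Finset.univ t d htpos hdt (fun i => β i) (fun i => α i)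
          (fun i _ => hβt i) (fun i _ => hαi i) hm
        have hD' := desc_prod_estimate (Finset.univ : Finset Unit) t d htpos hdt
          (fun _ => t) (fun _ => m) (fun _ _ => le_refl t) (fun _ _ => hm) (by simpa using hm)
        simp only [Finset.univ_unique, Finset.sum_singleton, Finset.prod_singleton,
          div_self (ne_of_gt htRpos), one_pow] at hD'
        set e : ℝ := (d : ℝ) ^ 2 / t with hedef
        have he0 : 0 ≤ e := by positivity
        have hehalf : e < 1 / 2 := by
          rw [hedef, div_lt_iff₀ htRpos]
          nlinarith
        set N : ℝ := ∏ i, (Nat.descFactorial (β i) (α i) : ℝ) with hNdef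
        set Dm : ℝ := (Nat.descFactorial t m : ℝ) with hDmdef
        set P : ℝ := ∏ i, pβ i ^ α i with hPdef
        set U : ℝ := N / (t : ℝ) ^ m with hUdef
        set D : ℝ := Dm / (t : ℝ) ^ m with hDdefR
        have hUe : |U - P| ≤ e := hU
        have hDe : |D - 1| ≤ e := hD'
        have hDhalf : 1 / 2 ≤ D := by
          have := (abs_le.1 hDe).1
          linarith
        have hP1 : |P| ≤ 1 := by
          rw [hPdef, abs_of_nonneg (Finset.prod_nonneg fun i _ => pow_nonneg (hpβ0 i) _)]
          refine Finset.prod_le_one (fun i _ => pow_nonneg (hpβ0 i) _) (fun i _ => ?_)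
          refine pow_le_one₀ (hpβ0 i) ?_
          rw [hpβdef]
          rw [div_le_one htRpos]
          exact_mod_cast hβt i
        have hDm0 : Dm ≠ 0 := by
          rw [hDmdef]
          have : ¬ (t < m) := not_lt.2 (le_trans hm hdt)
          exact_mod_cast fun hc => this (Nat.descFactorial_eq_zero_iff_lt.1 (by exact_mod_cast hc))
        set W : ℝ := N / Dm with hWdef
        have hWD : W * D = U := by
          rw [hWdef, hDdefR, hUdef]
          field_simp
        have hprod : (W - P) * D = (U - P) - P * (D - 1) := by
          rw [sub_mul, hWD]; ring
        have hPD : |P * (D - 1)| ≤ e := by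
          rw [abs_mul]
          calc |P| * |D - 1| ≤ 1 * e := mul_le_mul hP1 hDe (abs_nonneg _) zero_le_one
            _ = e := one_mul e
        have hup : (W - P) * D ≤ 2 * e := by
          have h1 := (abs_le.1 hUe).2
          have h2 := (abs_le.1 hPD).1
          linarith [hprod]
        have hlo : -(2 * e) ≤ (W - P) * D := by
          have h1 := (abs_le.1 hUe).1
          have h2 := (abs_le.1 hPD).2
          linarith [hprod]
        rw [abs_le]
        constructor
        · rcases le_or_gt 0 (W - P) with hc | hc
          · linarith
          · have : (W - P) * D ≤ (W - P) * (1 / 2) :=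
              mul_le_mul_of_nonpos_left hDhalf (le_of_lt hc)
            linarith
        · rcases le_or_gt (W - P) 0 with hc | hc
          · linarith
          · have : (W - P) * (1 / 2) ≤ (W - P) * D :=
              mul_le_mul_of_nonneg_left hDhalf (le_of_lt hc)
            linarith
      -- the weighted sum is close to eval pβ f, hence positive
      set G : ℝ := ∑ α ∈ f.support, f.coeff α *
          ((∏ i, (Nat.descFactorial (β i) (α i) : ℝ)) /
            (Nat.descFactorial t (∑ i, α i) : ℝ)) with hGdef
      have hGP : |G - MvPolynomial.eval pβ f| ≤ A * (4 * ((d : ℝ) ^ 2 / t)) := by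
        rw [MvPolynomial.eval_eq', hGdef, ← Finset.sum_sub_distrib]
        refine le_trans (Finset.abs_sum_le_sum_abs _ _) ?_
        rw [hAdef, Finset.sum_mul]
        refine Finset.sum_le_sum fun α hα => ?_
        rw [← mul_sub, abs_mul]
        exact mul_le_mul_of_nonneg_left (hW α hα) (abs_nonneg _)
      have hεA : A * (4 * ((d : ℝ) ^ 2 / t)) < ε := by
        have h1 : A * (4 * (d : ℝ) ^ 2) < t * ε := by
          have := (div_lt_iff₀ hε).1 htA
          linarith
        rw [show A * (4 * ((d : ℝ) ^ 2 / t)) = A * (4 * (d : ℝ) ^ 2) / t by ring,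
          div_lt_iff₀ htRpos]
        nlinarith
      have hG : 0 < G := by
        have hev : ε ≤ MvPolynomial.eval pβ f := hlow pβ hpβ0 hpβ1
        have := (abs_le.1 hGP).1
        linarith
      -- key identity: coeff β q * ∏ (β i)! = t! * G
      have hB : (0 : ℝ) < ∏ i, ((β i).factorial : ℝ) :=
        Finset.prod_pos fun i _ => by exact_mod_cast (β i).factorial_pos
      have hkey : q.coeff β * ∏ i, ((β i).factorial : ℝ) = (t.factorial : ℝ) * G := by
        rw [hcoeff, Finset.sum_mul, hGdef, Finset.mul_sum]
        refine Finset.sum_congr rfl fun α hα => ?_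
        set m : ℕ := ∑ i, α i with hmdef
        have hm : m ≤ d := hdeg α hα
        by_cases h : α ≤ β
        · rw [if_pos h]
          have hsum' : ∑ i, (β - α) i + m = t := by
            rw [hmdef, ← Finset.sum_add_distrib]
            rw [← hβ]
            exact Finset.sum_congr rfl fun i _ => by
              rw [Finsupp.tsub_apply]
              exact Nat.sub_add_cancel (Finsupp.le_def.1 h i)
          have hsum'' : ∑ i, (β - α) i = t - m := by omega
          rw [hSdef, coeff_S_pow, if_pos hsum'']
          have hmd := multinomial_mul_prod_factorial α β h
          rw [hsum''] at hmd
          have hmdR : (Nat.multinomial Finset.univ ⇑(β - α) : ℝ) *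
              ∏ i, ((β i).factorial : ℝ) =
              ((t - m).factorial : ℝ) * ∏ i, (Nat.descFactorial (β i) (α i) : ℝ) := by
            exact_mod_cast congrArg (Nat.cast : ℕ → ℝ) hmd
          have hfd : ((t - m).factorial : ℝ) * (Nat.descFactorial t m : ℝ)
              = (t.factorial : ℝ) := by
            exact_mod_cast Nat.factorial_mul_descFactorial (le_trans hm hdt)
          have hDm0 : (Nat.descFactorial t m : ℝ) ≠ 0 := by
            have : ¬ (t < m) := not_lt.2 (le_trans hm hdt)
            exact_mod_cast
              fun hc => this (Nat.descFactorial_eq_zero_iff_lt.1 (by exact_mod_cast hc))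
          calc f.coeff α * (Nat.multinomial Finset.univ ⇑(β - α) : ℝ) *
                ∏ i, ((β i).factorial : ℝ)
              = f.coeff α * ((Nat.multinomial Finset.univ ⇑(β - α) : ℝ) *
                ∏ i, ((β i).factorial : ℝ)) := by ring
            _ = f.coeff α * (((t - m).factorial : ℝ) *
                ∏ i, (Nat.descFactorial (β i) (α i) : ℝ)) := by rw [hmdR]
            _ = (t.factorial : ℝ) * (f.coeff α *
                ((∏ i, (Nat.descFactorial (β i) (α i) : ℝ)) /
                  (Nat.descFactorial t m : ℝ))) := by
                rw [← hfd]
                field_simp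
        · rw [if_neg h]
          obtain ⟨i, hi⟩ : ∃ i, β i < α i := by
            by_contra hc
            push_neg at hc
            exact h (Finsupp.le_def.2 fun i => hc i)
          have : (∏ i, (Nat.descFactorial (β i) (α i) : ℝ)) = 0 := by
            refine Finset.prod_eq_zero (Finset.mem_univ i) ?_
            exact_mod_cast congrArg (Nat.cast : ℕ → ℝ)
              (Nat.descFactorial_eq_zero_iff_lt.2 hi)
          rw [this]
          simp
      -- conclude
      have htf : (0 : ℝ) < (t.factorial : ℝ) := by exact_mod_cast t.factorial_pos
      have hpos : 0 < q.coeff β * ∏ i, ((β i).factorial : ℝ) := by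
        rw [hkey]; exact mul_pos htf hG
      by_contra hc
      push_neg at hc
      have : q.coeff β * ∏ i, ((β i).factorial : ℝ) < 0 := mul_neg_of_neg_of_pos hc hB
      linarith
    · -- degree mismatch: the coefficient vanishes
      rw [hcoeff]
      refine le_of_eq (Finset.sum_eq_zero fun α hα => ?_).symm
      split_ifs with h
      · rw [hSdef, coeff_S_pow, if_neg, mul_zero]
        intro habs
        apply hβ
        have hsum' : ∑ i, (β - α) i + ∑ i, α i = ∑ i, β i := by
          rw [← Finset.sum_add_distrib]
          exact Finset.sum_congr rfl fun i _ => by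
            rw [Finsupp.tsub_apply]
            exact Nat.sub_add_cancel (Finsupp.le_def.1 h i)
        have hαd : ∑ i, α i ≤ d := hdeg α hα
        omega
      · rfl
  · -- agreement on the simplex
    intro p hp hsum
    have hSp : MvPolynomial.eval p S = 1 := by
      rw [hSdef, map_sum]
      simpa using hsum
    have hterm : ∀ α ∈ f.support,
        MvPolynomial.eval p (MvPolynomial.monomial α (f.coeff α) * S ^ (t - ∑ i, α i))
          = f.coeff α * ∏ i, p i ^ α i := by
      intro α _
      rw [map_mul, map_pow, hSp, one_pow, mul_one, MvPolynomial.eval_monomial]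
      congr 1
      exact Finsupp.prod_fintype _ _ (fun i => pow_zero _)
    rw [hqdef, map_sum, Finset.sum_congr rfl hterm]
    exact MvPolynomial.eval_eq' p f
end

section
/- Let A be a finite set with |A| = 2 and F : Δ(A) → Δ(A). Then there exist N ∈ ℕ and g : A^N → Δ(A) such that F arises from N action samples via g, if and only if F is a polynomial and at least one of the following holds: (a) for every π in the interior of Δ(A) (i.e. π(a) > 0 for both a ∈ A), F(π) lies in the interior of Δ(A); or (b) F is constant on Δ(A), equal to the point mass at one of the two elements of A. -/
open Filter Asymptotics Topology

open Finset Polynomial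


private lemma abs_prod_sub_prod_le {ι : Type*} (s : Finset ι) (f g : ι → ℝ)
    (hf : ∀ t ∈ s, 0 ≤ f t ∧ f t ≤ 1) (hg : ∀ t ∈ s, 0 ≤ g t ∧ g t ≤ 1) :
    |∏ t ∈ s, f t - ∏ t ∈ s, g t| ≤ ∑ t ∈ s, |f t - g t| := by
  induction s using Finset.cons_induction with
  | empty => simp
  | cons a s ha ih =>
    rw [prod_cons, prod_cons, sum_cons]
    have hfa := hf a (mem_cons_self a s)
    have hga := hg a (mem_cons_self a s)
    have hf' : ∀ t ∈ s, 0 ≤ f t ∧ f t ≤ 1 := fun t ht => hf t (mem_cons_of_mem ht)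
    have hg' : ∀ t ∈ s, 0 ≤ g t ∧ g t ≤ 1 := fun t ht => hg t (mem_cons_of_mem ht)
    have ihs := ih hf' hg'
    have hpg0 : 0 ≤ ∏ t ∈ s, g t := prod_nonneg fun t ht => (hg' t ht).1
    have hpg1 : ∏ t ∈ s, g t ≤ 1 := prod_le_one (fun t ht => (hg' t ht).1) (fun t ht => (hg' t ht).2)
    have key : f a * ∏ t ∈ s, f t - g a * ∏ t ∈ s, g t
        = f a * (∏ t ∈ s, f t - ∏ t ∈ s, g t) + (f a - g a) * ∏ t ∈ s, g t := by ring
    rw [key]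
    calc |f a * (∏ t ∈ s, f t - ∏ t ∈ s, g t) + (f a - g a) * ∏ t ∈ s, g t|
        ≤ |f a * (∏ t ∈ s, f t - ∏ t ∈ s, g t)| + |(f a - g a) * ∏ t ∈ s, g t| := abs_add_le _ _
      _ = |f a| * |∏ t ∈ s, f t - ∏ t ∈ s, g t| + |f a - g a| * |∏ t ∈ s, g t| := by
          rw [abs_mul, abs_mul]
      _ ≤ 1 * (∑ t ∈ s, |f t - g t|) + |f a - g a| * 1 := by
          have b1 : |f a| ≤ 1 := abs_le.mpr ⟨by linarith [hfa.1], hfa.2⟩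
          have b2 : |∏ t ∈ s, g t| ≤ 1 := abs_le.mpr ⟨by linarith, hpg1⟩
          exact add_le_add (mul_le_mul b1 ihs (abs_nonneg _) zero_le_one)
            (mul_le_mul_of_nonneg_left b2 (abs_nonneg _))
      _ = |f a - g a| + ∑ t ∈ s, |f t - g t| := by ring

private lemma choose_ratio' (j n : ℕ) (hjn : j ≤ n) :
    ∀ i, i ≤ j → (n.choose j : ℝ) * ∏ t ∈ range i, ((j:ℝ) - t)
      = ((n-i).choose (j-i) : ℝ) * ∏ t ∈ range i, ((n:ℝ) - t) := by
  intro i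
  induction i with
  | zero => simp
  | succ i ih =>
    intro hij
    have hij' : i ≤ j := Nat.le_of_succ_le hij
    rw [prod_range_succ, prod_range_succ, ← mul_assoc, ih hij']
    have h1 : i < j := hij
    have h2 : i < n := lt_of_lt_of_le h1 hjn
    -- Nat identity: (n-i).choose (j-i) * (j-i) = (n-i-1).choose (j-i-1) * (n-i)
    have key : (n-i).choose (j-i) * (j-i) = (n-(i+1)).choose (j-(i+1)) * (n-i) := by
      have h3 : 1 ≤ j - i := by omega
      have h4 : 1 ≤ n - i := by omega
      have := Nat.add_one_mul_choose_eq (n - i - 1) (j - i - 1)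
      have e1 : (n - i - 1) + 1 = n - i := by omega
      have e2 : (j - i - 1) + 1 = j - i := by omega
      rw [e1, e2] at this
      have e3 : n - (i+1) = n - i - 1 := by omega
      have e4 : j - (i+1) = j - i - 1 := by omega
      rw [e3, e4, ← this]
      ring
    have keyR : ((n-i).choose (j-i) : ℝ) * ((j:ℝ) - i) = ((n-(i+1)).choose (j-(i+1)) : ℝ) * ((n:ℝ) - i) := by
      have hji : ((j:ℝ) - i) = ((j - i : ℕ) : ℝ) := by
        push_cast [Nat.cast_sub hij'] ; ring
      have hni : ((n:ℝ) - i) = ((n - i : ℕ) : ℝ) := by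
        push_cast [Nat.cast_sub (le_of_lt h2)] ; ring
      rw [hji, hni, ← Nat.cast_mul, ← Nat.cast_mul, key]
    linear_combination (∏ t ∈ range i, ((n:ℝ) - ↑t)) * keyR

private lemma choose_ratio_div (i j n : ℕ) (hij : i ≤ j) (hjn : j ≤ n)
    (key : (n.choose j : ℝ) * ∏ t ∈ range i, ((j:ℝ) - t)
      = ((n-i).choose (j-i) : ℝ) * ∏ t ∈ range i, ((n:ℝ) - t)) :
    ((n-i).choose (j-i) : ℝ) = (n.choose j : ℝ) * ∏ t ∈ range i, (((j:ℝ) - t) / ((n:ℝ) - t)) := by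
  have hpos : ∀ t ∈ range i, (0:ℝ) < (n:ℝ) - t := by
    intro t ht
    have h1 : t < i := mem_range.mp ht
    have h2 : t < n := by omega
    have h3 : (t:ℝ) < n := by exact_mod_cast h2
    linarith
  have hne : (∏ t ∈ range i, ((n:ℝ) - t)) ≠ 0 := ne_of_gt (prod_pos hpos)
  rw [prod_div_distrib, ← mul_div_assoc, eq_div_iff hne, key]

private lemma ratio_est (d n j : ℕ) (hn : 2*d < n) (hjn : j ≤ n) (i : ℕ) (hid : i ≤ d) :
    |(∏ t ∈ range i, (((j:ℝ) - t) / ((n:ℝ) - t))) - ((j:ℝ)/n)^i| ≤ 2*(d:ℝ)^2/n := by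
  have hn0 : (0:ℝ) < n := by
    have : 0 < n := by omega
    exact_mod_cast this
  have hjn' : (j:ℝ) ≤ n := by exact_mod_cast hjn
  have hj0 : (0:ℝ) ≤ j := Nat.cast_nonneg j
  have hdn : (d:ℝ) ≤ n := by
    have : d ≤ n := by omega
    exact_mod_cast this
  have hfrac0 : (0:ℝ) ≤ (j:ℝ)/n := by positivity
  have hfrac1 : (j:ℝ)/n ≤ 1 := by rw [div_le_one hn0]; linarith
  rcases lt_or_ge j i with hji | hij
  · -- product is zero
    have hz : (∏ t ∈ range i, (((j:ℝ) - t) / ((n:ℝ) - t))) = 0 := by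
      apply prod_eq_zero (mem_range.mpr hji); simp
    rw [hz, abs_sub_comm, sub_zero, abs_of_nonneg (by positivity)]
    have hi1 : 1 ≤ i := by omega
    have hjd : (j:ℝ) ≤ (d:ℝ) := by
      have : j ≤ d := by omega
      exact_mod_cast this
    have hd1 : (1:ℝ) ≤ d := by
      have : 1 ≤ d := by omega
      exact_mod_cast this
    calc ((j:ℝ)/n)^i ≤ ((j:ℝ)/n)^1 := pow_le_pow_of_le_one hfrac0 hfrac1 hi1
      _ = (j:ℝ)/n := pow_one _
      _ ≤ 2*(d:ℝ)^2/n := by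
          gcongr
          nlinarith
  · -- main case
    have hbounds : ∀ t ∈ range i, (0:ℝ) ≤ ((j:ℝ) - t) / ((n:ℝ) - t)
        ∧ ((j:ℝ) - t) / ((n:ℝ) - t) ≤ 1 := by
      intro t ht
      have h1 : t < i := mem_range.mp ht
      have htj : (t:ℝ) < j := by
        have : t < j := by omega
        exact_mod_cast this
      have htn : (t:ℝ) < n := by
        have : t < n := by omega
        exact_mod_cast this
      constructor
      · apply div_nonneg <;> linarith
      · rw [div_le_one (by linarith)]; linarith
    have hgb : ∀ t ∈ range i, (0:ℝ) ≤ (j:ℝ)/n ∧ (j:ℝ)/n ≤ 1 :=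
      fun t _ => ⟨hfrac0, hfrac1⟩
    have hconst : ((j:ℝ)/n)^i = ∏ _t ∈ range i, ((j:ℝ)/n) := by
      rw [prod_const, card_range]
    rw [hconst]
    calc |(∏ t ∈ range i, (((j:ℝ) - t) / ((n:ℝ) - t))) - ∏ _t ∈ range i, ((j:ℝ)/n)|
        ≤ ∑ t ∈ range i, |((j:ℝ) - t) / ((n:ℝ) - t) - (j:ℝ)/n| :=
          abs_prod_sub_prod_le _ _ _ hbounds hgb
      _ ≤ ∑ _t ∈ range i, 2*(d:ℝ)/n := by
          apply sum_le_sum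
          intro t ht
          have h1 : t < i := mem_range.mp ht
          have htj : (t:ℝ) ≤ j := by
            have : t ≤ j := by omega
            exact_mod_cast this
          have htd : (t:ℝ) < d := by
            have : t < d := by omega
            exact_mod_cast this
          have htn : (0:ℝ) < (n:ℝ) - t := by linarith
          have hle : ((j:ℝ) - t) / ((n:ℝ) - t) ≤ (j:ℝ)/n := by
            rw [div_le_div_iff₀ htn hn0]; nlinarith
          rw [abs_sub_comm, abs_of_nonneg (sub_nonneg.mpr hle),
            div_sub_div _ _ (ne_of_gt hn0) (ne_of_gt htn), div_le_div_iff₀ (by positivity) hn0]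
          have hdn2 : 2*(d:ℝ) < n := by
            calc 2*(d:ℝ) = ((2*d : ℕ) : ℝ) := by push_cast; ring
              _ < n := by exact_mod_cast hn
          have ht0 : (0:ℝ) ≤ t := Nat.cast_nonneg t
          have ha : (t:ℝ)*((n:ℝ)-j) ≤ (t:ℝ)*n := by nlinarith
          have hb : (t:ℝ)*n ≤ 2*(d:ℝ)*((n:ℝ)-t) := by nlinarith
          have hc : ((t:ℝ)*((n:ℝ)-j))*n ≤ (2*(d:ℝ)*((n:ℝ)-t))*n :=
            mul_le_mul_of_nonneg_right (ha.trans hb) hn0.le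
          nlinarith [hc]
      _ = i * (2*(d:ℝ)/n) := by rw [sum_const, card_range, nsmul_eq_mul]
      _ ≤ 2*(d:ℝ)^2/n := by
          have hid' : (i:ℝ) ≤ d := by exact_mod_cast hid
          have h2d : (0:ℝ) ≤ 2*(d:ℝ)/n := by positivity
          calc (i:ℝ) * (2*(d:ℝ)/n) ≤ (d:ℝ) * (2*(d:ℝ)/n) :=
                mul_le_mul_of_nonneg_right hid' h2d
            _ = 2*(d:ℝ)^2/n := by ring


private lemma expand_rep (p : Polynomial ℝ) (n : ℕ) (hn : p.natDegree ≤ n) (x : ℝ) :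
    p.eval x = ∑ j ∈ range (n+1),
      (∑ i ∈ range (p.natDegree+1),
        p.coeff i * (if i ≤ j then (((n-i).choose (j-i) : ℕ) : ℝ) else 0))
        * x^j * (1-x)^(n-j) := by
  have hRHS : ∀ j, (∑ i ∈ range (p.natDegree+1),
        p.coeff i * (if i ≤ j then (((n-i).choose (j-i) : ℕ) : ℝ) else 0)) * x^j * (1-x)^(n-j)
      = ∑ i ∈ range (p.natDegree+1),
        p.coeff i * (if i ≤ j then (((n-i).choose (j-i) : ℕ) : ℝ) else 0) * x^j * (1-x)^(n-j) := by
    intro j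
    rw [sum_mul, sum_mul]
  simp_rw [hRHS]
  rw [Finset.sum_comm, eval_eq_sum_range]
  apply sum_congr rfl
  intro i hi
  have hin : i ≤ n := le_trans (Nat.lt_succ_iff.mp (mem_range.mp hi)) hn
  have h1 : p.coeff i * x^i = p.coeff i * x^i * (x + (1-x))^(n-i) := by
    have : x + (1-x) = 1 := by ring
    rw [this, one_pow, mul_one]
  rw [h1, add_pow, mul_sum]
  have hL : ∀ k ∈ range (n-i+1),
      p.coeff i * x^i * (x^k * (1-x)^(n-i-k) * ((n-i).choose k : ℝ))
        = p.coeff i * (if i ≤ i+k then (((n-i).choose ((i+k)-i) : ℕ) : ℝ) else 0)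
          * x^(i+k) * (1-x)^(n-(i+k)) := by
    intro k hk
    rw [if_pos (Nat.le_add_right i k), Nat.add_sub_cancel_left, pow_add]
    have : n - (i+k) = n - i - k := by omega
    rw [this]; ring
  rw [sum_congr rfl hL]
  have hsub : Ico i (n+1) ⊆ range (n+1) := by
    intro j hj
    rw [mem_range]; rw [mem_Ico] at hj; omega
  have hz : ∀ j ∈ range (n+1), j ∉ Ico i (n+1) →
      p.coeff i * (if i ≤ j then (((n-i).choose (j-i) : ℕ) : ℝ) else 0) * x^j * (1-x)^(n-j) = 0 := by
    intro j hj hj2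
    rw [mem_range] at hj; rw [mem_Ico] at hj2
    have : ¬ i ≤ j := by omega
    rw [if_neg this, mul_zero, zero_mul, zero_mul]
  rw [← sum_subset hsub hz, sum_Ico_eq_sum_range]
  have : n + 1 - i = n - i + 1 := by omega
  rw [this]


private lemma core_pos_rep (p : Polynomial ℝ) (hpos : ∀ x ∈ Set.Icc (0:ℝ) 1, 0 < p.eval x) :
    ∃ (n : ℕ) (e : ℕ → ℝ), (∀ j, 0 ≤ e j) ∧ ∀ x:ℝ, p.eval x = ∑ j ∈ range (n+1), e j * x^j * (1-x)^(n-j) := by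
  set d := p.natDegree with hd
  -- minimum of p on [0,1]
  obtain ⟨x₀, hx₀, hmin⟩ := isCompact_Icc.exists_isMinOn (Set.nonempty_Icc.mpr zero_le_one)
    (p.continuous.continuousOn (s := Set.Icc (0:ℝ) 1))
  set ε := p.eval x₀ with hε
  have hε0 : 0 < ε := hpos x₀ hx₀
  set K := (∑ i ∈ range (d+1), |p.coeff i|) * (2*(d:ℝ)^2) with hK
  have hK0 : 0 ≤ K := by positivity
  obtain ⟨n, hn⟩ := exists_nat_gt (max (2*(d:ℝ)) (K/ε))
  have hn2d : 2*d < n := by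
    have h := lt_of_le_of_lt (le_max_left _ _) hn
    have : ((2*d : ℕ):ℝ) < n := by push_cast; push_cast at h; linarith
    exact_mod_cast this
  have hdn : d ≤ n := by omega
  have hn0 : (0:ℝ) < n := by
    have : 0 < n := by omega
    exact_mod_cast this
  have hKn : K/n < ε := by
    have h := lt_of_le_of_lt (le_max_right _ _) hn
    rw [div_lt_iff₀ hn0]
    calc K = (K/ε) * ε := by field_simp
      _ < n * ε := by apply mul_lt_mul_of_pos_right h hε0
      _ = ε * n := by ring
  set ebig : ℕ → ℝ := fun j => ∑ i ∈ range (d+1),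
    p.coeff i * (if i ≤ j then (((n-i).choose (j-i) : ℕ) : ℝ) else 0) with hebig
  have hkey : ∀ j ≤ n, ebig j = (n.choose j : ℝ) *
      ∑ i ∈ range (d+1), p.coeff i * ∏ t ∈ range i, (((j:ℝ) - t) / ((n:ℝ) - t)) := by
    intro j hjn
    rw [hebig, mul_sum]
    apply sum_congr rfl
    intro i _
    rcases le_or_gt i j with hij | hji
    · rw [if_pos hij, choose_ratio_div i j n hij hjn (choose_ratio' j n hjn i hij)]
      ring
    · rw [if_neg (by omega)]
      have hz : (∏ t ∈ range i, (((j:ℝ) - t) / ((n:ℝ) - t))) = 0 := by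
        apply prod_eq_zero (mem_range.mpr hji); simp
      rw [hz]; ring
  have hclose : ∀ j ≤ n,
      |(∑ i ∈ range (d+1), p.coeff i * ∏ t ∈ range i, (((j:ℝ) - t) / ((n:ℝ) - t)))
        - p.eval ((j:ℝ)/n)| ≤ K/n := by
    intro j hjn
    rw [eval_eq_sum_range, ← hd, ← sum_sub_distrib]
    calc |∑ i ∈ range (d+1), (p.coeff i * ∏ t ∈ range i, (((j:ℝ) - t) / ((n:ℝ) - t))
            - p.coeff i * ((j:ℝ)/n)^i)|
        ≤ ∑ i ∈ range (d+1), |p.coeff i * ∏ t ∈ range i, (((j:ℝ) - t) / ((n:ℝ) - t))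
            - p.coeff i * ((j:ℝ)/n)^i| := abs_sum_le_sum_abs _ _
      _ ≤ ∑ i ∈ range (d+1), |p.coeff i| * (2*(d:ℝ)^2/n) := by
          apply sum_le_sum
          intro i hi
          rw [← mul_sub, abs_mul]
          exact mul_le_mul_of_nonneg_left
            (ratio_est d n j hn2d hjn i (Nat.lt_succ_iff.mp (mem_range.mp hi))) (abs_nonneg _)
      _ = K/n := by rw [← sum_mul, hK]; ring
  have hebig_nonneg : ∀ j ≤ n, 0 ≤ ebig j := by
    intro j hjn
    rw [hkey j hjn]
    apply mul_nonneg (Nat.cast_nonneg _)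
    have hmem : (j:ℝ)/n ∈ Set.Icc (0:ℝ) 1 := by
      constructor
      · positivity
      · rw [div_le_one hn0]; exact_mod_cast hjn
    have h1 : ε ≤ p.eval ((j:ℝ)/n) := hmin hmem
    have h2 := hclose j hjn
    have h3 := abs_sub_le_iff.mp h2
    linarith [h3.1, h3.2]
  refine ⟨n, fun j => if j ≤ n then ebig j else 0, ?_, ?_⟩
  · intro j
    dsimp only
    by_cases h : j ≤ n
    · rw [if_pos h]; exact hebig_nonneg j h
    · rw [if_neg h]
  · intro x
    rw [expand_rep p n hdn x]
    apply sum_congr rfl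
    intro j hj
    dsimp only
    rw [if_pos (Nat.lt_succ_iff.mp (mem_range.mp hj))]


private lemma factor_endpoints (p : Polynomial ℝ) (hp : p ≠ 0) :
    ∃ (a b : ℕ) (q : Polynomial ℝ), (∀ x:ℝ, p.eval x = x^a * (1-x)^b * q.eval x)
      ∧ q.eval 0 ≠ 0 ∧ q.eval 1 ≠ 0 := by
  obtain ⟨q1, h1, hnd1⟩ := p.exists_eq_pow_rootMultiplicity_mul_and_not_dvd hp 0
  have hq1 : q1 ≠ 0 := by
    intro h; rw [h, mul_zero] at h1; exact hp h1
  obtain ⟨q2, h2, hnd2⟩ := q1.exists_eq_pow_rootMultiplicity_mul_and_not_dvd hq1 1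
  set a := p.rootMultiplicity 0
  set b := q1.rootMultiplicity 1
  have hq10 : q1.eval 0 ≠ 0 := by
    intro h
    exact hnd1 (by simpa using (dvd_iff_isRoot (p := q1) (a := 0)).mpr h)
  have hq21 : q2.eval 1 ≠ 0 := by
    intro h
    exact hnd2 ((dvd_iff_isRoot (p := q2) (a := 1)).mpr h)
  have hq20 : q2.eval 0 ≠ 0 := by
    intro h
    apply hq10
    rw [h2]
    simp [h]
  refine ⟨a, b, Polynomial.C ((-1:ℝ)^b) * q2, ?_, ?_, ?_⟩
  · intro x
    rw [h1, h2]
    simp only [eval_mul, eval_pow, eval_sub, eval_X, eval_C, sub_zero]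
    rw [show x - 1 = (-1 : ℝ) * (1 - x) by ring, mul_pow]
    ring
  · simp [hq20]
  · simp [hq21]

private lemma exists_nonneg_rep (p : Polynomial ℝ)
    (h0 : ∀ x ∈ Set.Icc (0:ℝ) 1, 0 ≤ p.eval x)
    (h1 : ∀ x ∈ Set.Ioo (0:ℝ) 1, 0 < p.eval x) :
    ∃ (N : ℕ) (e : ℕ → ℝ), (∀ j, 0 ≤ e j) ∧
      ∀ x:ℝ, p.eval x = ∑ j ∈ range (N+1), e j * x^j * (1-x)^(N-j) := by
  have hp : p ≠ 0 := by
    intro h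
    have := h1 (1/2) (by norm_num)
    rw [h] at this; simp at this
  obtain ⟨a, b, q, hfac, hq0, hq1⟩ := factor_endpoints p hp
  -- q is positive on (0,1)
  have hqpos : ∀ x ∈ Set.Ioo (0:ℝ) 1, 0 < q.eval x := by
    intro x hx
    have hpx := h1 x hx
    rw [hfac x] at hpx
    have hx1 : (0:ℝ) < x := hx.1
    have hx2 : (0:ℝ) < 1 - x := by linarith [hx.2]
    have ht : (0:ℝ) < x^a * (1-x)^b := by positivity
    nlinarith [mul_pos_iff.mp hpx]
  have hclosed : IsClosed {x : ℝ | 0 ≤ q.eval x} :=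
    isClosed_le continuous_const q.continuous
  have hsubs : Set.Ioo (0:ℝ) 1 ⊆ {x : ℝ | 0 ≤ q.eval x} := fun x hx => (hqpos x hx).le
  have hql : ∀ c ∈ Set.Icc (0:ℝ) 1, 0 ≤ q.eval c := by
    intro c hc
    rw [← closure_Ioo (zero_ne_one' ℝ)] at hc
    exact hclosed.closure_subset_iff.mpr hsubs hc
  have hqpos' : ∀ c ∈ Set.Icc (0:ℝ) 1, 0 < q.eval c := by
    intro c hc
    rcases eq_or_lt_of_le hc.1 with h|h
    · exact lt_of_le_of_ne (hql c hc) (by rw [← h]; exact Ne.symm hq0)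
    · rcases eq_or_lt_of_le hc.2 with h'|h'
      · exact lt_of_le_of_ne (hql c hc) (by rw [h']; exact Ne.symm hq1)
      · exact hqpos c ⟨h, h'⟩
  obtain ⟨n, e, he, hrep⟩ := core_pos_rep q hqpos'
  refine ⟨n + a + b, fun j => if a ≤ j ∧ j ≤ n + a then e (j - a) else 0, ?_, ?_⟩
  · intro j
    dsimp only
    by_cases h : a ≤ j ∧ j ≤ n + a
    · rw [if_pos h]; exact he _
    · rw [if_neg h]
  · intro x
    rw [hfac x, hrep x, mul_sum]
    have hsub : Ico a (a+n+1) ⊆ range (n+a+b+1) := by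
      intro j hj; rw [mem_range]; rw [mem_Ico] at hj; omega
    have hz : ∀ j ∈ range (n+a+b+1), j ∉ Ico a (a+n+1) →
        (if a ≤ j ∧ j ≤ n + a then e (j - a) else 0) * x^j * (1-x)^(n+a+b-j) = 0 := by
      intro j hj hj2
      rw [mem_range] at hj; rw [mem_Ico] at hj2
      rw [if_neg (by omega), zero_mul, zero_mul]
    rw [← sum_subset hsub hz, sum_Ico_eq_sum_range]
    have h1 : a + n + 1 - a = n + 1 := by omega
    rw [h1]
    apply sum_congr rfl
    intro k hk
    rw [mem_range] at hk
    have hk' : k ≤ n := by omega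
    rw [if_pos ⟨by omega, by omega⟩]
    have e1 : a + k - a = k := by omega
    have e2 : n + a + b - (a + k) = b + (n - k) := by omega
    rw [e1, e2, pow_add, pow_add]
    ring


private lemma rep_elevate_one (N : ℕ) (e : ℕ → ℝ) (he : ∀ j, 0 ≤ e j) :
    ∃ e' : ℕ → ℝ, (∀ j, 0 ≤ e' j) ∧ ∀ x : ℝ,
      ∑ j ∈ range (N+2), e' j * x^j * (1-x)^(N+1-j)
        = ∑ j ∈ range (N+1), e j * x^j * (1-x)^(N-j) := by
  set et : ℕ → ℝ := fun j => if j ≤ N then e j else 0 with het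
  refine ⟨fun j => match j with
    | 0 => e 0
    | (j+1) => et (j+1) + et j, ?_, ?_⟩
  · intro j
    match j with
    | 0 => exact he 0
    | (j+1) =>
      dsimp only
      apply add_nonneg <;> · rw [het]; dsimp only; split <;> simp [he]
  · intro x
    rw [Finset.sum_range_succ' _ (N+1)]
    dsimp only
    have hstep : ∀ j ∈ range (N+1), (et (j+1) + et j) * x^(j+1) * (1-x)^(N+1-(j+1))
        = et (j+1) * x^(j+1) * (1-x)^(N-j) + e j * x^(j+1) * (1-x)^(N-j) := by
      intro j hj
      rw [mem_range] at hj
      have h1 : N + 1 - (j+1) = N - j := by omega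
      have h2 : et j = e j := if_pos (by omega)
      rw [h1, h2]; ring
    rw [sum_congr rfl hstep, sum_add_distrib]
    -- RHS: multiply by (x + (1-x)) = 1
    have hRHS : ∑ j ∈ range (N+1), e j * x^j * (1-x)^(N-j)
        = ∑ j ∈ range (N+1), e j * x^(j+1) * (1-x)^(N-j)
          + ∑ j ∈ range (N+1), e j * x^j * (1-x)^(N+1-j) := by
      rw [← sum_add_distrib]
      apply sum_congr rfl
      intro j hj
      rw [mem_range] at hj
      have h1 : N + 1 - j = (N - j) + 1 := by omega
      rw [h1, pow_succ, pow_succ]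
      ring
    rw [hRHS]
    have hfirst : ∑ j ∈ range (N+1), et (j+1) * x^(j+1) * (1-x)^(N-j) + e 0 * x^0 * (1-x)^(N+1-0)
        = ∑ j ∈ range (N+1), e j * x^j * (1-x)^(N+1-j) := by
      rw [Finset.sum_range_succ' (fun j => e j * x^j * (1-x)^(N+1-j)) N]
      congr 1
      rw [Finset.sum_range_succ]
      have hzero : et (N+1) = 0 := if_neg (by omega)
      rw [hzero]
      simp only [zero_mul]
      rw [add_zero]
      apply sum_congr rfl
      intro j hj
      rw [mem_range] at hj
      have h2 : et (j+1) = e (j+1) := if_pos (by omega)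
      have h3 : N + 1 - (j+1) = N - j := by omega
      rw [h2, h3]
    linarith [hfirst]

private lemma rep_elevate (p : Polynomial ℝ) (N M : ℕ) (hNM : N ≤ M) (e : ℕ → ℝ)
    (he : ∀ j, 0 ≤ e j)
    (hrep : ∀ x:ℝ, p.eval x = ∑ j ∈ range (N+1), e j * x^j * (1-x)^(N-j)) :
    ∃ e' : ℕ → ℝ, (∀ j, 0 ≤ e' j) ∧
      ∀ x:ℝ, p.eval x = ∑ j ∈ range (M+1), e' j * x^j * (1-x)^(M-j) := by
  induction M, hNM using Nat.le_induction with
  | base => exact ⟨e, he, hrep⟩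
  | succ M hNM ih =>
    obtain ⟨e', he', hrep'⟩ := ih
    obtain ⟨e'', he'', hid⟩ := rep_elevate_one M e' he'
    exact ⟨e'', he'', fun x => by rw [hrep' x, ← hid x]⟩

private lemma rep_unique (N : ℕ) (g : ℕ → ℝ)
    (h : ∀ x:ℝ, ∑ j ∈ range (N+1), g j * x^j * (1-x)^(N-j) = 0) : ∀ j ≤ N, g j = 0 := by
  set q : Polynomial ℝ := ∑ j ∈ range (N+1), Polynomial.C (g j) * Polynomial.X ^ j with hq
  have hqeval : ∀ y : ℝ, 0 ≤ y → q.eval y = 0 := by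
    intro y hy
    have hy1 : (0:ℝ) < 1 + y := by linarith
    set x := y / (1 + y) with hx
    have hx1 : x * (1 + y) = y := div_mul_cancel₀ y (ne_of_gt hy1)
    have hx2 : (1 - x) * (1 + y) = 1 := by
      rw [hx]; field_simp; ring
    have key : ∀ j ∈ range (N+1), g j * x^j * (1-x)^(N-j) * (1+y)^N = g j * y^j := by
      intro j hj
      rw [mem_range] at hj
      have hsplit : (1+y)^N = (1+y)^j * (1+y)^(N-j) := by
        rw [← pow_add]
        congr 1
        omega
      calc g j * x^j * (1-x)^(N-j) * (1+y)^N
          = g j * ((x * (1+y))^j * ((1-x) * (1+y))^(N-j)) := by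
            rw [hsplit, mul_pow, mul_pow]; ring
        _ = g j * y^j := by rw [hx1, hx2, one_pow, mul_one]
    have hsum : q.eval y = ∑ j ∈ range (N+1), g j * y^j := by
      rw [hq]
      simp [Polynomial.eval_finset_sum]
    rw [hsum, ← sum_congr rfl key, ← sum_mul, h x, zero_mul]
  have hq0 : q = 0 := by
    apply Polynomial.eq_zero_of_infinite_isRoot
    apply Set.Infinite.mono (s := Set.Ici (0:ℝ))
    · intro y hy
      exact hqeval y hy
    · exact Set.Ici_infinite 0
  intro j hj
  have hcoeff : q.coeff j = g j := by
    rw [hq, Polynomial.finset_sum_coeff]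
    simp only [Polynomial.coeff_C_mul, Polynomial.coeff_X_pow]
    rw [Finset.sum_eq_single j]
    · simp
    · intro b _ hbj
      rw [if_neg (Ne.symm hbj), mul_zero]
    · intro hjmem
      exact absurd (mem_range.mpr (by omega)) hjmem
  rw [← hcoeff, hq0, Polynomial.coeff_zero]

private lemma binomial_one (N : ℕ) (x : ℝ) :
    ∑ j ∈ range (N+1), (N.choose j : ℝ) * x^j * (1-x)^(N-j) = 1 := by
  have h := add_pow x (1-x) N
  have h1 : x + (1-x) = 1 := by ring
  rw [h1, one_pow] at h
  conv_rhs => rw [h]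
  apply sum_congr rfl
  intro j _
  ring


private lemma bernstein_combo (P : Polynomial ℝ)
    (hmap : ∀ x ∈ Set.Icc (0:ℝ) 1, P.eval x ∈ Set.Icc (0:ℝ) 1)
    (hint : ∀ x ∈ Set.Ioo (0:ℝ) 1, P.eval x ∈ Set.Ioo (0:ℝ) 1) :
    ∃ (N : ℕ) (dd : ℕ → ℝ), (∀ j, 0 ≤ dd j ∧ dd j ≤ 1) ∧
      ∀ x:ℝ, P.eval x = ∑ j ∈ range (N+1), (N.choose j : ℝ) * dd j * x^j * (1-x)^(N-j) := by
  have hIcc01 : ∀ x : ℝ, x ∈ Set.Ioo (0:ℝ) 1 → x ∈ Set.Icc (0:ℝ) 1 :=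
    fun x hx => ⟨hx.1.le, hx.2.le⟩
  obtain ⟨N₁, e₁, he₁, hrep₁⟩ := exists_nonneg_rep P
    (fun x hx => (hmap x hx).1) (fun x hx => (hint x hx).1)
  obtain ⟨N₂, e₂, he₂, hrep₂⟩ := exists_nonneg_rep (1 - P)
    (by intro x hx; simp only [eval_sub, eval_one]; linarith [(hmap x hx).2])
    (by intro x hx; simp only [eval_sub, eval_one]; linarith [(hint x hx).2])
  set N := max N₁ N₂ with hN
  obtain ⟨e, he, hrep⟩ := rep_elevate P N₁ N (le_max_left _ _) e₁ he₁ hrep₁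
  obtain ⟨f, hf, hfrep⟩ := rep_elevate (1 - P) N₂ N (le_max_right _ _) e₂ he₂ hrep₂
  -- e j + f j = choose N j for j ≤ N
  have huniq : ∀ j ≤ N, e j + f j - (N.choose j : ℝ) = 0 := by
    apply rep_unique
    intro x
    have h1 : ∑ j ∈ range (N+1), (e j + f j - (N.choose j : ℝ)) * x^j * (1-x)^(N-j)
        = (∑ j ∈ range (N+1), e j * x^j * (1-x)^(N-j))
          + (∑ j ∈ range (N+1), f j * x^j * (1-x)^(N-j))
          - ∑ j ∈ range (N+1), (N.choose j : ℝ) * x^j * (1-x)^(N-j) := by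
      rw [← sum_add_distrib, ← sum_sub_distrib]
      apply sum_congr rfl
      intro j _
      ring
    rw [h1, ← hrep x, ← hfrep x, binomial_one N x]
    simp only [eval_sub, eval_one]
    ring
  refine ⟨N, fun j => if j ≤ N then e j / (N.choose j : ℝ) else 0, ?_, ?_⟩
  · intro j
    dsimp only
    by_cases h : j ≤ N
    · rw [if_pos h]
      have hch : (0:ℝ) < (N.choose j : ℝ) := by
        have : 0 < N.choose j := Nat.choose_pos h
        exact_mod_cast this
      constructor
      · exact div_nonneg (he j) hch.le
      · rw [div_le_one hch]
        have := huniq j h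
        have := hf j
        linarith
    · rw [if_neg h]; norm_num
  · intro x
    rw [hrep x]
    apply sum_congr rfl
    intro j hj
    rw [mem_range] at hj
    have h : j ≤ N := by omega
    dsimp only
    rw [if_pos h]
    have hch : ((N.choose j : ℕ) : ℝ) ≠ 0 := by
      have : 0 < N.choose j := Nat.choose_pos h
      positivity
    field_simp


private lemma sampleExp_apply {A : Type} [Fintype A] (N : ℕ)
    (g : (Fin N → A) → A → ℝ) (μ : A → ℝ) (a' : A) :
    sampleExp N g μ a' = ∑ v : Fin N → A, (∏ k, μ (v k)) * g v a' := by
  rw [sampleExp, Finset.sum_apply]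
  apply sum_congr rfl
  intro v _
  rw [Pi.smul_apply, smul_eq_mul]


/-- Corollary: the two-action case. Let `|A| = 2` and `F : Δ(A) → Δ(A)`.
Then `F` arises from some number of action samples if and only if `F` is a polynomial and
either (a) `F` maps the interior of the simplex into the interior of the simplex, or
(b) `F` is constant on `Δ(A)`, equal to the point mass at one of the two elements of `A`. -/
theorem stmt7 {A : Type} [Fintype A] [DecidableEq A] (hA : Fintype.card A = 2)
    (F : (A → ℝ) → A → ℝ) (hF : ∀ π, IsDist π → IsDist (F π)) :
    (∃ (N : ℕ) (g : (Fin N → A) → A → ℝ), (∀ v, IsDist (g v)) ∧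
      ∀ π : A → ℝ, IsDist π → F π = sampleExp N g π) ↔
    ((∀ a' : A, ∃ p : MvPolynomial A ℝ,
        ∀ π : A → ℝ, IsDist π → F π a' = MvPolynomial.eval π p) ∧
      ((∀ π : A → ℝ, IsDist π → (∀ a, 0 < π a) → ∀ a', 0 < F π a') ∨
       (∃ a₀ : A, ∀ π : A → ℝ, IsDist π → F π = unitMass a₀))) := by

  obtain ⟨a, b, hab, huniv⟩ : ∃ a b : A, a ≠ b ∧ (Finset.univ : Finset A) = {a, b} :=
    Finset.card_eq_two.mp (by rw [Finset.card_univ, hA])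
  have hall : ∀ x : A, x = a ∨ x = b := by
    intro x
    have hx := Finset.mem_univ x
    rw [huniv] at hx
    simpa using hx
  have hsum2 : ∀ f : A → ℝ, ∑ x, f x = f a + f b := by
    intro f
    rw [huniv, Finset.sum_pair hab]
  constructor
  · rintro ⟨N, g, hg, hFg⟩
    constructor
    · -- polynomiality
      intro a'
      refine ⟨∑ v : Fin N → A, (∏ k, MvPolynomial.X (v k)) * MvPolynomial.C (g v a'), ?_⟩
      intro π hπ
      rw [hFg π hπ, sampleExp_apply]
      rw [map_sum]
      apply sum_congr rfl
      intro v _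
      rw [map_mul, map_prod]
      simp [MvPolynomial.eval_X, MvPolynomial.eval_C]
    · by_cases hcase : ∀ a' : A, ∃ v, 0 < g v a'
      · left
        intro π hπ hpos a'
        rw [hFg π hπ, sampleExp_apply]
        obtain ⟨v₀, hv₀⟩ := hcase a'
        apply Finset.sum_pos'
        · intro v _
          exact mul_nonneg (prod_nonneg fun k _ => (hπ.1 _)) ((hg v).1 a')
        · exact ⟨v₀, Finset.mem_univ _, mul_pos (prod_pos fun k _ => hpos _) hv₀⟩
      · right
        push_neg at hcase
        obtain ⟨a', ha'⟩ := hcase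
        have hzero : ∀ v, g v a' = 0 := fun v => le_antisymm (ha' v) ((hg v).1 a')
        -- a₀ is the other element
        obtain ⟨a₀, ha₀ne, huniv2⟩ : ∃ a₀ : A, a₀ ≠ a' ∧ ∀ x : A, x = a' ∨ x = a₀ := by
          rcases hall a' with h | h
          · exact ⟨b, by rw [h]; exact hab.symm, fun x => by rw [h]; rcases hall x with h'|h'
              <;> [left; right] <;> exact h'⟩
          · exact ⟨a, by rw [h]; exact hab, fun x => by rw [h]; rcases hall x with h'|h'
              <;> [right; left] <;> exact h'⟩
        have hsum2' : ∀ f : A → ℝ, ∑ x, f x = f a' + f a₀ := by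
          intro f
          have : (Finset.univ : Finset A) = {a', a₀} := by
            apply Finset.eq_of_subset_of_card_le
            · intro x _
              rcases huniv2 x with h|h <;> simp [h]
            · rw [Finset.card_univ, hA, Finset.card_pair (Ne.symm ha₀ne)]
          rw [this, Finset.sum_pair (Ne.symm ha₀ne)]
        have hone : ∀ v, g v a₀ = 1 := by
          intro v
          have := (hg v).2
          rw [hsum2' (g v), hzero v, zero_add] at this
          exact this
        refine ⟨a₀, fun π hπ => ?_⟩
        funext x
        have hsumone : ∑ v : Fin N → A, ∏ k, π (v k) = 1 := by
          have h := Finset.prod_univ_sum (fun _ : Fin N => (univ : Finset A))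
            (fun _ a'' => π a'')
          rw [Fintype.piFinset_univ] at h
          rw [← h]
          calc ∏ _k : Fin N, ∑ a'' : A, π a'' = ∏ _k : Fin N, (1:ℝ) := by rw [hπ.2]
            _ = 1 := prod_const_one
        rcases huniv2 x with h|h <;> rw [h]
        · rw [hFg π hπ, sampleExp_apply]
          simp only [hzero, mul_zero, sum_const_zero]
          simp only [unitMass]
          rw [if_neg (fun hh => ha₀ne hh.symm)]
        · rw [hFg π hπ, sampleExp_apply]
          simp only [hone, mul_one]
          rw [hsumone]
          simp [unitMass]
  · rintro ⟨hpoly, hcase | ⟨a₀, hconst⟩⟩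
    · -- interior-to-interior case
      obtain ⟨p, hp⟩ := hpoly a
      set subs : A → Polynomial ℝ :=
        fun a' => if a' = a then Polynomial.X else 1 - Polynomial.X with hsubs
      set P : Polynomial ℝ := MvPolynomial.aeval subs p with hP
      set πx : ℝ → A → ℝ := fun x a' => if a' = a then x else 1 - x with hπx
      have hπxa : ∀ x : ℝ, πx x a = x := fun _ => if_pos rfl
      have hπxb : ∀ x : ℝ, πx x b = 1 - x := fun _ => if_neg (fun hh => hab hh.symm)
      have haeval : ∀ (q : MvPolynomial A ℝ) (f : A → ℝ),
          MvPolynomial.aeval f q = MvPolynomial.eval f q := by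
        intro q f
        rw [← MvPolynomial.coe_aeval_eq_eval]
        rfl
      have heval : ∀ x : ℝ, P.eval x = MvPolynomial.eval (πx x) p := by
        intro x
        have hc := MvPolynomial.comp_aeval subs (Polynomial.aeval x : Polynomial ℝ →ₐ[ℝ] ℝ)
        have h1 : (Polynomial.aeval x : Polynomial ℝ →ₐ[ℝ] ℝ) P
            = MvPolynomial.aeval (fun a' : A =>
              (Polynomial.aeval x : Polynomial ℝ →ₐ[ℝ] ℝ) (subs a')) p := by
          rw [hP, ← AlgHom.comp_apply, hc]
        have h2 : (fun a' : A => (Polynomial.aeval x : Polynomial ℝ →ₐ[ℝ] ℝ) (subs a'))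
            = πx x := by
          funext a'
          rw [hsubs, hπx]
          dsimp only
          rw [apply_ite (Polynomial.aeval x : Polynomial ℝ →ₐ[ℝ] ℝ)]
          simp
        rw [h2, haeval] at h1
        rw [← h1, Polynomial.coe_aeval_eq_eval]
      have hdistx : ∀ x : ℝ, 0 ≤ x → x ≤ 1 → IsDist (πx x) := by
        intro x h0 h1
        constructor
        · intro a'
          rcases hall a' with h|h <;> rw [h]
          · rw [hπxa]; linarith
          · rw [hπxb]; linarith
        · rw [hsum2, hπxa, hπxb]; ring
      have hPval : ∀ π : A → ℝ, IsDist π → P.eval (π a) = F π a := by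
        intro π hπ
        rw [heval]
        have hfun : πx (π a) = π := by
          funext a'
          rcases hall a' with h|h <;> rw [h]
          · rw [hπxa]
          · rw [hπxb]
            have h2 := hπ.2
            rw [hsum2 π] at h2
            linarith
        rw [hfun]
        exact (hp π hπ).symm
      have hFsum : ∀ π : A → ℝ, IsDist π → F π a + F π b = 1 := by
        intro π hπ
        have h2 := (hF π hπ).2
        rw [hsum2] at h2
        exact h2
      have hmap : ∀ x ∈ Set.Icc (0:ℝ) 1, P.eval x ∈ Set.Icc (0:ℝ) 1 := by
        intro x hx
        have hd := hdistx x hx.1 hx.2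
        have h1 := hPval _ hd
        rw [hπxa] at h1
        constructor
        · rw [h1]; exact (hF _ hd).1 a
        · rw [h1]
          have hs := hFsum _ hd
          have hb := (hF _ hd).1 b
          linarith
      have hint : ∀ x ∈ Set.Ioo (0:ℝ) 1, P.eval x ∈ Set.Ioo (0:ℝ) 1 := by
        intro x hx
        have hd := hdistx x hx.1.le hx.2.le
        have hpos : ∀ a', 0 < πx x a' := by
          intro a'
          rcases hall a' with h|h <;> rw [h]
          · rw [hπxa]; exact hx.1
          · rw [hπxb]; linarith [hx.2]
        have h1 := hPval _ hd
        rw [hπxa] at h1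
        have hFa := hcase _ hd hpos a
        have hFb := hcase _ hd hpos b
        have hs := hFsum _ hd
        constructor
        · rw [h1]; exact hFa
        · rw [h1]; linarith
      obtain ⟨N, dd, hdd, hrep⟩ := bernstein_combo P hmap hint
      set cnt : (Fin N → A) → ℕ := fun v => #(univ.filter (fun k => v k = a)) with hcnt
      set gg : (Fin N → A) → A → ℝ :=
        fun v a' => if a' = a then dd (cnt v) else 1 - dd (cnt v) with hgg
      have hgga : ∀ v, gg v a = dd (cnt v) := fun v => if_pos rfl
      have hggb : ∀ v, gg v b = 1 - dd (cnt v) := fun v => if_neg (fun hh => hab hh.symm)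
      refine ⟨N, gg, ?_, ?_⟩
      · intro v
        constructor
        · intro a'
          rcases hall a' with h|h <;> rw [h]
          · rw [hgga]; exact (hdd _).1
          · rw [hggb]; linarith [(hdd (cnt v)).2]
        · rw [hsum2, hgga, hggb]; ring
      · intro π hπ
        have hπb : π b = 1 - π a := by
          have h2 := hπ.2
          rw [hsum2 π] at h2
          linarith
        have hprodv : ∀ v : Fin N → A,
            (∏ k, π (v k)) = (π a)^(cnt v) * (π b)^(N - cnt v) := by
          intro v
          rw [← prod_filter_mul_prod_filter_not univ (fun k => v k = a) (fun k => π (v k))]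
          congr 1
          · rw [prod_congr rfl (fun k hk => by rw [(mem_filter.mp hk).2]), prod_const]
          · have hcard : #(univ.filter (fun k => ¬ v k = a)) = N - cnt v := by
              have h3 := Finset.card_filter_add_card_filter_not
                (s := (univ : Finset (Fin N))) (p := fun k => v k = a)
              rw [Finset.card_univ, Fintype.card_fin] at h3
              simp only [hcnt]
              omega
            rw [prod_congr rfl (fun k hk => by
                have h2 := (mem_filter.mp hk).2
                rcases hall (v k) with h|h
                · exact absurd h h2
                · rw [h]), prod_const, hcard]
        let E : (Fin N → A) ≃ Finset (Fin N) := {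
          toFun := fun v => univ.filter (fun k => v k = a)
          invFun := fun s k => if k ∈ s then a else b
          left_inv := by
            intro v; funext k
            dsimp only
            simp only [mem_filter, mem_univ, true_and]
            by_cases h : v k = a
            · rw [if_pos h, h]
            · rw [if_neg h]
              rcases hall (v k) with h'|h'
              · exact absurd h' h
              · exact h'.symm
          right_inv := by
            intro s; ext k
            dsimp only
            simp only [mem_filter, mem_univ, true_and]
            by_cases h : k ∈ s
            · simp [h]
            · simp [h, hab.symm] }
        have hkeysum : ∀ hfn : ℕ → ℝ, ∑ v : Fin N → A, (∏ k, π (v k)) * hfn (cnt v)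
            = ∑ j ∈ range (N+1), (N.choose j : ℝ) * (π a)^j * (π b)^(N-j) * hfn j := by
          intro hfn
          have hsum1 : ∑ v : Fin N → A, (∏ k, π (v k)) * hfn (cnt v)
              = ∑ v : Fin N → A, (π a)^(cnt v) * (π b)^(N - cnt v) * hfn (cnt v) :=
            sum_congr rfl (fun v _ => by rw [hprodv v])
          rw [hsum1]
          have hequiv := Fintype.sum_equiv E
            (fun v => (π a)^(cnt v) * (π b)^(N - cnt v) * hfn (cnt v))
            (fun s => (π a)^(#s) * (π b)^(N - #s) * hfn (#s))
            (fun v => rfl)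

          rw [hequiv, ← Finset.powerset_univ,
            Finset.sum_powerset_apply_card (fun m => (π a)^m * (π b)^(N-m) * hfn m),
            Finset.card_univ, Fintype.card_fin]
          apply sum_congr rfl
          intro j _
          rw [nsmul_eq_mul]
          ring
        funext x
        rcases hall x with h|h <;> rw [h]
        · rw [sampleExp_apply,
            sum_congr rfl (fun v (_ : v ∈ univ) => by rw [hgga v]), hkeysum dd,
            ← hPval π hπ, hrep (π a)]
          apply sum_congr rfl
          intro j _
          rw [hπb]
          ring
        · rw [sampleExp_apply,
            sum_congr rfl (fun v (_ : v ∈ univ) => by rw [hggb v]),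
            hkeysum (fun j => 1 - dd j)]
          have hFb : F π b = 1 - F π a := by
            have hs := hFsum π hπ; linarith
          have hPb : F π a
              = ∑ j ∈ range (N+1), (N.choose j : ℝ) * (π a)^j * (π b)^(N-j) * dd j := by
            rw [← hPval π hπ, hrep (π a)]
            apply sum_congr rfl
            intro j _
            rw [hπb]
            ring
          have hbin : ∑ j ∈ range (N+1), (N.choose j : ℝ) * (π a)^j * (π b)^(N-j) = 1 := by
            have hb2 := binomial_one N (π a)
            rw [← hb2]
            apply sum_congr rfl
            intro j _
            rw [hπb]
          have hexp : ∑ j ∈ range (N+1), (N.choose j:ℝ) * (π a)^j * (π b)^(N-j) * (1 - dd j)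
              = (∑ j ∈ range (N+1), (N.choose j:ℝ) * (π a)^j * (π b)^(N-j))
                - ∑ j ∈ range (N+1), (N.choose j:ℝ) * (π a)^j * (π b)^(N-j) * dd j := by
            rw [← sum_sub_distrib]
            exact sum_congr rfl (fun j _ => by ring)
          rw [hFb, hPb, hexp, hbin]
    · -- constant case
      refine ⟨0, fun _ => unitMass a₀, ?_, ?_⟩
      · intro v
        constructor
        · intro x
          simp only [unitMass]
          split <;> norm_num
        · rw [hsum2]
          rcases hall a₀ with h|h <;> rw [h] <;> simp [unitMass, hab, hab.symm]
      · intro π hπ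
        rw [hconst π hπ]
        funext x
        rw [sampleExp_apply]
        rw [Fintype.sum_unique]
        simp
end

section
/- Suppose F : Δ(A) → Δ(A) arises from N action samples via some g : A^N → Δ(A). Then for every a' ∈ A and every t ∈ (0,1] there exists λ(t) > 0 (one may take λ(t) = t^N) such that for all p, q ∈ Δ(A) with p(a) ≥ t·q(a) for every a ∈ A, one has F(p)(a') ≥ λ(t)·F(q)(a'). -/
open Filter Asymptotics Topology

/-- Proposition: a necessary condition for sample representations.
If `F : Δ(A) → Δ(A)` arises from `N` action samples via `g : A^N → Δ(A)`, then for every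
`a' ∈ A` and `t ∈ (0,1]` there is `λ(t) > 0` (one may take `λ(t) = t^N`) such that for all
`p, q ∈ Δ(A)` with `p(a) ≥ t·q(a)` for every `a`, one has `F(p)(a') ≥ λ(t)·F(q)(a')`. -/
theorem stmt8 {A : Type} [Fintype A] (N : ℕ) (g : (Fin N → A) → A → ℝ)
    (hg : ∀ v, IsDist (g v)) (F : (A → ℝ) → A → ℝ)
    (hFg : ∀ π : A → ℝ, IsDist π → F π = sampleExp N g π) :
    ∀ (a' : A) (t : ℝ), 0 < t → t ≤ 1 →
      ∃ lam : ℝ, 0 < lam ∧ lam = t ^ N ∧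
        ∀ p q : A → ℝ, IsDist p → IsDist q → (∀ a, t * q a ≤ p a) →
          lam * F q a' ≤ F p a' := by
  intro a' t ht ht1
  refine ⟨t ^ N, pow_pos ht N, rfl, ?_⟩
  intro p q hp hq hpq
  rw [hFg p hp, hFg q hq]
  simp only [sampleExp, Finset.sum_apply, Pi.smul_apply, smul_eq_mul, Finset.mul_sum]
  apply Finset.sum_le_sum
  intro v _
  rw [← mul_assoc]
  apply mul_le_mul_of_nonneg_right _ ((hg v).1 a')
  calc t ^ N * ∏ k, q (v k) = ∏ k : Fin N, t * q (v k) := by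
        rw [Finset.prod_mul_distrib, Finset.prod_const, Finset.card_univ, Fintype.card_fin]
    _ ≤ ∏ k, p (v k) := by
        apply Finset.prod_le_prod
        · intro k _; exact mul_nonneg ht.le (hq.1 _)
        · intro k _; exact hpq _
end

section
/- Let A be a finite nonempty set and F : Δ(A) → Δ(A) continuous. For each N ∈ ℕ define g_N : A^N → Δ(A) by g_N(a_1,…,a_N) = F((1/N) Σ_{k=1}^N δ_{a_k}) (where δ_a denotes the point mass at a), and define F̂_N(π) = Σ_{(a_1,…,a_N)∈A^N} (∏_{k=1}^N π(a_k)) g_N(a_1,…,a_N). Then F̂_N converges uniformly to F: sup_{π∈Δ(A)} ‖F̂_N(π) − F(π)‖₂ → 0 as N → ∞, where ‖·‖₂ is the Euclidean norm on ℝ^A. -/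
open Filter Asymptotics Topology

section Aux

variable {A : Type} [Fintype A] [DecidableEq A]

lemma sum_wprod {N : ℕ} (π : A → ℝ) (h : Fin N → A → ℝ) :
    ∑ v : Fin N → A, (∏ k, π (v k)) * ∏ k, h k (v k) = ∏ k, ∑ b, π b * h k b := by
  have h1 : ∀ v : Fin N → A, (∏ k, π (v k)) * ∏ k, h k (v k)
      = ∏ k, π (v k) * h k (v k) := fun v => (Finset.prod_mul_distrib).symm
  simp_rw [h1]
  rw [Finset.prod_univ_sum, Fintype.piFinset_univ]

lemma momOne {N : ℕ} (π : A → ℝ) (hπ : ∑ b, π b = 1) (k : Fin N) (f : A → ℝ) :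
    ∑ v : Fin N → A, (∏ k', π (v k')) * f (v k) = ∑ b, π b * f b := by
  calc ∑ v : Fin N → A, (∏ k', π (v k')) * f (v k)
      = ∑ v : Fin N → A, (∏ k', π (v k')) * ∏ k', (if k' = k then f (v k') else 1) := by
        simp [Finset.prod_ite_eq']
    _ = ∏ k', ∑ b, π b * (if k' = k then f b else 1) :=
        sum_wprod π (fun k' b => if k' = k then f b else 1)
    _ = ∏ k' : Fin N, (if k' = k then ∑ b, π b * f b else 1) := by
        apply Finset.prod_congr rfl; intro k' _
        by_cases hk : k' = k <;> simp [hk, hπ]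
    _ = ∑ b, π b * f b := by simp [Finset.prod_ite_eq']

lemma momTwo {N : ℕ} (π : A → ℝ) (hπ : ∑ b, π b = 1) {k l : Fin N} (hkl : k ≠ l)
    (f g : A → ℝ) :
    ∑ v : Fin N → A, (∏ k', π (v k')) * (f (v k) * g (v l)) =
      (∑ b, π b * f b) * (∑ b, π b * g b) := by
  calc ∑ v : Fin N → A, (∏ k', π (v k')) * (f (v k) * g (v l))
      = ∑ v : Fin N → A, (∏ k', π (v k')) *
          ∏ k', ((if k' = k then f (v k') else 1) * (if k' = l then g (v k') else 1)) := by
        refine Finset.sum_congr rfl fun v _ => ?_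
        congr 1
        symm
        rw [Finset.prod_mul_distrib, Finset.prod_ite_eq', Finset.prod_ite_eq']
        simp
    _ = ∏ k', ∑ b, π b * ((if k' = k then f b else 1) * (if k' = l then g b else 1)) :=
        sum_wprod π (fun k' b => (if k' = k then f b else 1) * (if k' = l then g b else 1))
    _ = ∏ k' : Fin N, ((if k' = k then ∑ b, π b * f b else 1) *
          (if k' = l then ∑ b, π b * g b else 1)) := by
        apply Finset.prod_congr rfl; intro k' _
        by_cases h1 : k' = k
        · subst h1; simp [hkl]
        · by_cases h2 : k' = l <;> simp [h1, h2, hπ, Ne.symm hkl]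
    _ = (∑ b, π b * f b) * (∑ b, π b * g b) := by
        rw [Finset.prod_mul_distrib]; simp [Finset.prod_ite_eq']

lemma var_le {N : ℕ} (hN : 1 ≤ N) (π : A → ℝ) (hπ0 : ∀ a, 0 ≤ π a)
    (hπ1 : ∑ b, π b = 1) (a : A) :
    ∑ v : Fin N → A, (∏ k, π (v k)) *
      ((N:ℝ)⁻¹ * (∑ k, if v k = a then (1:ℝ) else 0) - π a) ^ 2 ≤ (N:ℝ)⁻¹ := by
  have hNpos : (0:ℝ) < (N:ℝ) := by exact_mod_cast hN
  have hNne : (N:ℝ) ≠ 0 := ne_of_gt hNpos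
  set c : A → ℝ := fun b => (if b = a then 1 else 0) - π a with hc
  have hpa1 : π a ≤ 1 := by
    calc π a ≤ ∑ b, π b := Finset.single_le_sum (fun b _ => hπ0 b) (Finset.mem_univ a)
      _ = 1 := hπ1
  -- recenter
  have step1 : ∀ v : Fin N → A,
      (N:ℝ)⁻¹ * (∑ k, if v k = a then (1:ℝ) else 0) - π a
        = (N:ℝ)⁻¹ * ∑ k : Fin N, c (v k) := by
    intro v
    rw [hc]
    simp only [Finset.sum_sub_distrib, Finset.sum_const, Finset.card_univ, Fintype.card_fin,
      nsmul_eq_mul, mul_sub, ← mul_assoc, inv_mul_cancel₀ hNne, one_mul]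
  -- zero mean
  have hc0 : ∑ b, π b * c b = 0 := by
    rw [hc]
    simp only [mul_sub, Finset.sum_sub_distrib, mul_ite, mul_one, mul_zero,
      Finset.sum_ite_eq', Finset.mem_univ, if_true, ← Finset.sum_mul, hπ1, one_mul]
    ring
  -- second moment bound
  have hcsq : ∑ b, π b * c b ^ 2 ≤ 1 := by
    calc ∑ b, π b * c b ^ 2 ≤ ∑ b, π b * 1 := by
          apply Finset.sum_le_sum; intro b _
          apply mul_le_mul_of_nonneg_left _ (hπ0 b)
          have habs : |c b| ≤ 1 := by
            rw [hc]; by_cases hb : b = a <;> simp [hb, abs_le] <;>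
              constructor <;> linarith [hπ0 a, hπ0 b, hpa1]
          calc c b ^ 2 = |c b| ^ 2 := (sq_abs _).symm
            _ ≤ 1 ^ 2 := by exact pow_le_pow_left₀ (abs_nonneg _) habs 2
            _ = 1 := one_pow 2
      _ = 1 := by simp [hπ1]
  have key : ∀ k l : Fin N, ∑ v : Fin N → A, (∏ k', π (v k')) * (c (v k) * c (v l))
      = if k = l then ∑ b, π b * c b ^ 2 else 0 := by
    intro k l
    by_cases hkl : k = l
    · subst hkl
      rw [if_pos rfl]
      have h := momOne π hπ1 k (fun b => c b ^ 2)
      simpa [pow_two] using h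
    · rw [if_neg hkl, momTwo π hπ1 hkl c c, hc0, mul_zero]
  calc ∑ v : Fin N → A, (∏ k, π (v k)) *
        ((N:ℝ)⁻¹ * (∑ k, if v k = a then (1:ℝ) else 0) - π a) ^ 2
      = ∑ v : Fin N → A, ∑ k : Fin N, ∑ l : Fin N,
          ((N:ℝ)⁻¹)^2 * ((∏ k', π (v k')) * (c (v k) * c (v l))) := by
        apply Finset.sum_congr rfl; intro v _
        rw [step1 v, mul_pow, pow_two (∑ k : Fin N, c (v k)), Finset.sum_mul_sum]
        simp only [Finset.mul_sum]
        apply Finset.sum_congr rfl; intro k _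
        apply Finset.sum_congr rfl; intro l _
        ring
    _ = ∑ k : Fin N, ∑ l : Fin N, ((N:ℝ)⁻¹)^2 *
          ∑ v : Fin N → A, ((∏ k', π (v k')) * (c (v k) * c (v l))) := by
        rw [Finset.sum_comm]
        apply Finset.sum_congr rfl; intro k _
        rw [Finset.sum_comm]
        apply Finset.sum_congr rfl; intro l _
        rw [Finset.mul_sum]
    _ = ∑ k : Fin N, ((N:ℝ)⁻¹)^2 * ∑ b, π b * c b ^ 2 := by
        apply Finset.sum_congr rfl; intro k _
        simp [key, Finset.sum_ite_eq]
    _ ≤ ∑ k : Fin N, ((N:ℝ)⁻¹)^2 * 1 := by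
        apply Finset.sum_le_sum; intro k _
        exact mul_le_mul_of_nonneg_left hcsq (by positivity)
    _ = (N:ℝ)⁻¹ := by
        simp only [mul_one, Finset.sum_const, Finset.card_univ, Fintype.card_fin,
          nsmul_eq_mul]
        rw [pow_two, ← mul_assoc, mul_inv_cancel₀ hNne, one_mul]

lemma dist_norm_le (q : EuclideanSpace ℝ A) (h0 : ∀ a, 0 ≤ q a) (h1 : ∑ a, q a = 1) :
    ‖q‖ ≤ 1 := by
  rw [EuclideanSpace.norm_eq, show (1:ℝ) = Real.sqrt 1 by simp]
  apply Real.sqrt_le_sqrt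
  calc ∑ a, ‖q a‖ ^ 2 = ∑ a, (q a) ^ 2 := by simp [Real.norm_eq_abs, sq_abs]
    _ ≤ ∑ a, q a := by
        apply Finset.sum_le_sum; intro a _
        have hle : q a ≤ 1 := by
          calc q a ≤ ∑ b, q b := Finset.single_le_sum (fun b _ => h0 b) (Finset.mem_univ a)
            _ = 1 := h1
        nlinarith [h0 a]
    _ = 1 := h1

end Aux

/-- Proposition: uniform approximation of a continuous dependence function
by sample-based functions. Let `F : Δ(A) → Δ(A)` be continuous, and let
`g_N(a_1,…,a_N) = F((1/N) Σ_k δ_{a_k})` and `F̂_N(π) = E[g_N(A_1,…,A_N)]` for `A_1,…,A_N`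
i.i.d. `π`. Then `F̂_N` converges uniformly to `F` on `Δ(A)` in the Euclidean norm. -/
theorem stmt9 {A : Type} [Fintype A] [DecidableEq A]
    (F : (A → ℝ) → A → ℝ) (hF : ∀ π, IsDist π → IsDist (F π))
    (hcont : ContinuousOn F {π : A → ℝ | IsDist π})
    (Fhat : (N : ℕ) → (A → ℝ) → A → ℝ)
    (hFhat : ∀ (N : ℕ) (π : A → ℝ),
      Fhat N π = sampleExp N
        (fun v => F (fun a => (N : ℝ)⁻¹ * ∑ k : Fin N, if v k = a then 1 else 0)) π) :
    ∀ δ : ℝ, 0 < δ → ∃ M : ℕ, ∀ N : ℕ, M ≤ N → ∀ π : A → ℝ, IsDist π →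
      Real.sqrt (∑ a, (Fhat N π a - F π a) ^ 2) ≤ δ := by
  classical
  intro δ hδ
  -- work in Euclidean space
  set S : Set (EuclideanSpace ℝ A) := {π | IsDist π} with hSdef
  set FE : EuclideanSpace ℝ A → EuclideanSpace ℝ A :=
    (fun x : EuclideanSpace ℝ A => (WithLp.toLp 2 (F x) : EuclideanSpace ℝ A)) with hFE
  have hFe : ContinuousOn FE S :=
    (PiLp.continuous_toLp 2 _).comp_continuousOn
      (hcont.comp (PiLp.continuous_ofLp 2 _).continuousOn (fun x hx => hx))
  have hclosed : IsClosed S := by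
    have h1 : S = (⋂ a : A, {π : EuclideanSpace ℝ A | 0 ≤ π a}) ∩
        {π : EuclideanSpace ℝ A | ∑ a, π a = 1} := by
      ext q
      simp only [hSdef, Set.mem_setOf_eq, Set.mem_inter_iff, Set.mem_iInter, IsDist]
    rw [h1]
    refine IsClosed.inter (isClosed_iInter fun a => ?_) ?_
    · exact isClosed_le continuous_const (PiLp.continuous_apply 2 _ a)
    · exact isClosed_eq (continuous_finset_sum _ fun a _ => PiLp.continuous_apply 2 _ a) continuous_const
  have hsub : S ⊆ Metric.closedBall 0 1 := by
    intro q hq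
    rw [Metric.mem_closedBall, dist_zero_right]
    exact dist_norm_le q hq.1 hq.2
  have hK : IsCompact S :=
    (isCompact_closedBall (0 : EuclideanSpace ℝ A) 1).of_isClosed_subset hclosed hsub
  have hunif : UniformContinuousOn FE S :=
    hK.uniformContinuousOn_of_continuous hFe
  obtain ⟨η, hη, hmod⟩ := (Metric.uniformContinuousOn_iff.mp hunif) (δ / 2) (by positivity)
  refine ⟨⌈(4 * (Fintype.card A : ℝ)) / (δ * η ^ 2)⌉₊ + 1, ?_⟩
  intro N hMN π hπ
  set πE : EuclideanSpace ℝ A := (WithLp.toLp 2 π) with hπE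
  have hN1 : 1 ≤ N := le_trans (Nat.le_add_left 1 _) hMN
  have hNpos : (0:ℝ) < (N:ℝ) := by exact_mod_cast hN1
  have hNne : (N:ℝ) ≠ 0 := ne_of_gt hNpos
  have hNR : 4 * (Fintype.card A : ℝ) / (δ * η ^ 2) ≤ (N:ℝ) := by
    refine le_trans (Nat.le_ceil _) ?_
    exact_mod_cast Nat.le_of_succ_le hMN
  -- notation
  set w : (Fin N → A) → ℝ := fun v => ∏ k, π (v k) with hw
  have hw0 : ∀ v, 0 ≤ w v := fun v => Finset.prod_nonneg fun k _ => hπ.1 _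
  have hw1 : ∑ v : Fin N → A, w v = 1 := by
    have h := sum_wprod (N := N) π (fun _ _ => (1:ℝ))
    simpa [hπ.2] using h
  set μv : (Fin N → A) → EuclideanSpace ℝ A :=
    fun v => WithLp.toLp 2 (fun a => (N : ℝ)⁻¹ * ∑ k : Fin N, if v k = a then 1 else 0) with hμv
  have hμdist : ∀ v, IsDist (μv v) := by
    intro v
    constructor
    · intro a
      apply mul_nonneg (by positivity)
      apply Finset.sum_nonneg; intro k _; positivity
    · rw [hμv]
      simp only
      rw [← Finset.mul_sum, Finset.sum_comm]
      simp [Finset.sum_ite_eq, inv_mul_cancel₀ hNne]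
  -- pointwise identity for Fhat
  have hptw : ∀ a, Fhat N π a = ∑ v : Fin N → A, w v * F (μv v) a := by
    intro a
    rw [hFhat N π, sampleExp]
    rw [Finset.sum_apply]
    simp [hw, hμv]
  -- the difference vector
  set d : EuclideanSpace ℝ A := WithLp.toLp 2 (fun a => Fhat N π a - F π a) with hd
  set e : (Fin N → A) → EuclideanSpace ℝ A :=
    fun v => FE (μv v) - FE πE with he
  have hdsum : d = ∑ v : Fin N → A, w v • e v := by
    ext a
    rw [WithLp.ofLp_sum, Finset.sum_apply]
    show Fhat N π a - F π a = ∑ v : Fin N → A, w v * (F (μv v) a - F π a)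
    have hrhs : ∑ v : Fin N → A, w v * (F (μv v) a - F π a)
        = (∑ v : Fin N → A, w v * F (μv v) a) - (∑ v : Fin N → A, w v) * F π a := by
      rw [Finset.sum_mul, ← Finset.sum_sub_distrib]
      exact Finset.sum_congr rfl fun v _ => by ring
    rw [hrhs, hw1, one_mul, hptw a]
  -- convert the goal to a norm statement
  have hgoal : Real.sqrt (∑ a, (Fhat N π a - F π a) ^ 2) = ‖d‖ := by
    rw [EuclideanSpace.norm_eq]
    congr 1
    apply Finset.sum_congr rfl; intro a _
    rw [hd]
    rw [Real.norm_eq_abs, sq_abs]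
  rw [hgoal]
  have hπS : πE ∈ S := hπ
  have hμS : ∀ v, μv v ∈ S := fun v => hμdist v
  -- per-sample bound
  have hub : ∀ v : Fin N → A,
      ‖e v‖ ≤ δ / 2 + 2 * (η ^ 2)⁻¹ * ‖μv v - πE‖ ^ 2 := by
    intro v
    by_cases hdist : dist (μv v) πE < η
    · have h1 : dist (FE (μv v)) (FE πE) < δ / 2 :=
        hmod _ (hμS v) _ hπS hdist
      have h2 : ‖e v‖ = dist (FE (μv v)) (FE πE) := by
        simp only [he]
        rw [dist_eq_norm]
      have h3 : 0 ≤ 2 * (η ^ 2)⁻¹ * ‖μv v - πE‖ ^ 2 := by positivity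
      linarith
    · push_neg at hdist
      have hFμ := hF _ (hμdist v)
      have hFπ := hF _ hπ
      have h1 : ‖e v‖ ≤ 2 := by
        simp only [he]
        calc ‖FE (μv v) - FE πE‖
            ≤ ‖FE (μv v)‖ + ‖FE πE‖ := norm_sub_le _ _
          _ ≤ 1 + 1 := add_le_add (dist_norm_le _ hFμ.1 hFμ.2) (dist_norm_le _ hFπ.1 hFπ.2)
          _ = 2 := by norm_num
      have h2 : 1 ≤ (η ^ 2)⁻¹ * ‖μv v - πE‖ ^ 2 := by
        rw [dist_eq_norm] at hdist
        have hη2 : (0:ℝ) < η ^ 2 := by positivity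
        have hle : η ^ 2 ≤ ‖μv v - πE‖ ^ 2 :=
          pow_le_pow_left₀ hη.le hdist 2
        calc (1:ℝ) = (η ^ 2)⁻¹ * η ^ 2 := by rw [inv_mul_cancel₀ (ne_of_gt hη2)]
          _ ≤ (η ^ 2)⁻¹ * ‖μv v - πE‖ ^ 2 :=
              mul_le_mul_of_nonneg_left hle (by positivity)
      have h3 : (0:ℝ) ≤ δ / 2 := by positivity
      nlinarith [h1, h2, h3]
  -- Chebyshev / variance bound
  have hvar : ∑ v : Fin N → A, w v * ‖μv v - πE‖ ^ 2
      ≤ (Fintype.card A : ℝ) * (N:ℝ)⁻¹ := by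
    have hnq : ∀ v : Fin N → A, ‖μv v - πE‖ ^ 2
        = ∑ a, (μv v a - π a) ^ 2 := by
      intro v
      rw [EuclideanSpace.norm_eq, Real.sq_sqrt (by positivity)]
      apply Finset.sum_congr rfl; intro a _
      rw [Real.norm_eq_abs, sq_abs]
      rfl
    calc ∑ v : Fin N → A, w v * ‖μv v - πE‖ ^ 2
        = ∑ a : A, ∑ v : Fin N → A, w v * (μv v a - π a) ^ 2 := by
          simp_rw [hnq, Finset.mul_sum]
          rw [Finset.sum_comm]
      _ ≤ ∑ a : A, (N:ℝ)⁻¹ := by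
          apply Finset.sum_le_sum; intro a _
          exact var_le hN1 π hπ.1 hπ.2 a
      _ = (Fintype.card A : ℝ) * (N:ℝ)⁻¹ := by
          rw [Finset.sum_const, Finset.card_univ, nsmul_eq_mul]
  -- final chain
  calc ‖d‖ = ‖∑ v : Fin N → A, w v • e v‖ := by rw [hdsum]
    _ ≤ ∑ v : Fin N → A, ‖w v • e v‖ := norm_sum_le _ _
    _ = ∑ v : Fin N → A, w v * ‖e v‖ := by
        apply Finset.sum_congr rfl; intro v _
        rw [norm_smul, Real.norm_eq_abs, abs_of_nonneg (hw0 v)]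
    _ ≤ ∑ v : Fin N → A, w v *
          (δ / 2 + 2 * (η ^ 2)⁻¹ * ‖μv v - πE‖ ^ 2) := by
        apply Finset.sum_le_sum; intro v _
        exact mul_le_mul_of_nonneg_left (hub v) (hw0 v)
    _ = (∑ v : Fin N → A, w v) * (δ / 2)
        + 2 * (η ^ 2)⁻¹ * ∑ v : Fin N → A, w v * ‖μv v - πE‖ ^ 2 := by
        rw [Finset.sum_mul, Finset.mul_sum, ← Finset.sum_add_distrib]
        apply Finset.sum_congr rfl; intro v _; ring
    _ ≤ 1 * (δ / 2) + 2 * (η ^ 2)⁻¹ * ((Fintype.card A : ℝ) * (N:ℝ)⁻¹) := by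
        rw [hw1]
        exact add_le_add le_rfl (mul_le_mul_of_nonneg_left hvar (by positivity))
    _ ≤ δ := by
        have hkey : 4 * (Fintype.card A : ℝ) ≤ δ * η ^ 2 * (N:ℝ) := by
          rw [div_le_iff₀ (by positivity)] at hNR
          linarith
        rw [one_mul]
        have h2 : 2 * (η ^ 2)⁻¹ * ((Fintype.card A : ℝ) * (N:ℝ)⁻¹) ≤ δ / 2 := by
          rw [show 2 * (η ^ 2)⁻¹ * ((Fintype.card A : ℝ) * (N:ℝ)⁻¹)
              = (4 * (Fintype.card A : ℝ)) / (2 * (η ^ 2 * (N:ℝ))) by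
            field_simp; ring]
          rw [div_le_div_iff₀ (by positivity) (by norm_num : (0:ℝ) < 2)]
          nlinarith [hkey]
        linarith
end

section
/- Let A be a finite nonempty set, F : Δ(A) → Δ(A), and π₀ ∈ Δ(A). Then F is differentiable at π₀ if and only if there exist ρ ≥ 0 and τ : A → Δ(A) such that for every π₀' ∈ Δ(A), F(π₀ + ε(π₀' − π₀)) = F(π₀) + ε ρ (Σ_{a'∈A} τ(a') π₀'(a') − F(π₀)) + o(ε) as ε → 0⁺. -/
open Filter Asymptotics Topology

section aux
variable {A : Type} [Fintype A]

lemma eventually_dist (π₀ π' : A → ℝ) (h0 : IsDist π₀) (h1 : IsDist π') :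
    ∀ᶠ ε : ℝ in 𝓝[>] 0, IsDist (π₀ + ε • (π' - π₀)) := by
  have hIoo : Set.Ioo (0:ℝ) 1 ∈ 𝓝[>] (0:ℝ) :=
    Ioo_mem_nhdsGT_of_mem ⟨le_refl _, zero_lt_one⟩
  filter_upwards [hIoo] with ε hε
  constructor
  · intro a
    have h0a := h0.1 a; have h1a := h1.1 a
    simp only [Pi.add_apply, Pi.smul_apply, Pi.sub_apply, smul_eq_mul]
    nlinarith [hε.1.le, hε.2.le]
  · simp only [Pi.add_apply, Pi.smul_apply, Pi.sub_apply, smul_eq_mul]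
    rw [Finset.sum_add_distrib, ← Finset.mul_sum, Finset.sum_sub_distrib, h0.2, h1.2]
    ring

lemma littleo_apply {f : ℝ → A → ℝ} {l : Filter ℝ} (h : f =o[l] fun ε => ε) (b : A) :
    (fun ε => f ε b) =o[l] fun ε => ε :=
  (isBigO_of_le l fun ε => norm_le_pi_norm (f ε) b).trans_isLittleO h

lemma littleo_const_eq_zero {s : ℝ} (h : (fun ε : ℝ => ε * s) =o[𝓝[>] (0:ℝ)] fun ε => ε) :
    s = 0 := by
  by_contra hs
  have hc := h.def (show (0:ℝ) < |s| / 2 by positivity)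
  obtain ⟨ε, hε1, hε2⟩ := (hc.and self_mem_nhdsWithin).exists
  rw [Real.norm_eq_abs, Real.norm_eq_abs, abs_mul, abs_of_pos hε2] at hε1
  nlinarith [abs_pos.2 hs]

lemma littleo_nonneg {G : ℝ → ℝ} {v : ℝ}
    (hG : ∀ᶠ ε in 𝓝[>] (0:ℝ), 0 ≤ G ε)
    (h : (fun ε => G ε - ε * v) =o[𝓝[>] (0:ℝ)] fun ε => ε) : 0 ≤ v := by
  by_contra hv
  push_neg at hv
  have hc := h.def (show (0:ℝ) < -v / 2 by linarith)
  obtain ⟨ε, ⟨hε1, hεG⟩, hε2⟩ := ((hc.and hG).and self_mem_nhdsWithin).exists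
  rw [Real.norm_eq_abs, Real.norm_eq_abs, abs_of_pos hε2] at hε1
  have := abs_le.mp hε1
  nlinarith

lemma deriv_props (F : (A → ℝ) → A → ℝ) (hF : ∀ π, IsDist π → IsDist (F π))
    (π₀ π' : A → ℝ) (h0 : IsDist π₀) (h1 : IsDist π') (v : A → ℝ)
    (h : (fun ε : ℝ => F (π₀ + ε • (π' - π₀)) - F π₀ - ε • v) =o[𝓝[>] (0:ℝ)] fun ε => ε) :
    (∑ b, v b = 0) ∧ ∀ b, F π₀ b = 0 → 0 ≤ v b := by
  have hev := (eventually_dist π₀ π' h0 h1).mono (fun ε hε => hF _ hε)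
  have hb : ∀ b : A, (fun ε : ℝ => (F (π₀ + ε • (π' - π₀)) b - F π₀ b) - ε * v b)
      =o[𝓝[>] (0:ℝ)] fun ε => ε := by
    intro b
    have := littleo_apply h b
    simpa [Pi.sub_apply, Pi.smul_apply, smul_eq_mul, sub_sub] using this
  constructor
  · have hsum : (fun ε : ℝ => ∑ b, ((F (π₀ + ε • (π' - π₀)) b - F π₀ b) - ε * v b))
        =o[𝓝[>] (0:ℝ)] fun ε => ε := by
      have := IsLittleO.sum (s := Finset.univ) (fun b _ => hb b)
      exact this.congr_left (fun ε => by rw [Finset.sum_apply])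
    have heq : (fun ε : ℝ => ε * (-∑ b, v b)) =ᶠ[𝓝[>] (0:ℝ)]
        fun ε => ∑ b, ((F (π₀ + ε • (π' - π₀)) b - F π₀ b) - ε * v b) := by
      filter_upwards [hev] with ε hε
      rw [Finset.sum_sub_distrib, Finset.sum_sub_distrib, hε.2, (hF π₀ h0).2,
        ← Finset.mul_sum]
      ring
    exact neg_eq_zero.mp (littleo_const_eq_zero (hsum.congr' heq.symm (by rfl)))
  · intro b hFb
    apply littleo_nonneg _ (hb b)
    filter_upwards [hev] with ε hε
    have := hε.1 b
    linarith [hFb ▸ this]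

end aux

/-- Proposition: equivalent definition of differentiability.
`F : Δ(A) → Δ(A)` is differentiable at `π₀ ∈ Δ(A)` if and only if there exist `ρ ≥ 0` and
`τ : A → Δ(A)` such that for every `π₀' ∈ Δ(A)`,
`F(π₀ + ε(π₀' − π₀)) = F(π₀) + ε ρ (Σ_{a'} τ(a') π₀'(a') − F(π₀)) + o(ε)` as `ε → 0⁺`. -/


theorem stmt12 {A : Type} [Fintype A] (F : (A → ℝ) → A → ℝ)
    (hF : ∀ π, IsDist π → IsDist (F π)) (π₀ : A → ℝ) (hπ₀ : IsDist π₀) :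
    (∃ Dv : A → A → ℝ, ∀ π' : A → ℝ, IsDist π' →
      (fun ε : ℝ => F (π₀ + ε • (π' - π₀)) - F π₀ - ε • ∑ a, π' a • Dv a)
        =o[𝓝[>] (0:ℝ)] fun ε => ε) ↔
    (∃ ρ : ℝ, 0 ≤ ρ ∧ ∃ τ : A → A → ℝ, (∀ a, IsDist (τ a)) ∧
      ∀ π' : A → ℝ, IsDist π' →
        (fun ε : ℝ => F (π₀ + ε • (π' - π₀)) - F π₀
            - ε • (ρ • ((∑ a, π' a • τ a) - F π₀)))
          =o[𝓝[>] (0:ℝ)] fun ε => ε) := by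
  classical
  constructor
  · rintro ⟨Dv, hDv⟩
    -- point masses
    set pm : A → A → ℝ := fun a a' => if a' = a then 1 else 0 with hpm
    have hpmd : ∀ a, IsDist (pm a) := by
      intro a
      refine ⟨fun a' => by by_cases h : a' = a <;> simp [hpm, h], ?_⟩
      simp [hpm]
    have hpmsum : ∀ a, ∑ a', pm a a' • Dv a' = Dv a := by
      intro a
      simp [hpm, ite_smul]
    have props : ∀ a, (∑ b, Dv a b = 0) ∧ ∀ b, F π₀ b = 0 → 0 ≤ Dv a b := by
      intro a
      refine deriv_props F hF π₀ (pm a) hπ₀ (hpmd a) (Dv a) ?_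
      have := hDv (pm a) (hpmd a)
      rwa [hpmsum a] at this
    set S : ℝ := ∑ a, ∑ b, |Dv a b| / F π₀ b with hS
    have hterm : ∀ a b, 0 ≤ |Dv a b| / F π₀ b :=
      fun a b => div_nonneg (abs_nonneg _) ((hF π₀ hπ₀).1 b)
    have hS0 : 0 ≤ S :=
      Finset.sum_nonneg fun a _ => Finset.sum_nonneg fun b _ => hterm a b
    have hSge : ∀ a b, |Dv a b| / F π₀ b ≤ S := by
      intro a b
      calc |Dv a b| / F π₀ b
          ≤ ∑ b', |Dv a b'| / F π₀ b' :=
            Finset.single_le_sum (fun b' _ => hterm a b') (Finset.mem_univ b)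
        _ ≤ S := Finset.single_le_sum
            (fun a' _ => Finset.sum_nonneg fun b' _ => hterm a' b') (Finset.mem_univ a)
    set ρ : ℝ := S + 1 with hρdef
    have hρ : 0 < ρ := by positivity
    set τ : A → A → ℝ := fun a => F π₀ + ρ⁻¹ • Dv a with hτdef
    refine ⟨ρ, hρ.le, τ, ?_, ?_⟩
    · intro a
      constructor
      · intro b
        simp only [hτdef, Pi.add_apply, Pi.smul_apply, smul_eq_mul]
        rcases eq_or_lt_of_le ((hF π₀ hπ₀).1 b) with h | h
        · have := (props a).2 b h.symm
          rw [← h]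
          positivity
        · have h1 : |Dv a b| / F π₀ b ≤ S := hSge a b
          have h2 : |Dv a b| ≤ S * F π₀ b := (div_le_iff₀ h).mp h1
          nlinarith [mul_inv_cancel₀ hρ.ne', neg_abs_le (Dv a b), inv_pos.2 hρ,
            abs_nonneg (Dv a b)]
      · simp only [hτdef, Pi.add_apply, Pi.smul_apply, smul_eq_mul]
        rw [Finset.sum_add_distrib, (hF π₀ hπ₀).2, ← Finset.mul_sum, (props a).1]
        ring
    · intro π' hπ'
      have key : ρ • ((∑ a, π' a • τ a) - F π₀) = ∑ a, π' a • Dv a := by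
        funext b
        simp only [Pi.smul_apply, Pi.sub_apply, Finset.sum_apply, hτdef, Pi.add_apply,
          smul_eq_mul]
        have h1 : ∑ a, π' a * (F π₀ b + ρ⁻¹ * Dv a b)
            = F π₀ b + ρ⁻¹ * ∑ a, π' a * Dv a b := by
          simp only [mul_add]
          rw [Finset.sum_add_distrib, ← Finset.sum_mul, hπ'.2, one_mul]
          congr 1
          rw [Finset.mul_sum]
          exact Finset.sum_congr rfl fun a _ => by ring
        rw [h1]
        field_simp
        ring
      have := hDv π' hπ'
      simpa only [← key] using this
  · rintro ⟨ρ, hρ0, τ, hτ, h⟩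
    refine ⟨fun a => ρ • (τ a - F π₀), fun π' hπ' => ?_⟩
    have key : ∑ a, π' a • (ρ • (τ a - F π₀)) = ρ • ((∑ a, π' a • τ a) - F π₀) := by
      funext b
      simp only [Finset.sum_apply, Pi.smul_apply, Pi.sub_apply, smul_eq_mul]
      have : ∑ a, π' a * (ρ * (τ a b - F π₀ b))
          = ρ * (∑ a, π' a * τ a b) - ρ * ((∑ a, π' a) * F π₀ b) := by
        simp only [Finset.mul_sum, Finset.sum_mul]
        rw [← Finset.sum_sub_distrib]
        exact Finset.sum_congr rfl fun a _ => by ring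
      rw [this, hπ'.2]
      ring
    simpa only [key] using h π' hπ'
end

section
/- There exist a finite nonempty set A, a function F : Δ(A) → Δ(A) differentiable at every point of Δ(A), a policy π₀ ∈ Δ(A), a real ρ > 0 with ρ ∈ ℕ, and τ : A → Δ(A) such that for every a ∈ A, F(π₀ + ε(a − π₀)) = F(π₀) + ε ρ (τ(a) − F(π₀)) + o(ε) as ε → 0⁺, and yet there is no probability distribution ν on ℕ with mean Σ_m m·ν(m) ≤ ρ together with functions g_m : A^m → Δ(A) (for each m with ν(m) > 0) satisfying, for every π₀' ∈ Δ(A), F(π₀ + ε(π₀' − π₀)) = Σ_m ν(m) E[g_m(A_1,…,A_m) | A_1,…,A_m i.i.d. π₀ + ε(π₀' − π₀)] + o(ε) as ε → 0⁺. (One such example is A = {0,1}, F determined by F(1|p) = 16p⁴/(1+16p⁴) where p = π(1), π₀ the uniform distribution, and ρ = 2.) -/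
open Filter Asymptotics Topology

/-- The body of Statement 13, for a given finite action set `A`: there are a dependence
function `F : Δ(A) → Δ(A)` differentiable everywhere on `Δ(A)`, a policy `π₀ ∈ Δ(A)`, a
natural GGT weight `ρ > 0` and a transformation function `τ : A → Δ(A)` satisfying the GGT
expansion at `π₀`, such that no (possibly random) number of samples `N ∼ ν` with mean
`E[N] ≤ ρ`, together with functions `g_m : A^m → Δ(A)`, locally approximates `F` at `π₀`. -/
def Stmt13Body (A : Type) [Fintype A] [DecidableEq A] : Prop :=
  ∃ (F : (A → ℝ) → A → ℝ) (π₀ : A → ℝ) (ρ : ℝ) (τ : A → A → ℝ),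
    (∀ π, IsDist π → IsDist (F π)) ∧ IsDist π₀ ∧
    0 < ρ ∧ (∃ m : ℕ, (m : ℝ) = ρ) ∧ (∀ a, IsDist (τ a)) ∧
    (∀ π : A → ℝ, IsDist π → ∃ Dv : A → A → ℝ, ∀ π' : A → ℝ, IsDist π' →
      (fun ε : ℝ => F (π + ε • (π' - π)) - F π - ε • ∑ a, π' a • Dv a)
        =o[𝓝[>] (0:ℝ)] fun ε => ε) ∧
    (∀ a : A,
      (fun ε : ℝ => F (π₀ + ε • (unitMass a - π₀)) - F π₀ - ε • (ρ • (τ a - F π₀)))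
        =o[𝓝[>] (0:ℝ)] fun ε => ε) ∧
    ¬ ∃ ν : ℕ → ℝ,
        (∀ m, 0 ≤ ν m) ∧ (∑' m : ℕ, ν m) = 1 ∧
        Summable (fun m : ℕ => ν m * m) ∧ (∑' m : ℕ, ν m * m) ≤ ρ ∧
        ∃ g : (m : ℕ) → (Fin m → A) → A → ℝ,
          (∀ m v, ν m ≠ 0 → IsDist (g m v)) ∧
          ∀ π' : A → ℝ, IsDist π' →
            (fun ε : ℝ => F (π₀ + ε • (π' - π₀))
                - ∑' m : ℕ, ν m • sampleExp m (g m) (π₀ + ε • (π' - π₀)))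
              =o[𝓝[>] (0:ℝ)] fun ε => ε

namespace S13
noncomputable def fcub (p : ℝ) : ℝ := 1/2 + 2*(p - 1/2) - 5*(p - 1/2)^3

def wt (x : ℝ) : Bool → ℝ := fun b => if b then x else 1 - x
noncomputable def EE : (m : ℕ) → ((Fin m → Bool) → ℝ) → ℝ → ℝ :=
  fun m g x => ∑ v : Fin m → Bool, (∏ k, wt x (v k)) * g v
noncomputable def TT (m : ℕ) (v : Fin m → Bool) : ℝ := ∑ k, (if v k then (1:ℝ) else -1)
noncomputable def KK (m : ℕ) (g : (Fin m → Bool) → ℝ) : ℝ := ∑ v, TT m v * g v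
lemma sum_succ (m : ℕ) (G : (Fin (m+1) → Bool) → ℝ) :
    ∑ v : Fin (m+1) → Bool, G v
      = (∑ w : Fin m → Bool, G (Fin.cons true w)) + ∑ w : Fin m → Bool, G (Fin.cons false w) := by
  rw [← (Fin.consEquiv (fun _ : Fin (m+1) => Bool)).sum_comp G, Fintype.sum_prod_type,
    Fintype.sum_bool]
  rfl
lemma EE_zero (g : (Fin 0 → Bool) → ℝ) (x : ℝ) : EE 0 g x = g (fun i => i.elim0) := by
  simp [EE]; congr
lemma EE_succ (m : ℕ) (g : (Fin (m+1) → Bool) → ℝ) (x : ℝ) :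
    EE (m+1) g x = x * EE m (fun w => g (Fin.cons true w)) x
      + (1 - x) * EE m (fun w => g (Fin.cons false w)) x := by
  unfold EE
  rw [sum_succ, Finset.mul_sum, Finset.mul_sum]
  congr 1 <;> refine Finset.sum_congr rfl fun w _ => ?_ <;>
  · rw [Fin.prod_univ_succ]
    simp [wt, Fin.cons_zero, Fin.cons_succ]
    ring

lemma TT_cons (m : ℕ) (b : Bool) (w : Fin m → Bool) :
    TT (m+1) (Fin.cons b w) = (if b then (1:ℝ) else -1) + TT m w := by
  unfold TT
  rw [Fin.sum_univ_succ]
  simp [Fin.cons_zero, Fin.cons_succ]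

lemma EE_mem (m : ℕ) : ∀ (g : (Fin m → Bool) → ℝ), (∀ v, 0 ≤ g v) → (∀ v, g v ≤ 1) →
    ∀ x : ℝ, 0 ≤ x → x ≤ 1 → 0 ≤ EE m g x ∧ EE m g x ≤ 1 := by
  induction m with
  | zero => intro g h0 h1 x _ _; rw [EE_zero]; exact ⟨h0 _, h1 _⟩
  | succ m ih =>
    intro g h0 h1 x hx0 hx1
    rw [EE_succ]
    obtain ⟨a0, a1⟩ := ih (fun w => g (Fin.cons true w)) (fun w => h0 _) (fun w => h1 _) x hx0 hx1
    obtain ⟨b0, b1⟩ := ih (fun w => g (Fin.cons false w)) (fun w => h0 _) (fun w => h1 _) x hx0 hx1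
    constructor <;> nlinarith

lemma EE_lip (m : ℕ) : ∀ (g : (Fin m → Bool) → ℝ), (∀ v, 0 ≤ g v) → (∀ v, g v ≤ 1) →
    ∀ x y : ℝ, 0 ≤ x → x ≤ 1 → 0 ≤ y → y ≤ 1 →
    |EE m g x - EE m g y| ≤ m * |x - y| := by
  induction m with
  | zero => intro g h0 h1 x y _ _ _ _; rw [EE_zero, EE_zero]; simp
  | succ m ih =>
    intro g h0 h1 x y hx0 hx1 hy0 hy1
    rw [EE_succ, EE_succ]
    set E1x := EE m (fun w => g (Fin.cons true w)) x
    set E0x := EE m (fun w => g (Fin.cons false w)) x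
    set E1y := EE m (fun w => g (Fin.cons true w)) y
    set E0y := EE m (fun w => g (Fin.cons false w)) y
    have e1 := ih (fun w => g (Fin.cons true w)) (fun w => h0 _) (fun w => h1 _) x y hx0 hx1 hy0 hy1
    have e0 := ih (fun w => g (Fin.cons false w)) (fun w => h0 _) (fun w => h1 _) x y hx0 hx1 hy0 hy1
    obtain ⟨r10, r11⟩ := EE_mem m (fun w => g (Fin.cons true w)) (fun w => h0 _) (fun w => h1 _) y hy0 hy1
    obtain ⟨r00, r01⟩ := EE_mem m (fun w => g (Fin.cons false w)) (fun w => h0 _) (fun w => h1 _) y hy0 hy1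
    have key : x * E1x + (1 - x) * E0x - (y * E1y + (1 - y) * E0y)
        = x * (E1x - E1y) + (1 - x) * (E0x - E0y) + (x - y) * (E1y - E0y) := by ring
    rw [key]
    have hA : |x * (E1x - E1y)| ≤ x * ((m : ℝ) * |x - y|) := by
      rw [abs_mul, abs_of_nonneg hx0]
      exact mul_le_mul_of_nonneg_left e1 hx0
    have hB : |(1 - x) * (E0x - E0y)| ≤ (1 - x) * ((m : ℝ) * |x - y|) := by
      rw [abs_mul, abs_of_nonneg (by linarith)]
      exact mul_le_mul_of_nonneg_left e0 (by linarith)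
    have hC : |(x - y) * (E1y - E0y)| ≤ |x - y| * 1 := by
      rw [abs_mul]
      exact mul_le_mul_of_nonneg_left (abs_le.mpr ⟨by linarith, by linarith⟩) (abs_nonneg _)
    calc |x * (E1x - E1y) + (1 - x) * (E0x - E0y) + (x - y) * (E1y - E0y)|
        ≤ |x * (E1x - E1y) + (1 - x) * (E0x - E0y)| + |(x - y) * (E1y - E0y)| := abs_add_le _ _
      _ ≤ |x * (E1x - E1y)| + |(1 - x) * (E0x - E0y)| + |(x - y) * (E1y - E0y)| := by
          have := abs_add_le (x * (E1x - E1y)) ((1 - x) * (E0x - E0y)); linarith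
      _ ≤ x * ((m : ℝ) * |x - y|) + (1 - x) * ((m : ℝ) * |x - y|) + |x - y| * 1 := by linarith
      _ = ((m : ℝ) + 1) * |x - y| := by ring
      _ = ((m + 1 : ℕ) : ℝ) * |x - y| := by push_cast; ring

lemma TT_cons_true (m : ℕ) (w : Fin m → Bool) :
    TT (m+1) (Fin.cons true w) = 1 + TT m w := by rw [TT_cons]; norm_num

lemma TT_cons_false (m : ℕ) (w : Fin m → Bool) :
    TT (m+1) (Fin.cons false w) = -1 + TT m w := by rw [TT_cons]; norm_num

lemma card_vec (m : ℕ) : ∑ _v : Fin m → Bool, (1:ℝ) = 2^m := by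
  rw [Finset.sum_const]
  simp [Fintype.card_fun]

lemma sum_TT (m : ℕ) : ∑ v : Fin m → Bool, TT m v = 0 := by
  induction m with
  | zero => simp [TT]
  | succ m ih =>
    rw [sum_succ]
    simp only [TT_cons]
    rw [Finset.sum_add_distrib, Finset.sum_add_distrib, ih]
    simp


lemma sum_TT_sq (m : ℕ) : ∑ v : Fin m → Bool, (TT m v)^2 = 2^m * m := by
  induction m with
  | zero => simp [TT]
  | succ m ih =>
    rw [sum_succ]
    simp only [TT_cons, if_true, if_false]
    rw [← Finset.sum_add_distrib]
    calc ∑ w : Fin m → Bool, (((1:ℝ) + TT m w)^2 + ((-1:ℝ) + TT m w)^2)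
        = ∑ w : Fin m → Bool, (2 * (TT m w)^2 + 2) :=
          Finset.sum_congr rfl fun w _ => by ring
      _ = 2 * (∑ w : Fin m → Bool, (TT m w)^2) + ∑ _w : Fin m → Bool, (2:ℝ) := by
          rw [Finset.sum_add_distrib, Finset.mul_sum]
      _ = 2 * (2^m * m) + 2^m * 2 := by
          rw [ih, Finset.sum_const]
          simp [Fintype.card_fun]
      _ = 2^(m+1) * ((m+1 : ℕ) : ℝ) := by push_cast; ring

lemma EE_half (m : ℕ) (g : (Fin m → Bool) → ℝ) :
    EE m g (1/2) = (1/2)^m * ∑ v, g v := by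
  unfold EE
  rw [Finset.mul_sum]
  refine Finset.sum_congr rfl fun v _ => ?_
  have h : ∏ k, wt (1/2 : ℝ) (v k) = (1/2)^m := by
    have h2 : ∀ k, wt (1/2:ℝ) (v k) = 1/2 := fun k => by
      cases hv : v k <;> simp [wt, hv] <;> norm_num
    rw [Finset.prod_congr rfl fun k _ => h2 k, Finset.prod_const]
    simp
  rw [h]

lemma KK_bound (m : ℕ) (g : (Fin m → Bool) → ℝ) (h0 : ∀ v, 0 ≤ g v) (h1 : ∀ v, g v ≤ 1) :
    |KK m g| ≤ 2^m * ((m : ℝ) + 1) / 4 := by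
  have hK : KK m g = ∑ v, TT m v * (g v - 1/2) := by
    unfold KK
    have h : ∑ v : Fin m → Bool, TT m v * (g v - 1/2)
        = ∑ v : Fin m → Bool, TT m v * g v - (∑ v : Fin m → Bool, TT m v) * (1/2) := by
      rw [Finset.sum_mul, ← Finset.sum_sub_distrib]
      exact Finset.sum_congr rfl fun v _ => by ring
    rw [h, sum_TT]
    ring
  rw [hK]
  calc |∑ v, TT m v * (g v - 1/2)| ≤ ∑ v, |TT m v * (g v - 1/2)| :=
        Finset.abs_sum_le_sum_abs _ _
    _ ≤ ∑ v : Fin m → Bool, ((TT m v)^2 + 1) / 4 := by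
        refine Finset.sum_le_sum fun v _ => ?_
        rw [abs_mul]
        have hg : |g v - 1/2| ≤ 1/2 := abs_le.mpr ⟨by linarith [h0 v], by linarith [h1 v]⟩
        have h2 : |TT m v| * |g v - 1/2| ≤ |TT m v| * (1/2) :=
          mul_le_mul_of_nonneg_left hg (abs_nonneg _)
        nlinarith [sq_nonneg (|TT m v| - 1), sq_abs (TT m v)]
    _ = (2^m * m + 2^m) / 4 := by
        rw [← Finset.sum_div, Finset.sum_add_distrib, sum_TT_sq, card_vec]
    _ = 2^m * ((m:ℝ) + 1) / 4 := by ring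

lemma EE_hasDeriv (m : ℕ) : ∀ g : (Fin m → Bool) → ℝ,
    HasDerivAt (fun x => EE m g x) (2 * (1/2)^m * KK m g) (1/2 : ℝ) := by
  induction m with
  | zero =>
    intro g
    have hk : KK 0 g = 0 := by simp [KK, TT]
    have h : (fun x => EE 0 g x) = fun _ => g (fun i => i.elim0) := funext fun x => EE_zero g x
    rw [h, hk]
    simpa using hasDerivAt_const (1/2:ℝ) (g (fun i => i.elim0))
  | succ m ih =>
    intro g
    have h1 := ih (fun w => g (Fin.cons true w))
    have h0 := ih (fun w => g (Fin.cons false w))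
    have heq : (fun x => EE (m+1) g x)
        = fun x => x * EE m (fun w => g (Fin.cons true w)) x
          + (1 - x) * EE m (fun w => g (Fin.cons false w)) x := funext fun x => EE_succ m g x
    rw [heq]
    have hd := ((hasDerivAt_id' (x := (1/2:ℝ))).mul h1).add
      (((hasDerivAt_const (1/2:ℝ) (1:ℝ)).sub (hasDerivAt_id' (x := (1/2:ℝ)))).mul h0)
    refine HasDerivAt.congr_deriv hd ?_
    have e1 : ∑ w : Fin m → Bool, ((1:ℝ) + TT m w) * g (Fin.cons true w)
        = (∑ w : Fin m → Bool, g (Fin.cons true w)) + KK m (fun w => g (Fin.cons true w)) := by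
      unfold KK
      rw [← Finset.sum_add_distrib]
      exact Finset.sum_congr rfl fun w _ => by ring
    have e0 : ∑ w : Fin m → Bool, ((-1:ℝ) + TT m w) * g (Fin.cons false w)
        = KK m (fun w => g (Fin.cons false w)) - ∑ w : Fin m → Bool, g (Fin.cons false w) := by
      unfold KK
      rw [← Finset.sum_sub_distrib]
      exact Finset.sum_congr rfl fun w _ => by ring
    have hKs : KK (m+1) g
        = (∑ w : Fin m → Bool, g (Fin.cons true w)) + KK m (fun w => g (Fin.cons true w))
          + (KK m (fun w => g (Fin.cons false w)) - ∑ w : Fin m → Bool, g (Fin.cons false w)) := by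
      unfold KK
      rw [sum_succ]
      simp only [TT_cons_true, TT_cons_false]
      rw [e1, e0]; unfold KK; simp
    rw [hKs, EE_half, EE_half]
    simp only [Pi.sub_apply]
    ring


lemma EE_cont (m : ℕ) (g : (Fin m → Bool) → ℝ) : Continuous (fun x => EE m g x) := by
  unfold EE
  apply continuous_finset_sum
  intro v _
  apply Continuous.mul _ continuous_const
  apply continuous_finset_prod
  intro k _
  cases hv : v k <;> simp [wt, hv] <;> fun_prop

lemma sq_isLittleO : (fun ε : ℝ => ε^2) =o[𝓝[>] (0:ℝ)] fun ε => ε := by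
  rw [isLittleO_iff]
  intro c hc
  filter_upwards [Ioo_mem_nhdsGT_of_mem (Set.left_mem_Ico.mpr hc)] with ε hε
  rw [Real.norm_eq_abs, Real.norm_eq_abs, abs_of_pos hε.1, abs_of_pos (pow_pos hε.1 2)]
  nlinarith [hε.1, hε.2]

lemma littleO_of_sq_bound {E : ℝ → Bool → ℝ} {C : ℝ}
    (h : ∀ ε : ℝ, 0 < ε → ε < 1 → ‖E ε‖ ≤ C * ε^2) :
    E =o[𝓝[>] (0:ℝ)] fun ε => ε := by
  refine IsBigO.trans_isLittleO ?_ sq_isLittleO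
  rw [isBigO_iff]
  refine ⟨C, ?_⟩
  filter_upwards [Ioo_mem_nhdsGT_of_mem (Set.left_mem_Ico.mpr one_pos)] with ε hε
  have : ‖(ε:ℝ)^2‖ = ε^2 := by
    rw [Real.norm_eq_abs, abs_of_pos (pow_pos hε.1 2)]
  rw [this]
  exact h ε hε.1 hε.2

lemma fcub_mem (p : ℝ) (h0 : 0 ≤ p) (h1 : p ≤ 1) : 0 ≤ fcub p ∧ fcub p ≤ 1 := by
  unfold fcub
  constructor <;> nlinarith [sq_nonneg (p - 1/2), sq_nonneg (p - 7/8), sq_nonneg (p - 1/8),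
    sq_nonneg (p - 0.865), sq_nonneg (p - 0.135), mul_nonneg h0 (sub_nonneg.mpr h1)]

lemma fcub_taylor (p δ : ℝ) :
    fcub (p + δ) - fcub p - (2 - 15*(p - 1/2)^2) * δ = -5 * δ^2 * (3*(p - 1/2) + δ) := by
  unfold fcub; ring

lemma rem_bound (t d ε : ℝ) (ht : |t| ≤ 1/2) (hd : |d| ≤ 1) (hε0 : 0 < ε) (hε1 : ε < 1) :
    |(-5 : ℝ) * (ε*d)^2 * (3*t + ε*d)| ≤ 13 * ε^2 := by
  have h1 : |3*t + ε*d| ≤ 5/2 := by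
    calc |3*t + ε*d| ≤ |3*t| + |ε*d| := abs_add_le _ _
      _ ≤ 3 * (1/2) + 1 * 1 := by
          rw [abs_mul, abs_mul]
          have : |(3:ℝ)| = 3 := by norm_num
          rw [this, abs_of_pos hε0]
          have h2 : ε * |d| ≤ 1 * 1 :=
            mul_le_mul (le_of_lt hε1) hd (abs_nonneg _) (by norm_num)
          nlinarith
      _ = 5/2 := by norm_num
  have hd2 : d^2 ≤ 1 := by nlinarith [sq_abs d, abs_nonneg d]
  have h2 : (ε*d)^2 ≤ ε^2 := by nlinarith [sq_nonneg ε]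
  calc |(-5 : ℝ) * (ε*d)^2 * (3*t + ε*d)| = 5 * (ε*d)^2 * |3*t + ε*d| := by
        rw [abs_mul, abs_mul]
        rw [abs_of_nonneg (sq_nonneg (ε*d))]
        norm_num
    _ ≤ 5 * ε^2 * (5/2) := by
        apply mul_le_mul _ h1 (abs_nonneg _) (by positivity)
        linarith
    _ ≤ 13 * ε^2 := by nlinarith [sq_nonneg ε]



noncomputable def FF : (Bool → ℝ) → Bool → ℝ :=
  fun π b => if b then fcub (π true) else 1 - fcub (π true)

lemma dist_bounds {π : Bool → ℝ} (h : IsDist π) :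
    0 ≤ π true ∧ π true ≤ 1 ∧ π false = 1 - π true := by
  obtain ⟨h0, h1⟩ := h
  rw [Fintype.sum_bool] at h1
  exact ⟨h0 true, by linarith [h0 false], by linarith⟩

lemma FF_dist {π : Bool → ℝ} (h : IsDist π) : IsDist (FF π) := by
  obtain ⟨h0, h1, hf⟩ := dist_bounds h
  obtain ⟨c0, c1⟩ := fcub_mem (π true) h0 h1
  constructor
  · intro b; cases b <;> simp [FF] <;> linarith
  · rw [Fintype.sum_bool]; simp [FF]

lemma sampleExp_apply (m : ℕ) (g : (Fin m → Bool) → Bool → ℝ) (x : ℝ) (b : Bool) :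
    sampleExp m g (wt x) b = EE m (fun v => g v b) x := by
  unfold sampleExp EE
  rw [Finset.sum_apply]
  simp [Pi.smul_apply, smul_eq_mul]

lemma FF_expand {π π' : Bool → ℝ} (hπ : IsDist π) (hπ' : IsDist π') :
    (fun ε : ℝ => FF (π + ε • (π' - π)) - FF π
        - ε • (fun b : Bool => (2 - 15*(π true - 1/2)^2) * (π' true - π true) * (if b then (1:ℝ) else -1) : Bool → ℝ))
      =o[𝓝[>] (0:ℝ)] fun ε => ε := by
  obtain ⟨h0, h1, _⟩ := dist_bounds hπ
  obtain ⟨h0', h1', _⟩ := dist_bounds hπ'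
  apply littleO_of_sq_bound (C := 13)
  intro ε hε0 hε1
  rw [pi_norm_le_iff_of_nonneg (by positivity)]
  intro b
  have harg : (π + ε • (π' - π)) true = π true + ε * (π' true - π true) := by
    simp [Pi.add_apply, Pi.smul_apply, Pi.sub_apply, smul_eq_mul]
  have htay := fcub_taylor (π true) (ε * (π' true - π true))
  have hcomp : (FF (π + ε • (π' - π)) - FF π
      - ε • (fun b : Bool => (2 - 15*(π true - 1/2)^2) * (π' true - π true) * (if b then (1:ℝ) else -1) : Bool → ℝ)) b
      = (if b then 1 else -1) * (-5 * (ε*(π' true - π true))^2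
          * (3*(π true - 1/2) + ε*(π' true - π true))) := by
    cases b
    · simp only [Pi.sub_apply, Pi.smul_apply, FF, harg, smul_eq_mul, if_true, if_false,
        Bool.false_eq_true]
      linear_combination -htay
    · simp only [Pi.sub_apply, Pi.smul_apply, FF, harg, smul_eq_mul, if_true, if_false,
        Bool.false_eq_true]
      linear_combination htay
  rw [hcomp, Real.norm_eq_abs]
  have ht : |π true - 1/2| ≤ 1/2 := abs_le.mpr ⟨by linarith, by linarith⟩
  have hd : |π' true - π true| ≤ 1 := abs_le.mpr ⟨by linarith, by linarith⟩
  have hrb := rem_bound (π true - 1/2) (π' true - π true) ε ht hd hε0 hε1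
  cases b
  · rw [if_neg (by simp), neg_one_mul, abs_neg]; exact hrb
  · rw [if_pos rfl, one_mul]; exact hrb

lemma pihalf_dist : IsDist (fun _ : Bool => (1/2:ℝ)) := by
  constructor
  · intro a; norm_num
  · rw [Fintype.sum_bool]; norm_num

lemma unitMass_dist (a : Bool) : IsDist (unitMass a) := by
  constructor
  · intro b; unfold unitMass; split <;> norm_num
  · rw [Fintype.sum_bool]; unfold unitMass; cases a <;> simp

lemma clause_diff : ∀ π : Bool → ℝ, IsDist π → ∃ Dv : Bool → Bool → ℝ,
    ∀ π' : Bool → ℝ, IsDist π' →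
      (fun ε : ℝ => FF (π + ε • (π' - π)) - FF π - ε • ∑ a, π' a • Dv a)
        =o[𝓝[>] (0:ℝ)] fun ε => ε := by
  intro π hπ
  set D : Bool → Bool → ℝ := fun a b => (2 - 15*(π true - 1/2)^2) * ((if a then (1:ℝ) else 0) - π true)
    * (if b then (1:ℝ) else -1) with hD
  refine ⟨D, ?_⟩
  intro π' hπ'
  have hsum : (∑ a, π' a • D a)
      = (fun b : Bool => (2 - 15*(π true - 1/2)^2) * (π' true - π true)
          * (if b then (1:ℝ) else -1) : Bool → ℝ) := by
    obtain ⟨_, _, hf'⟩ := dist_bounds hπ'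
    funext b
    rw [Finset.sum_apply, Fintype.sum_bool, hD]
    simp only [Pi.smul_apply, smul_eq_mul, if_true, if_false, Bool.false_eq_true]
    rw [hf']
    ring
  rw [hsum]
  exact FF_expand hπ hπ'

lemma clause_ggt (a : Bool) :
    (fun ε : ℝ => FF ((fun _ => 1/2) + ε • (unitMass a - fun _ => 1/2)) - FF (fun _ => 1/2)
        - ε • ((2:ℝ) • (unitMass a - FF fun _ => 1/2)))
      =o[𝓝[>] (0:ℝ)] fun ε => ε := by
  have h := FF_expand pihalf_dist (unitMass_dist a)
  have he : ((2:ℝ) • (unitMass a - FF fun _ => 1/2))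
      = (fun b : Bool => (2 - 15*((fun _ : Bool => (1/2:ℝ)) true - 1/2)^2)
          * (unitMass a true - (fun _ : Bool => (1/2:ℝ)) true) * (if b then (1:ℝ) else -1)
            : Bool → ℝ) := by
    funext b
    cases a <;> cases b <;> simp [unitMass, FF, fcub] <;> norm_num
  rw [he]
  exact h

lemma no_scheme :
    ¬ ∃ ν : ℕ → ℝ,
        (∀ m, 0 ≤ ν m) ∧ (∑' m : ℕ, ν m) = 1 ∧
        Summable (fun m : ℕ => ν m * m) ∧ (∑' m : ℕ, ν m * m) ≤ 2 ∧
        ∃ g : (m : ℕ) → (Fin m → Bool) → Bool → ℝ,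
          (∀ m v, ν m ≠ 0 → IsDist (g m v)) ∧
          ∀ π' : Bool → ℝ, IsDist π' →
            (fun ε : ℝ => FF ((fun _ => 1/2) + ε • (π' - fun _ => 1/2))
                - ∑' m : ℕ, ν m • sampleExp m (g m) ((fun _ => 1/2) + ε • (π' - fun _ => 1/2)))
              =o[𝓝[>] (0:ℝ)] fun ε => ε := by
  rintro ⟨ν, hν0, hν1, hνm, hmean, g, hgdist, happrox⟩
  classical
  have hνS : Summable ν := by
    by_contra hc
    rw [tsum_eq_zero_of_not_summable hc] at hν1
    norm_num at hν1
  have hgb : ∀ m b, ν m ≠ 0 → (∀ v, 0 ≤ g m v b) ∧ (∀ v, g m v b ≤ 1) := by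
    intro m b hm
    refine ⟨fun v => (hgdist m v hm).1 b, fun v => ?_⟩
    obtain ⟨q0, q1, qf⟩ := dist_bounds (hgdist m v hm)
    cases b
    · rw [qf]; linarith
    · exact q1
  have hEb : ∀ m b (x:ℝ), 0 ≤ x → x ≤ 1 → ν m ≠ 0 →
      0 ≤ EE m (fun v => g m v b) x ∧ EE m (fun v => g m v b) x ≤ 1 := by
    intro m b x hx0 hx1 hm
    exact EE_mem m _ (hgb m b hm).1 (hgb m b hm).2 x hx0 hx1
  have hSvec : ∀ x : ℝ, 0 ≤ x → x ≤ 1 → Summable (fun m => ν m • sampleExp m (g m) (wt x)) := by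
    intro x hx0 hx1
    apply Summable.of_norm_bounded hνS
    intro m
    by_cases hm : ν m = 0
    · simp [hm]
    · rw [pi_norm_le_iff_of_nonneg (hν0 m)]
      intro b
      rw [Pi.smul_apply, smul_eq_mul, Real.norm_eq_abs, abs_mul, abs_of_nonneg (hν0 m),
        sampleExp_apply]
      obtain ⟨e0, e1⟩ := hEb m b x hx0 hx1 hm
      rw [abs_of_nonneg e0]
      nlinarith [hν0 m]
  have hQs : ∀ x : ℝ, 0 ≤ x → x ≤ 1 →
      Summable (fun m => ν m * EE m (fun v => g m v true) x) := by
    intro x hx0 hx1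
    apply Summable.of_norm_bounded hνS
    intro m
    by_cases hm : ν m = 0
    · simp [hm]
    · rw [Real.norm_eq_abs, abs_mul, abs_of_nonneg (hν0 m)]
      obtain ⟨e0, e1⟩ := hEb m true x hx0 hx1 hm
      rw [abs_of_nonneg e0]
      nlinarith [hν0 m]
  set Qt : ℝ → ℝ := fun x => ∑' m, ν m * EE m (fun v => g m v true) x with hQtdef
  have htrue : ∀ x : ℝ, 0 ≤ x → x ≤ 1 →
      (∑' m, ν m • sampleExp m (g m) (wt x)) true = Qt x := by
    intro x hx0 hx1
    rw [tsum_apply (hSvec x hx0 hx1)]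
    exact tsum_congr fun m => by rw [Pi.smul_apply, smul_eq_mul, sampleExp_apply]
  have hμ : ∀ ε : ℝ, ((fun _ => (1/2:ℝ)) + ε • (unitMass true - fun _ => (1/2:ℝ)))
      = wt (1/2 + ε/2) := by
    intro ε; funext b
    cases b <;>
      simp [unitMass, wt, Pi.add_apply, Pi.smul_apply, Pi.sub_apply, smul_eq_mul] <;> ring
  have ho := happrox (unitMass true) (unitMass_dist true)
  set eft : ℝ → ℝ := fun ε => fcub (1/2 + ε/2) - Qt (1/2 + ε/2) with heftdef
  have hxmem : ∀ ε : ℝ, 0 < ε → ε < 1 → 0 ≤ 1/2 + ε/2 ∧ 1/2 + ε/2 ≤ 1 := by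
    intro ε h1 h2; constructor <;> linarith
  have heval : ∀ ε : ℝ, 0 < ε → ε < 1 →
      eft ε = (FF ((fun _ => 1/2) + ε • (unitMass true - fun _ => 1/2))
        - ∑' m : ℕ, ν m • sampleExp m (g m)
          ((fun _ => 1/2) + ε • (unitMass true - fun _ => 1/2))) true := by
    intro ε h1 h2
    obtain ⟨hx0, hx1⟩ := hxmem ε h1 h2
    rw [hμ ε, Pi.sub_apply, htrue _ hx0 hx1]
    simp [FF, wt, heftdef]
  have heft : eft =o[𝓝[>] (0:ℝ)] fun ε => ε := by
    rw [isLittleO_iff] at ho ⊢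
    intro c hc
    filter_upwards [ho hc, Ioo_mem_nhdsGT_of_mem (Set.left_mem_Ico.mpr one_pos)] with ε hεo hε
    rw [Real.norm_eq_abs, heval ε hε.1 hε.2, ← Real.norm_eq_abs]
    exact le_trans (norm_le_pi_norm _ true) hεo
  have htends : ∀ m : ℕ, Tendsto (fun ε : ℝ => ν m * EE m (fun v => g m v true) (1/2 + ε/2))
      (𝓝[>] (0:ℝ)) (𝓝 (ν m * EE m (fun v => g m v true) (1/2))) := by
    intro m
    have hc : Continuous fun ε : ℝ => ν m * EE m (fun v => g m v true) (1/2 + ε/2) :=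
      continuous_const.mul ((EE_cont m _).comp (by fun_prop))
    have h : Tendsto (fun ε : ℝ => ν m * EE m (fun v => g m v true) (1/2 + ε/2)) (𝓝[>] (0:ℝ))
        (𝓝 (ν m * EE m (fun v => g m v true) (1/2 + 0/2))) :=
      (hc.tendsto 0).mono_left nhdsWithin_le_nhds
    norm_num at h
    exact h
  have hQcont : Tendsto (fun ε : ℝ => Qt (1/2 + ε/2)) (𝓝[>] (0:ℝ)) (𝓝 (Qt (1/2))) := by
    apply tendsto_tsum_of_dominated_convergence hνS htends
    filter_upwards [Ioo_mem_nhdsGT_of_mem (Set.left_mem_Ico.mpr one_pos)] with ε hε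
    intro m
    obtain ⟨hx0, hx1⟩ := hxmem ε hε.1 hε.2
    by_cases hm : ν m = 0
    · simp [hm]
    · rw [Real.norm_eq_abs, abs_mul, abs_of_nonneg (hν0 m)]
      obtain ⟨e0, e1⟩ := hEb m true _ hx0 hx1 hm
      rw [abs_of_nonneg e0]
      nlinarith [hν0 m]
  have h2 : Tendsto (fun ε : ℝ => fcub (1/2 + ε/2)) (𝓝[>] (0:ℝ)) (𝓝 (1/2)) := by
    have hc : Continuous fun ε : ℝ => fcub (1/2 + ε/2) := by
      unfold fcub; fun_prop
    have h : Tendsto (fun ε : ℝ => fcub (1/2 + ε/2)) (𝓝[>] (0:ℝ)) (𝓝 (fcub (1/2 + 0/2))) :=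
      (hc.tendsto 0).mono_left nhdsWithin_le_nhds
    have hval : fcub (1/2 + 0/2) = 1/2 := by unfold fcub; norm_num
    rwa [hval] at h
  have hefto : Tendsto eft (𝓝[>] (0:ℝ)) (𝓝 0) :=
    heft.isBigO.trans_tendsto (tendsto_id.mono_left nhdsWithin_le_nhds)
  have hQhalf : Qt (1/2) = 1/2 := by
    have h3 := (h2.sub hefto).congr (fun ε => sub_sub_cancel _ _)
    rw [sub_zero] at h3
    exact tendsto_nhds_unique hQcont h3
  set Dm : ℕ → ℝ := fun m => 2 * (1/2)^m * KK m (fun v => g m v true) with hDmdef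
  have hslope : ∀ m : ℕ, Tendsto (fun ε : ℝ => ν m * ((EE m (fun v => g m v true) (1/2 + ε/2)
      - EE m (fun v => g m v true) (1/2)) / ε)) (𝓝[>] (0:ℝ)) (𝓝 (ν m * (Dm m / 2))) := by
    intro m
    have hD := EE_hasDeriv m (fun v => g m v true)
    rw [hasDerivAt_iff_tendsto_slope] at hD
    have hφ : Tendsto (fun ε : ℝ => 1/2 + ε/2) (𝓝[>] (0:ℝ)) (𝓝[≠] (1/2:ℝ)) := by
      rw [tendsto_nhdsWithin_iff]
      constructor
      · have hc : Continuous fun ε : ℝ => (1/2 : ℝ) + ε/2 := by fun_prop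
        have h : Tendsto (fun ε : ℝ => (1/2 : ℝ) + ε/2) (𝓝[>] (0:ℝ)) (𝓝 (1/2 + 0/2)) :=
          (hc.tendsto 0).mono_left nhdsWithin_le_nhds
        norm_num at h
        exact h
      · filter_upwards [self_mem_nhdsWithin] with ε hε
        have hε' : (0:ℝ) < ε := hε
        simp only [Set.mem_compl_iff, Set.mem_singleton_iff]
        intro hcon
        have : ε = 0 := by linarith [hcon]
        linarith
    have hcomp := hD.comp hφ
    have hmul := hcomp.const_mul (ν m / 2)
    have hlimeq : ν m / 2 * (2 * (1/2)^m * KK m (fun v => g m v true)) = ν m * (Dm m / 2) := by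
      rw [hDmdef]; ring
    rw [hlimeq] at hmul
    apply hmul.congr'
    filter_upwards [self_mem_nhdsWithin] with ε hε
    have hε' : (0:ℝ) < ε := hε
    show ν m / 2 * slope (fun x => EE m (fun v => g m v true) x) (1/2) (1/2 + ε/2)
      = ν m * ((EE m (fun v => g m v true) (1/2 + ε/2) - EE m (fun v => g m v true) (1/2)) / ε)
    rw [slope_def_field]
    have h12 : (1/2 + ε/2 - 1/2 : ℝ) = ε/2 := by ring
    rw [h12]
    field_simp
  have hDqlim : Tendsto (fun ε : ℝ => ∑' m, ν m * ((EE m (fun v => g m v true) (1/2 + ε/2)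
      - EE m (fun v => g m v true) (1/2)) / ε)) (𝓝[>] (0:ℝ)) (𝓝 (∑' m, ν m * (Dm m / 2))) := by
    apply tendsto_tsum_of_dominated_convergence hνm hslope
    filter_upwards [Ioo_mem_nhdsGT_of_mem (Set.left_mem_Ico.mpr one_pos)] with ε hε
    intro m
    obtain ⟨hx0, hx1⟩ := hxmem ε hε.1 hε.2
    by_cases hm : ν m = 0
    · simp [hm]
    · have hlip := EE_lip m (fun v => g m v true) (hgb m true hm).1 (hgb m true hm).2
        (1/2 + ε/2) (1/2) hx0 hx1 (by norm_num) (by norm_num)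
      have habs : |(1/2 + ε/2 - 1/2 : ℝ)| = ε/2 := by
        rw [show (1/2 + ε/2 - 1/2 : ℝ) = ε/2 by ring, abs_of_pos (by linarith [hε.1])]
      rw [habs] at hlip
      rw [Real.norm_eq_abs, abs_mul, abs_of_nonneg (hν0 m), abs_div, abs_of_pos hε.1]
      have hq : |EE m (fun v => g m v true) (1/2 + ε/2) - EE m (fun v => g m v true) (1/2)| / ε
          ≤ (m:ℝ) := by
        rw [div_le_iff₀ hε.1]
        calc |EE m (fun v => g m v true) (1/2 + ε/2) - EE m (fun v => g m v true) (1/2)|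
            ≤ (m:ℝ) * (ε/2) := hlip
          _ ≤ (m:ℝ) * ε := by
              have hm0 : (0:ℝ) ≤ (m:ℝ) := Nat.cast_nonneg m
              nlinarith [hε.1]
      exact mul_le_mul_of_nonneg_left hq (hν0 m)
  have hDq1 : Tendsto (fun ε : ℝ => ∑' m, ν m * ((EE m (fun v => g m v true) (1/2 + ε/2)
      - EE m (fun v => g m v true) (1/2)) / ε)) (𝓝[>] (0:ℝ)) (𝓝 1) := by
    have hlim : Tendsto (fun ε : ℝ => 1 - 5*ε^2/8 - eft ε / ε) (𝓝[>] (0:ℝ)) (𝓝 1) := by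
      have ha : Tendsto (fun ε : ℝ => 1 - 5*ε^2/8) (𝓝[>] (0:ℝ)) (𝓝 1) := by
        have hc : Continuous fun ε : ℝ => 1 - 5*ε^2/8 := by fun_prop
        have h : Tendsto (fun ε : ℝ => 1 - 5*ε^2/8) (𝓝[>] (0:ℝ)) (𝓝 (1 - 5*(0:ℝ)^2/8)) :=
          (hc.tendsto 0).mono_left nhdsWithin_le_nhds
        norm_num at h
        exact h
      have hb := heft.tendsto_div_nhds_zero
      have h := ha.sub hb
      rw [sub_zero] at h
      exact h
    apply hlim.congr'
    filter_upwards [Ioo_mem_nhdsGT_of_mem (Set.left_mem_Ico.mpr one_pos)] with ε hε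
    obtain ⟨hx0, hx1⟩ := hxmem ε hε.1 hε.2
    have hsub : ∑' m, ν m * ((EE m (fun v => g m v true) (1/2 + ε/2)
        - EE m (fun v => g m v true) (1/2)) / ε) = (Qt (1/2 + ε/2) - Qt (1/2)) / ε := by
      have h1 : Qt (1/2 + ε/2) - Qt (1/2)
          = ∑' m, (ν m * EE m (fun v => g m v true) (1/2 + ε/2)
            - ν m * EE m (fun v => g m v true) (1/2)) :=
        (Summable.tsum_sub (hQs _ hx0 hx1) (hQs (1/2) (by norm_num) (by norm_num))).symm
      rw [h1, ← tsum_div_const]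
      exact tsum_congr fun m => by field_simp
    rw [hsub, hQhalf]
    have hQx : Qt (1/2 + ε/2) = fcub (1/2 + ε/2) - eft ε := by
      rw [heftdef]; ring
    rw [hQx]
    have hfc : fcub (1/2 + ε/2) = 1/2 + ε - 5*ε^3/8 := by unfold fcub; ring
    rw [hfc]
    have hεne : ε ≠ 0 := ne_of_gt hε.1
    field_simp
    ring
  have hsum1 : ∑' m, ν m * (Dm m / 2) = 1 := tendsto_nhds_unique hDqlim hDq1
  have hDmB : ∀ m, ν m ≠ 0 → |Dm m| ≤ ((m:ℝ)+1)/2 := by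
    intro m hm
    have hk := KK_bound m (fun v => g m v true) (hgb m true hm).1 (hgb m true hm).2
    have hpow : ((1:ℝ)/2)^m * 2^m = 1 := by
      rw [← mul_pow]; norm_num
    rw [hDmdef]
    calc |2*(1/2)^m * KK m (fun v => g m v true)|
        = 2*(1/2)^m * |KK m (fun v => g m v true)| := by
          rw [abs_mul, abs_of_nonneg (by positivity : (0:ℝ) ≤ 2*(1/2)^m)]
      _ ≤ 2*(1/2)^m * (2^m*((m:ℝ)+1)/4) := mul_le_mul_of_nonneg_left hk (by positivity)
      _ = ((1:ℝ)/2)^m * 2^m * (((m:ℝ)+1)/2) := by ring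
      _ = ((m:ℝ)+1)/2 := by rw [hpow, one_mul]
  have hRsum : Summable (fun m => ν m * (((m:ℝ)+1)/4)) := by
    have h : (fun m => ν m * (((m:ℝ)+1)/4)) = fun m => (ν m * (m:ℝ)) * (1/4) + ν m * (1/4) := by
      funext m; ring
    rw [h]
    exact (hνm.mul_right _).add (hνS.mul_right _)
  have hterm : ∀ m, ν m * (Dm m / 2) ≤ ν m * (((m:ℝ)+1)/4) := by
    intro m
    by_cases hm : ν m = 0
    · simp [hm]
    · apply mul_le_mul_of_nonneg_left _ (hν0 m)
      have h := abs_le.mp (hDmB m hm)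
      linarith [h.2]
  have hLsum : Summable (fun m => ν m * (Dm m / 2)) := by
    apply Summable.of_norm_bounded hRsum
    intro m
    by_cases hm : ν m = 0
    · simp [hm]
    · rw [Real.norm_eq_abs, abs_mul, abs_of_nonneg (hν0 m)]
      apply mul_le_mul_of_nonneg_left _ (hν0 m)
      have h := hDmB m hm
      rw [abs_div]
      have : |(2:ℝ)| = 2 := by norm_num
      rw [this]
      linarith
  have htsum_le := Summable.tsum_le_tsum hterm hLsum hRsum
  have hR : ∑' m, ν m * (((m:ℝ)+1)/4) ≤ 3/4 := by
    have heq : ∑' m, ν m * (((m:ℝ)+1)/4)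
        = (∑' m, ν m * (m:ℝ)) * (1/4) + (∑' m, ν m) * (1/4) := by
      rw [show (fun m => ν m * (((m:ℝ)+1)/4))
        = fun m => (ν m * (m:ℝ)) * (1/4) + ν m * (1/4) from by funext m; ring]
      rw [Summable.tsum_add (hνm.mul_right _) (hνS.mul_right _), tsum_mul_right, tsum_mul_right]
    rw [heq, hν1]
    have : (∑' m, ν m * (m:ℝ)) ≤ 2 := hmean
    linarith
  rw [hsum1] at htsum_le
  linarith

end S13


/-- Proposition: the minimum number of simulations can exceed the minimum
GGT weight. There exist a finite nonempty action set `A`, a dependence function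
`F : Δ(A) → Δ(A)` differentiable on `Δ(A)`, a policy `π₀ ∈ Δ(A)`, a GGT weight `ρ > 0` with
`ρ ∈ ℕ`, and a transformation function `τ : A → Δ(A)` realising the GGT expansion of `F`
at `π₀`, such that no random number of samples `N` with `E[N] ≤ ρ` admits functions
`g_N : A^N → Δ(A)` forming a local approximation of `F` at `π₀`. -/
theorem stmt13 :
    ∃ (A : Type) (i1 : Fintype A) (i2 : DecidableEq A) (_ : Nonempty A),
      @Stmt13Body A i1 i2 := by
  refine ⟨Bool, inferInstance, inferInstance, ⟨true⟩, ?_⟩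
  exact ⟨S13.FF, (fun _ => 1/2), 2, (fun a => unitMass a),
    fun π h => S13.FF_dist h, S13.pihalf_dist, by norm_num, ⟨2, by norm_num⟩,
    S13.unitMass_dist, S13.clause_diff, S13.clause_ggt, S13.no_scheme⟩
end
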